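/- arXiv:0901.1625 — 3 statements merged into one kernel-verified Lean document; each statement's English description precedes it below -/
import Mathlib

section
/- Suppose the external field vanishes, h_v = 0 for all v ∈ V. Let f_0 ∈ F_q (membership in F_q^0 is not required) and let f_1 : Q → ℂ satisfy: E(f_1(X)^m) is real and nonnegative for every integer m ≥ 0. If f_0(x)·f_1(x) = 0 for every x ∈ Q, then for all R, S ⊆ V one has ⟨f_0(σ)^R f_1(σ)^S⟩ ≤ ⟨f_0(σ)^R⟩ · ⟨f_1(σ)^S⟩. -/
open Finset

noncomputable section

variable {V : Type*} [Fintype V] [DecidableEq V]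

/-- Kronecker delta `δ_{σ_x,σ_y}` for an unordered edge. -/
def edgeDelta {q : ℕ} (σ : V → Fin q) : Sym2 V → ℝ :=
  Sym2.lift ⟨fun x y => if σ x = σ y then 1 else 0,
    fun x y => by simp [eq_comm]⟩

/-- Boltzmann weight of a spin configuration for the `q`-state Potts model with
couplings `J` on the edge set `E` and external field `h`. -/
def pottsWeight (q : ℕ) [NeZero q] (E : Finset (Sym2 V)) (J : Sym2 V → ℝ)
    (h : V → ℝ) (σ : V → Fin q) : ℝ :=
  Real.exp ((∑ e ∈ E, J e * edgeDelta σ e) +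
    ∑ v : V, h v * (if σ v = 0 then 1 else 0))

/-- The partition function `Z`. -/
def pottsZ (q : ℕ) [NeZero q] (E : Finset (Sym2 V)) (J : Sym2 V → ℝ) (h : V → ℝ) : ℝ :=
  ∑ σ : V → Fin q, pottsWeight q E J h σ

/-- The Potts probability measure `π`. -/
def pottsPMF (q : ℕ) [NeZero q] (E : Finset (Sym2 V)) (J : Sym2 V → ℝ) (h : V → ℝ)
    (σ : V → Fin q) : ℝ :=
  pottsWeight q E J h σ / pottsZ q E J h

/-- The mean `⟨f(σ)^R⟩ = Σ_σ π(σ) Π_{v ∈ R} f(σ_v)`. -/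
def pottsMean (q : ℕ) [NeZero q] (E : Finset (Sym2 V)) (J : Sym2 V → ℝ) (h : V → ℝ)
    (f : Fin q → ℂ) (R : Finset V) : ℂ :=
  ∑ σ : V → Fin q, (pottsPMF q E J h σ : ℂ) * ∏ v ∈ R, f (σ v)

/-- The mean `⟨f₀(σ)^R f₁(σ)^S⟩`. -/
def pottsMean2 (q : ℕ) [NeZero q] (E : Finset (Sym2 V)) (J : Sym2 V → ℝ) (h : V → ℝ)
    (f₀ f₁ : Fin q → ℂ) (R S : Finset V) : ℂ :=
  ∑ σ : V → Fin q, (pottsPMF q E J h σ : ℂ) *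
    ((∏ v ∈ R, f₀ (σ v)) * ∏ v ∈ S, f₁ (σ v))

/-- `E(f(X)^m)` where `X` is uniformly distributed on `Fin q`. -/
def powerMean (q : ℕ) (f : Fin q → ℂ) (m : ℕ) : ℂ :=
  (∑ x : Fin q, f x ^ m) / q

/-- The class `F_q`: all `f : Fin q → ℂ` such that every `E(f(X)^m)` is real and
nonnegative and `E(f(X)^{m+n}) ≥ E(f(X)^m)·E(f(X)^n)`. -/
def memF (q : ℕ) (f : Fin q → ℂ) : Prop :=
  (∀ m : ℕ, (powerMean q f m).im = 0 ∧ 0 ≤ (powerMean q f m).re) ∧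
  ∀ m n : ℕ, (powerMean q f m).re * (powerMean q f n).re ≤ (powerMean q f (m + n)).re

/-- The class `F_q^0`: members of `F_q` with `f(0) = max{|f(x)| : x ∈ Q}`. -/
def memF0 (q : ℕ) [NeZero q] (f : Fin q → ℂ) : Prop :=
  memF q f ∧ f 0 = (‖f 0‖ : ℂ) ∧
    ∀ x : Fin q, ‖f x‖ ≤ ‖f 0‖


set_option linter.unusedSectionVars false
set_option linter.unusedVariables false
set_option linter.unreachableTactic false
set_option linter.unusedTactic false
set_option maxHeartbeats 1600000

namespace NegCorr
open scoped Classical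

variable {V : Type*} [Fintype V] [DecidableEq V]

/-- Connectivity by the open edges in `ω`. -/
def conn (ω : Finset (Sym2 V)) : V → V → Prop :=
  Relation.ReflTransGen (fun a b => s(a, b) ∈ ω)

lemma conn_refl (ω : Finset (Sym2 V)) (v : V) : conn ω v v := Relation.ReflTransGen.refl

lemma conn_trans {ω : Finset (Sym2 V)} {u v w : V} (h : conn ω u v) (h' : conn ω v w) :
    conn ω u w := h.trans h'

lemma conn_symm {ω : Finset (Sym2 V)} {u v : V} (h : conn ω u v) : conn ω v u :=
  by
    unfold conn at h ⊢
    induction h with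
    | refl => exact Relation.ReflTransGen.refl
    | tail _ hab ih => exact Relation.ReflTransGen.head (by rwa [Sym2.eq_swap] at hab) ih

lemma conn_mono {ω ω' : Finset (Sym2 V)} (h : ω ⊆ ω') {u v : V} (hc : conn ω u v) :
    conn ω' u v := by
  unfold conn at *
  induction hc with
  | refl => exact Relation.ReflTransGen.refl
  | tail _ hab ih => exact Relation.ReflTransGen.tail ih (h hab)

lemma conn_single {ω : Finset (Sym2 V)} {x y : V} (h : s(x,y) ∈ ω) : conn ω x y :=
  Relation.ReflTransGen.single h

/-- The connected component of `v`. -/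
def cls (ω : Finset (Sym2 V)) (v : V) : Finset V := univ.filter (conn ω v)

lemma mem_cls {ω : Finset (Sym2 V)} {v u : V} : u ∈ cls ω v ↔ conn ω v u := by
  simp [cls]

lemma self_mem_cls {ω : Finset (Sym2 V)} {v : V} : v ∈ cls ω v := mem_cls.2 (conn_refl _ _)

lemma cls_eq_of_conn {ω : Finset (Sym2 V)} {v u : V} (h : conn ω v u) :
    cls ω v = cls ω u := by
  ext w; simp only [mem_cls]
  exact ⟨fun h' => conn_trans (conn_symm h) h', fun h' => conn_trans h h'⟩

lemma cls_eq_iff {ω : Finset (Sym2 V)} {v u : V} : cls ω v = cls ω u ↔ conn ω v u := by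
  refine ⟨fun h => ?_, cls_eq_of_conn⟩
  have : u ∈ cls ω v := h ▸ self_mem_cls
  exact mem_cls.1 this

lemma cls_disjoint {ω : Finset (Sym2 V)} {v u : V} (h : ¬ conn ω v u) :
    Disjoint (cls ω v) (cls ω u) := by
  rw [Finset.disjoint_left]
  intro w hw hw'
  exact h (conn_trans (mem_cls.1 hw) (conn_symm (mem_cls.1 hw')))

/-- The set of connected components. -/
def comps (ω : Finset (Sym2 V)) : Finset (Finset V) := univ.image (cls ω)

lemma mem_comps {ω : Finset (Sym2 V)} {C : Finset V} :
    C ∈ comps ω ↔ ∃ v, cls ω v = C := by simp [comps]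

lemma cls_mem_comps {ω : Finset (Sym2 V)} (v : V) : cls ω v ∈ comps ω :=
  mem_comps.2 ⟨v, rfl⟩

/-- Number of components. -/
def kk (ω : Finset (Sym2 V)) : ℕ := (comps ω).card

lemma conn_eq_of_edges_eq {ω ω' : Finset (Sym2 V)} (h : ∀ u v, conn ω u v ↔ conn ω' u v) :
    cls ω = cls ω' := by
  funext v; ext u; simp [mem_cls, h]

/-- Description of connectivity after adding one edge. -/
lemma conn_insert {ω : Finset (Sym2 V)} {x y u v : V} :
    conn (insert s(x,y) ω) u v ↔
      conn ω u v ∨ (conn ω u x ∧ conn ω y v) ∨ (conn ω u y ∧ conn ω x v) := by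
  constructor
  · intro h
    induction h with
    | refl => exact Or.inl (conn_refl _ _)
    | @tail b c hub hbc ih =>
      rcases Finset.mem_insert.1 hbc with h1 | h1
      · rw [Sym2.eq_iff] at h1
        rcases h1 with ⟨hb, hc⟩ | ⟨hb, hc⟩
        · rw [hc]; rw [hb] at ih
          rcases ih with h2 | ⟨h2, h3⟩ | ⟨h2, h3⟩
          · exact Or.inr (Or.inl ⟨h2, conn_refl _ _⟩)
          · exact Or.inr (Or.inl ⟨h2, conn_refl _ _⟩)
          · exact Or.inl h2
        · rw [hc]; rw [hb] at ih
          rcases ih with h2 | ⟨h2, h3⟩ | ⟨h2, h3⟩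
          · exact Or.inr (Or.inr ⟨h2, conn_refl _ _⟩)
          · exact Or.inl h2
          · exact Or.inr (Or.inr ⟨h2, conn_refl _ _⟩)
      · rcases ih with h2 | ⟨h2, h3⟩ | ⟨h2, h3⟩
        · exact Or.inl (conn_trans h2 (conn_single h1))
        · exact Or.inr (Or.inl ⟨h2, conn_trans h3 (conn_single h1)⟩)
        · exact Or.inr (Or.inr ⟨h2, conn_trans h3 (conn_single h1)⟩)
  · have hsub : ω ⊆ insert s(x,y) ω := Finset.subset_insert _ _
    have hxy : conn (insert s(x,y) ω) x y := conn_single (Finset.mem_insert_self _ _)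
    rintro (h | ⟨h1, h2⟩ | ⟨h1, h2⟩)
    · exact conn_mono hsub h
    · exact conn_trans (conn_mono hsub h1) (conn_trans hxy (conn_mono hsub h2))
    · exact conn_trans (conn_mono hsub h1) (conn_trans (conn_symm hxy) (conn_mono hsub h2))

lemma conn_insert_of_conn {ω : Finset (Sym2 V)} {x y : V} (h : conn ω x y) (u v : V) :
    conn (insert s(x,y) ω) u v ↔ conn ω u v := by
  rw [conn_insert]
  constructor
  · rintro (h1 | ⟨h1, h2⟩ | ⟨h1, h2⟩)
    · exact h1
    · exact conn_trans h1 (conn_trans h (conn_trans (conn_symm h) (conn_trans h h2)))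
    · exact conn_trans h1 (conn_trans (conn_symm h) (conn_trans h (conn_trans (conn_symm h) h2)))
  · exact Or.inl

lemma comps_insert_of_conn {ω : Finset (Sym2 V)} {x y : V} (h : conn ω x y) :
    comps (insert s(x,y) ω) = comps ω := by
  unfold comps
  rw [conn_eq_of_edges_eq (conn_insert_of_conn h)]

lemma kk_insert_of_conn {ω : Finset (Sym2 V)} {x y : V} (h : conn ω x y) :
    kk (insert s(x,y) ω) = kk ω := by
  unfold kk; rw [comps_insert_of_conn h]

section Merge
variable {ω : Finset (Sym2 V)} {x y : V} (hxy : ¬ conn ω x y)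

lemma cls_insert_eq₁ {v : V} (hv : conn ω v x ∨ conn ω v y) :
    cls (insert s(x,y) ω) v = cls ω x ∪ cls ω y := by
  ext u
  simp only [mem_cls, Finset.mem_union, conn_insert]
  rcases hv with hv | hv
  · constructor
    · rintro (h | ⟨h1, h2⟩ | ⟨h1, h2⟩)
      · exact Or.inl (conn_trans (conn_symm hv) h)
      · exact Or.inr h2
      · exact Or.inl h2
    · rintro (h | h)
      · exact Or.inl (conn_trans hv h)
      · exact Or.inr (Or.inl ⟨hv, h⟩)
  · constructor
    · rintro (h | ⟨h1, h2⟩ | ⟨h1, h2⟩)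
      · exact Or.inr (conn_trans (conn_symm hv) h)
      · exact Or.inr h2
      · exact Or.inl h2
    · rintro (h | h)
      · exact Or.inr (Or.inr ⟨hv, h⟩)
      · exact Or.inl (conn_trans hv h)

lemma cls_insert_eq₂ {v : V} (hv : ¬ (conn ω v x ∨ conn ω v y)) :
    cls (insert s(x,y) ω) v = cls ω v := by
  push_neg at hv
  ext u
  simp only [mem_cls, conn_insert]
  constructor
  · rintro (h | ⟨h1, h2⟩ | ⟨h1, h2⟩)
    · exact h
    · exact absurd h1 hv.1
    · exact absurd h1 hv.2
  · exact Or.inl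

include hxy in
lemma comps_insert_merge :
    comps (insert s(x,y) ω) =
      insert (cls ω x ∪ cls ω y) (((comps ω).erase (cls ω x)).erase (cls ω y)) := by
  ext C
  simp only [mem_comps, Finset.mem_insert, Finset.mem_erase]
  constructor
  · rintro ⟨v, rfl⟩
    by_cases hv : conn ω v x ∨ conn ω v y
    · exact Or.inl (cls_insert_eq₁ hv)
    · push_neg at hv
      refine Or.inr ⟨?_, ?_, ⟨v, (cls_insert_eq₂ (by push_neg; exact hv)).symm ▸ rfl⟩⟩
      · rw [cls_insert_eq₂ (by push_neg; exact hv), Ne, cls_eq_iff]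
        exact hv.2
      · rw [cls_insert_eq₂ (by push_neg; exact hv), Ne, cls_eq_iff]
        exact hv.1
  · rintro (rfl | ⟨hC1, hC2, v, rfl⟩)
    · exact ⟨x, cls_insert_eq₁ (Or.inl (conn_refl _ _))⟩
    · rw [Ne, cls_eq_iff] at hC1 hC2
      have hv : ¬ (conn ω v x ∨ conn ω v y) := by
        push_neg; exact ⟨hC2, hC1⟩
      exact ⟨v, cls_insert_eq₂ hv⟩

include hxy in
lemma clsx_ne_clsy : cls ω x ≠ cls ω y := by
  rw [Ne, cls_eq_iff]; exact hxy

include hxy in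
lemma union_not_mem_erase :
    cls ω x ∪ cls ω y ∉ ((comps ω).erase (cls ω x)).erase (cls ω y) := by
  intro h
  rw [Finset.mem_erase, Finset.mem_erase] at h
  obtain ⟨h1, h2, h3⟩ := h
  rcases mem_comps.1 h3 with ⟨v, hv⟩
  have hx : x ∈ cls ω v := hv.symm ▸ Finset.mem_union_left _ self_mem_cls
  have : cls ω v = cls ω x := cls_eq_of_conn (mem_cls.1 hx)
  rw [hv] at this
  have hy : y ∈ cls ω x := this ▸ (Finset.mem_union_right (cls ω x) (self_mem_cls (v := y)))
  exact hxy (mem_cls.1 hy)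

include hxy in
lemma kk_insert_merge : kk ω = kk (insert s(x,y) ω) + 1 := by
  have h1 : cls ω y ∈ (comps ω).erase (cls ω x) :=
    Finset.mem_erase.2 ⟨Ne.symm (clsx_ne_clsy hxy), cls_mem_comps y⟩
  unfold kk
  rw [comps_insert_merge hxy, Finset.card_insert_of_notMem (union_not_mem_erase hxy),
    Finset.card_erase_of_mem h1, Finset.card_erase_of_mem (cls_mem_comps x)]
  have : 2 ≤ (comps ω).card := by
    have := Finset.card_le_card (show {cls ω x, cls ω y} ⊆ comps ω by
      intro C hC
      rcases Finset.mem_insert.1 hC with rfl | hC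
      · exact cls_mem_comps x
      · rw [Finset.mem_singleton.1 hC]; exact cls_mem_comps y)
    rwa [Finset.card_pair (clsx_ne_clsy hxy)] at this
  omega

end Merge

/-- Any edge: the count either stays or merges two components. -/
lemma kk_insert_cases (ω : Finset (Sym2 V)) (e : Sym2 V) :
    kk (insert e ω) = kk ω ∨ (kk ω = kk (insert e ω) + 1) := by
  induction e using Sym2.ind with
  | _ x y =>
    by_cases h : conn ω x y
    · exact Or.inl (kk_insert_of_conn h)
    · exact Or.inr (kk_insert_merge h)

lemma kk_insert_of_conn' {ω : Finset (Sym2 V)} {x y : V} :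
    conn ω x y ↔ kk (insert s(x,y) ω) = kk ω := by
  constructor
  · exact kk_insert_of_conn
  · intro h
    by_contra hc
    have := kk_insert_merge hc
    omega

/-- Submodularity auxiliary: drops are larger on smaller sets. -/
lemma kk_submod_aux {A B : Finset (Sym2 V)} (hAB : A ⊆ B) (C : Finset (Sym2 V)) :
    kk B + kk (A ∪ C) ≤ kk A + kk (B ∪ C) := by
  classical
  induction C using Finset.induction with
  | empty => simp only [Finset.union_empty]; omega
  | @insert a C ha IH =>
    rw [Finset.union_insert, Finset.union_insert]
    induction a using Sym2.ind with
    | _ x y =>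
      by_cases h1 : conn (A ∪ C) x y
      · have h2 : conn (B ∪ C) x y := conn_mono (Finset.union_subset_union_left hAB) h1
        rw [kk_insert_of_conn h1, kk_insert_of_conn h2]; exact IH
      · have e1 := kk_insert_merge h1
        by_cases h2 : conn (B ∪ C) x y
        · rw [kk_insert_of_conn h2]; omega
        · have e2 := kk_insert_merge h2
          omega

/-- Submodularity of the number of connected components. -/
lemma kk_submod (a b : Finset (Sym2 V)) :
    kk a + kk b ≤ kk (a ∩ b) + kk (a ∪ b) := by
  have h := kk_submod_aux (show a ∩ b ⊆ b from Finset.inter_subset_right) a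
  have h2 : a ∩ b ∪ a = a := Finset.union_eq_right.2 Finset.inter_subset_left
  have h3 : b ∪ a = a ∪ b := Finset.union_comm b a
  rw [h2, h3] at h
  omega

lemma kk_empty : kk (∅ : Finset (Sym2 V)) = Fintype.card V := by
  have h : ∀ v : V, cls (∅ : Finset (Sym2 V)) v = {v} := by
    intro v; ext u
    simp only [mem_cls, Finset.mem_singleton]
    constructor
    · intro h
      induction h with
      | refl => rfl
      | tail _ h2 _ => simp at h2
    · rintro rfl; exact conn_refl _ _
  unfold kk comps
  rw [show (cls (∅ : Finset (Sym2 V))) = fun v => {v} from funext h]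
  rw [Finset.card_image_of_injective _ (fun u v h => Finset.singleton_injective h)]
  simp


variable {V : Type*} [Fintype V] [DecidableEq V]

/-- Product of a weight over components. -/
def Pw (w : Finset V → ℝ) (ω : Finset (Sym2 V)) : ℝ := ∏ C ∈ comps ω, w C

lemma Pw_nonneg {w : Finset V → ℝ} (hw : ∀ C, 0 ≤ w C) (ω : Finset (Sym2 V)) :
    0 ≤ Pw w ω := Finset.prod_nonneg fun C _ => hw C

lemma Pw_insert_le {w : Finset V → ℝ} (hw : ∀ C, 0 ≤ w C)
    (hsup : ∀ A B : Finset V, Disjoint A B → w A * w B ≤ w (A ∪ B))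
    (ω : Finset (Sym2 V)) (e : Sym2 V) : Pw w ω ≤ Pw w (insert e ω) := by
  induction e using Sym2.ind with
  | _ x y =>
    by_cases h : conn ω x y
    · simp only [Pw, comps_insert_of_conn h]; exact le_refl _
    · unfold Pw
      rw [comps_insert_merge h,
        Finset.prod_insert (union_not_mem_erase h)]
      have hyx : cls ω y ∈ (comps ω).erase (cls ω x) :=
        Finset.mem_erase.2 ⟨Ne.symm (clsx_ne_clsy h), cls_mem_comps y⟩
      rw [← Finset.mul_prod_erase _ _ (cls_mem_comps x (ω := ω)),
        ← Finset.mul_prod_erase _ _ hyx, ← mul_assoc]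
      gcongr
      · exact Finset.prod_nonneg fun C _ => hw C
      · exact hsup _ _ (cls_disjoint h)

lemma Pw_mono {w : Finset V → ℝ} (hw : ∀ C, 0 ≤ w C)
    (hsup : ∀ A B : Finset V, Disjoint A B → w A * w B ≤ w (A ∪ B)) :
    Monotone (Pw w) := by
  intro ω ω' hsub
  have key : ∀ (D : Finset (Sym2 V)) (ω : Finset (Sym2 V)), Pw w ω ≤ Pw w (ω ∪ D) := by
    intro D
    induction D using Finset.induction with
    | empty => intro ω; simp
    | @insert a D ha IH =>
      intro ω
      rw [Finset.union_insert]
      exact le_trans (IH ω) (Pw_insert_le hw hsup _ a)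
  have := key (ω' \ ω) ω
  rwa [Finset.union_sdiff_of_subset hsub] at this

section Split

variable {W : Finset V} {η ζ : Finset (Sym2 V)}

/-- A walk starting outside the support of the edge set stays put. -/
lemma conn_stuck {P : V → Prop} (hη : ∀ e ∈ η, ∀ v ∈ e, P v) {u v : V}
    (h : conn η u v) (hu : ¬ P u) : u = v := by
  rcases Relation.ReflTransGen.cases_head h with rfl | ⟨b, hb, _⟩
  · rfl
  · exact absurd (hη _ hb u (Sym2.mem_mk_left u b)) hu

lemma conn_all {P : V → Prop} (hη : ∀ e ∈ η, ∀ v ∈ e, P v) {u v : V}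
    (h : conn η u v) : u = v ∨ P v := by
  rcases Relation.ReflTransGen.cases_tail h with rfl | ⟨b, _, hb⟩
  · exact Or.inl rfl
  · exact Or.inr (hη _ hb v (Sym2.mem_mk_right b v))

variable (hη : ∀ e ∈ η, ∀ v ∈ e, v ∈ W) (hζ : ∀ e ∈ ζ, ∀ v ∈ e, v ∉ W)

include hη hζ in
lemma conn_union_iff {u v : V} :
    conn (η ∪ ζ) u v ↔ conn η u v ∨ conn ζ u v := by
  constructor
  · intro h
    induction h with
    | refl => exact Or.inl (conn_refl _ _)
    | @tail b c hub hbc ih =>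
      rcases Finset.mem_union.1 hbc with he | he
      · have hbW : b ∈ W := hη _ he b (Sym2.mem_mk_left b c)
        rcases ih with h1 | h1
        · exact Or.inl (conn_trans h1 (conn_single he))
        · have hub : b = u := conn_stuck hζ (conn_symm h1) (by simpa using hbW)
          exact Or.inl (hub ▸ conn_single he)
      · have hbW : b ∉ W := hζ _ he b (Sym2.mem_mk_left b c)
        rcases ih with h1 | h1
        · have hub : b = u := conn_stuck hη (conn_symm h1) hbW
          exact Or.inr (hub ▸ conn_single he)
        · exact Or.inr (conn_trans h1 (conn_single he))
  · rintro (h | h)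
    · exact conn_mono Finset.subset_union_left h
    · exact conn_mono Finset.subset_union_right h

include hη hζ in
lemma cls_union_left {v : V} (hv : v ∈ W) : cls (η ∪ ζ) v = cls η v := by
  ext u
  simp only [mem_cls, conn_union_iff hη hζ]
  constructor
  · rintro (h | h)
    · exact h
    · have : v = u := conn_stuck hζ h (by simpa using hv)
      exact this ▸ conn_refl _ _
  · exact Or.inl

include hη hζ in
lemma cls_union_right {v : V} (hv : v ∉ W) : cls (η ∪ ζ) v = cls ζ v := by
  ext u
  simp only [mem_cls, conn_union_iff hη hζ]
  constructor
  · rintro (h | h)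
    · have : v = u := conn_stuck hη h hv
      exact this ▸ conn_refl _ _
    · exact h
  · exact Or.inr

include hη in
lemma cls_subset_inside {v : V} (hv : v ∈ W) : cls η v ⊆ W := by
  intro u hu
  rcases conn_all hη (mem_cls.1 hu) with rfl | h
  · exact hv
  · exact h

include hζ in
lemma cls_subset_outside {v : V} (hv : v ∉ W) : ∀ u ∈ cls ζ v, u ∉ W := by
  intro u hu
  rcases conn_all hζ (mem_cls.1 hu) with rfl | h
  · exact hv
  · exact h

include hη in
lemma cls_singleton_outside {v : V} (hv : v ∉ W) : cls η v = {v} := by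
  ext u
  simp only [mem_cls, Finset.mem_singleton]
  exact ⟨fun h => (conn_stuck hη h hv).symm, fun h => h ▸ conn_refl _ _⟩

include hζ in
lemma cls_singleton_inside' {v : V} (hv : v ∈ W) : cls ζ v = {v} := by
  ext u
  simp only [mem_cls, Finset.mem_singleton]
  exact ⟨fun h => (conn_stuck hζ h (by simpa using hv)).symm, fun h => h ▸ conn_refl _ _⟩

include hη hζ in
lemma comps_union_eq :
    comps (η ∪ ζ) = W.image (cls η) ∪ (univ \ W).image (cls ζ) := by
  unfold comps
  have huniv : (univ : Finset V) = W ∪ (univ \ W) := by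
    rw [Finset.union_sdiff_of_subset (Finset.subset_univ W)]
  conv_lhs => rw [huniv]
  rw [Finset.image_union]
  congr 1
  · exact Finset.image_congr fun v hv => cls_union_left hη hζ hv
  · exact Finset.image_congr fun v hv => cls_union_right hη hζ (by
      rcases Finset.mem_sdiff.1 hv with ⟨_, h⟩; exact h)

include hη hζ in
lemma disjoint_images :
    Disjoint (W.image (cls η)) ((univ \ W).image (cls ζ)) := by
  rw [Finset.disjoint_left]
  rintro C hC hC'
  rcases Finset.mem_image.1 hC with ⟨v, hv, rfl⟩
  rcases Finset.mem_image.1 hC' with ⟨u, hu, he⟩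
  have hu' : u ∉ W := (Finset.mem_sdiff.1 hu).2
  have : v ∈ cls ζ u := he ▸ self_mem_cls
  exact absurd hv (cls_subset_outside hζ hu' v this)

include hη in
lemma disjoint_images_singleton :
    Disjoint (W.image (cls η)) ((univ \ W).image (cls η)) := by
  rw [Finset.disjoint_left]
  rintro C hC hC'
  rcases Finset.mem_image.1 hC with ⟨v, hv, rfl⟩
  rcases Finset.mem_image.1 hC' with ⟨u, hu, he⟩
  have hu' : u ∉ W := (Finset.mem_sdiff.1 hu).2
  rw [cls_singleton_outside hη hu'] at he
  have : v ∈ cls η v := self_mem_cls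
  rw [← he, Finset.mem_singleton] at this
  exact hu' (this ▸ hv)

include hζ in
lemma disjoint_images_singleton' :
    Disjoint (W.image (cls ζ)) ((univ \ W).image (cls ζ)) := by
  rw [Finset.disjoint_left]
  rintro C hC hC'
  rcases Finset.mem_image.1 hC with ⟨v, hv, rfl⟩
  rcases Finset.mem_image.1 hC' with ⟨u, hu, he⟩
  have hu' : u ∉ W := (Finset.mem_sdiff.1 hu).2
  rw [cls_singleton_inside' hζ hv] at he
  have : u ∈ ({v} : Finset V) := he ▸ (self_mem_cls (ω := ζ) (v := u))
  rw [Finset.mem_singleton] at this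
  exact hu' (this ▸ hv)

include hη in
lemma kk_eta_split : kk η = (W.image (cls η)).card + (univ \ W).card := by
  unfold kk comps
  have huniv : (univ : Finset V) = W ∪ (univ \ W) := by
    rw [Finset.union_sdiff_of_subset (Finset.subset_univ W)]
  conv_lhs => rw [huniv]
  rw [Finset.image_union, Finset.card_union_of_disjoint (disjoint_images_singleton hη)]
  congr 1
  have : (univ \ W).image (cls η) = (univ \ W).image (fun v => ({v} : Finset V)) :=
    Finset.image_congr fun v hv => cls_singleton_outside hη ((Finset.mem_sdiff.1 hv).2)
  rw [this, Finset.card_image_of_injective _ (fun u v h => Finset.singleton_injective h)]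

include hζ in
lemma kk_zeta_split : kk ζ = ((univ \ W).image (cls ζ)).card + W.card := by
  unfold kk comps
  have huniv : (univ : Finset V) = W ∪ (univ \ W) := by
    rw [Finset.union_sdiff_of_subset (Finset.subset_univ W)]
  conv_lhs => rw [huniv]
  rw [Finset.image_union, Finset.card_union_of_disjoint (disjoint_images_singleton' hζ)]
  rw [add_comm]
  congr 1
  have : W.image (cls ζ) = W.image (fun v => ({v} : Finset V)) :=
    Finset.image_congr fun v hv => cls_singleton_inside' hζ hv
  rw [this, Finset.card_image_of_injective _ (fun u v h => Finset.singleton_injective h)]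

include hη hζ in
lemma kk_union_split : kk (η ∪ ζ) + Fintype.card V = kk η + kk ζ := by
  have h1 : kk (η ∪ ζ) = (W.image (cls η)).card + ((univ \ W).image (cls ζ)).card := by
    unfold kk
    rw [comps_union_eq hη hζ, Finset.card_union_of_disjoint (disjoint_images hη hζ)]
  have h4 : W.card + (univ \ W).card = Fintype.card V := by
    rw [Finset.card_sdiff_of_subset (Finset.subset_univ W)]
    have := Finset.card_le_card (Finset.subset_univ W)
    simp only [Finset.card_univ] at *
    omega
  rw [h1, kk_eta_split hη, kk_zeta_split hζ]
  omega

include hη hζ in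
lemma prod_comps_union (w : Finset V → ℝ) :
    Pw w (η ∪ ζ) = (∏ C ∈ W.image (cls η), w C) * ∏ C ∈ (univ \ W).image (cls ζ), w C := by
  unfold Pw
  rw [comps_union_eq hη hζ, Finset.prod_union (disjoint_images hη hζ)]

include hζ in
lemma Pw_zeta_eq (w : Finset V → ℝ) (hone : ∀ v ∈ W, w {v} = 1) :
    Pw w ζ = ∏ C ∈ (univ \ W).image (cls ζ), w C := by
  unfold Pw comps
  have huniv : (univ : Finset V) = W ∪ (univ \ W) := by
    rw [Finset.union_sdiff_of_subset (Finset.subset_univ W)]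
  conv_lhs => rw [huniv]
  rw [Finset.image_union, Finset.prod_union (disjoint_images_singleton' hζ)]
  have h1 : ∏ C ∈ W.image (cls ζ), w C = 1 := by
    apply Finset.prod_eq_one
    intro C hC
    rcases Finset.mem_image.1 hC with ⟨v, hv, rfl⟩
    rw [cls_singleton_inside' hζ hv]
    exact hone v hv
  rw [h1, one_mul]

end Split


variable {V : Type*} [Fintype V] [DecidableEq V]

section Measure

variable (q : ℕ) (lam : Sym2 V → ℝ) (w : Finset V → ℝ)

/-- Random-cluster partition function on edge set `F`. -/
def ZZ (F : Finset (Sym2 V)) : ℝ :=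
  ∑ ζ ∈ F.powerset, (∏ e ∈ ζ, lam e) * (q : ℝ) ^ (kk ζ)

/-- Random-cluster unnormalised expectation of `Pw w`. -/
def NN (F : Finset (Sym2 V)) : ℝ :=
  ∑ ζ ∈ F.powerset, (∏ e ∈ ζ, lam e) * (q : ℝ) ^ (kk ζ) * Pw w ζ

variable {q lam w}

lemma ZZ_pos (hq : 1 ≤ (q : ℝ)) (hlam : ∀ e, 0 ≤ lam e) (F : Finset (Sym2 V)) :
    0 < ZZ q lam F := by
  apply Finset.sum_pos'
  · intro ζ _
    exact mul_nonneg (Finset.prod_nonneg fun e _ => hlam e) (pow_nonneg (by linarith) _)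
  · refine ⟨∅, Finset.empty_mem_powerset F, ?_⟩
    rw [Finset.prod_empty, one_mul]
    exact pow_pos (by linarith) _

lemma NN_nonneg (hq : 1 ≤ (q : ℝ)) (hlam : ∀ e, 0 ≤ lam e) (hw : ∀ C, 0 ≤ w C)
    (F : Finset (Sym2 V)) : 0 ≤ NN q lam w F :=
  Finset.sum_nonneg fun ζ _ => mul_nonneg
    (mul_nonneg (Finset.prod_nonneg fun e _ => hlam e) (pow_nonneg (by linarith) _))
    (Pw_nonneg hw ζ)

/-- Restriction of `lam` to `F`. -/
def lamF (F : Finset (Sym2 V)) (e : Sym2 V) : ℝ := if e ∈ F then lam e else 0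

lemma sum_univ_eq (F : Finset (Sym2 V)) (h : Finset (Sym2 V) → ℝ) :
    (∑ ζ : Finset (Sym2 V), (∏ e ∈ ζ, lamF (lam := lam) F e) * h ζ)
      = ∑ ζ ∈ F.powerset, (∏ e ∈ ζ, lam e) * h ζ := by
  rw [← Finset.sum_subset (Finset.subset_univ F.powerset)]
  · apply Finset.sum_congr rfl
    intro ζ hζ
    congr 1
    exact Finset.prod_congr rfl fun e he =>
      if_pos ((Finset.mem_powerset.1 hζ) he)
  · intro ζ _ hζ
    rw [Finset.mem_powerset] at hζ
    obtain ⟨e, he, heF⟩ := Finset.not_subset.1 hζ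
    have h0 : lamF (lam := lam) F e = 0 := by simp [lamF, heF]
    rw [Finset.prod_eq_zero he h0, zero_mul]

/-- The single-edge conditional weight ratio. -/
def gq (q : ℕ) (e : Sym2 V) (ζ : Finset (Sym2 V)) : ℝ :=
  (q : ℝ) ^ (kk (insert e ζ)) * ((q : ℝ) ^ (kk ζ))⁻¹

lemma gq_eq (hq : 1 ≤ (q : ℝ)) (x y : V) (ζ : Finset (Sym2 V)) :
    gq q s(x,y) ζ = if conn ζ x y then 1 else (q : ℝ)⁻¹ := by
  have hq0 : (0:ℝ) < (q:ℝ) := by linarith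
  by_cases h : conn ζ x y
  · rw [if_pos h, gq, kk_insert_of_conn h, mul_inv_cancel₀ (by positivity)]
  · rw [if_neg h, gq]
    have := kk_insert_merge h
    rw [this, pow_succ, mul_inv, ← mul_assoc, mul_inv_cancel₀ (by positivity), one_mul]

lemma gq_nonneg (hq : 1 ≤ (q : ℝ)) (e : Sym2 V) (ζ : Finset (Sym2 V)) : 0 ≤ gq q e ζ :=
  mul_nonneg (pow_nonneg (by linarith) _) (inv_nonneg.2 (pow_nonneg (by linarith) _))

lemma gq_monotone (hq : 1 ≤ (q : ℝ)) (e : Sym2 V) : Monotone (gq q e) := by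
  induction e using Sym2.ind with
  | _ x y =>
    intro ζ ζ' hζ
    rw [gq_eq hq, gq_eq hq]
    have hq0 : (0:ℝ) < (q:ℝ) := by linarith
    by_cases h : conn ζ x y
    · rw [if_pos h, if_pos (conn_mono hζ h)]
    · rw [if_neg h]
      by_cases h' : conn ζ' x y
      · rw [if_pos h']
        exact inv_le_one_of_one_le₀ hq
      · rw [if_neg h']

/-- The measure is log-supermodular. -/
lemma mu_supermod (hq : 1 ≤ (q : ℝ)) (hlam : ∀ e, 0 ≤ lam e) (F : Finset (Sym2 V))
    (a b : Finset (Sym2 V)) :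
    ((∏ e ∈ a, lamF (lam := lam) F e) * (q:ℝ) ^ kk a) *
      ((∏ e ∈ b, lamF (lam := lam) F e) * (q:ℝ) ^ kk b) ≤
    ((∏ e ∈ a ∩ b, lamF (lam := lam) F e) * (q:ℝ) ^ kk (a ∩ b)) *
      ((∏ e ∈ a ∪ b, lamF (lam := lam) F e) * (q:ℝ) ^ kk (a ∪ b)) := by
  have hlamF : ∀ e, 0 ≤ lamF (lam := lam) F e := by
    intro e; unfold lamF; split <;> simp [hlam _]
  have h1 : (∏ e ∈ a, lamF (lam := lam) F e) * (∏ e ∈ b, lamF (lam := lam) F e)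
      = (∏ e ∈ a ∩ b, lamF (lam := lam) F e) * (∏ e ∈ a ∪ b, lamF (lam := lam) F e) := by
    rw [mul_comm ((a ∩ b).prod _), Finset.prod_union_inter]
  have h2 : (q:ℝ) ^ kk a * (q:ℝ) ^ kk b ≤ (q:ℝ) ^ kk (a ∩ b) * (q:ℝ) ^ kk (a ∪ b) := by
    rw [← pow_add, ← pow_add]
    exact pow_le_pow_right₀ hq (kk_submod a b)
  calc ((∏ e ∈ a, lamF (lam := lam) F e) * (q:ℝ) ^ kk a) *
      ((∏ e ∈ b, lamF (lam := lam) F e) * (q:ℝ) ^ kk b)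
      = ((∏ e ∈ a, lamF (lam := lam) F e) * (∏ e ∈ b, lamF (lam := lam) F e)) *
        ((q:ℝ) ^ kk a * (q:ℝ) ^ kk b) := by ring
    _ ≤ ((∏ e ∈ a ∩ b, lamF (lam := lam) F e) * (∏ e ∈ a ∪ b, lamF (lam := lam) F e)) *
        ((q:ℝ) ^ kk (a ∩ b) * (q:ℝ) ^ kk (a ∪ b)) := by
        rw [h1]
        apply mul_le_mul_of_nonneg_left h2
        exact mul_nonneg (Finset.prod_nonneg fun e _ => hlamF e)
          (Finset.prod_nonneg fun e _ => hlamF e)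
    _ = _ := by ring

/-- Key single-edge step: adding an available edge increases the mean of an
increasing supermultiplicative observable. -/
lemma step_ineq (hq : 1 ≤ (q : ℝ)) (hlam : ∀ e, 0 ≤ lam e) (hw : ∀ C, 0 ≤ w C)
    (hsup : ∀ A B : Finset V, Disjoint A B → w A * w B ≤ w (A ∪ B))
    (F : Finset (Sym2 V)) (e : Sym2 V) :
    NN q lam w F * ZZ q lam (insert e F) ≤ NN q lam w (insert e F) * ZZ q lam F := by
  by_cases heF : e ∈ F
  · rw [Finset.insert_eq_self.2 heF]
  have hq0 : (0:ℝ) < (q:ℝ) := by linarith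
  -- Split the sums over the powerset of `insert e F`.
  have hdisj : Disjoint F.powerset (F.powerset.image (insert e)) := by
    rw [Finset.disjoint_left]
    intro ζ hζ hζ'
    rcases Finset.mem_image.1 hζ' with ⟨ξ, hξ, rfl⟩
    exact heF (Finset.mem_powerset.1 hζ (Finset.mem_insert_self e ξ))
  have hinj : Set.InjOn (insert e) (F.powerset : Set (Finset (Sym2 V))) := by
    intro u hu v hv huv
    have hu' : e ∉ u := fun h => heF (Finset.mem_powerset.1 hu h)
    have hv' : e ∉ v := fun h => heF (Finset.mem_powerset.1 hv h)
    rw [← Finset.erase_insert hu', ← Finset.erase_insert hv', huv]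
  have expand : ∀ h : Finset (Sym2 V) → ℝ,
      (∑ ζ ∈ (insert e F).powerset, (∏ a ∈ ζ, lam a) * h ζ)
        = (∑ ζ ∈ F.powerset, (∏ a ∈ ζ, lam a) * h ζ)
          + lam e * ∑ ζ ∈ F.powerset, (∏ a ∈ ζ, lam a) * h (insert e ζ) := by
    intro h
    rw [Finset.powerset_insert, Finset.sum_union hdisj, Finset.sum_image hinj]
    congr 1
    rw [Finset.mul_sum]
    apply Finset.sum_congr rfl
    intro ζ hζ
    have he' : e ∉ ζ := fun hc => heF (Finset.mem_powerset.1 hζ hc)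
    rw [Finset.prod_insert he']
    ring
  set A := ∑ ζ ∈ F.powerset, (∏ a ∈ ζ, lam a) * (q:ℝ) ^ kk (insert e ζ) * Pw w (insert e ζ)
    with hA
  set B := ∑ ζ ∈ F.powerset, (∏ a ∈ ζ, lam a) * (q:ℝ) ^ kk (insert e ζ) with hB
  set A' := ∑ ζ ∈ F.powerset, (∏ a ∈ ζ, lam a) * (q:ℝ) ^ kk (insert e ζ) * Pw w ζ with hA'
  have eZ : ZZ q lam (insert e F) = ZZ q lam F + lam e * B := by
    rw [ZZ, ZZ, expand (fun ζ => (q:ℝ) ^ kk ζ)]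
  have eN : NN q lam w (insert e F) = NN q lam w F + lam e * A := by
    rw [NN, NN]
    have h := expand (fun ζ => (q:ℝ) ^ kk ζ * Pw w ζ)
    simp only [← mul_assoc] at h
    exact h
  have hAA' : A' ≤ A := by
    apply Finset.sum_le_sum
    intro ζ _
    exact mul_le_mul_of_nonneg_left (Pw_insert_le hw hsup ζ e)
      (mul_nonneg (Finset.prod_nonneg fun a _ => hlam a) (pow_nonneg hq0.le _))
  have hqne : ∀ ζ : Finset (Sym2 V), ((q:ℝ) ^ kk ζ) ≠ 0 := fun ζ => by positivity
  -- generic conversion of sums over all finsets to sums over the powerset of F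
  have conv : ∀ h : Finset (Sym2 V) → ℝ,
      (∑ ζ : Finset (Sym2 V), (∏ a ∈ ζ, lamF (lam := lam) F a) * (q:ℝ) ^ kk ζ * h ζ)
        = ∑ ζ ∈ F.powerset, (∏ a ∈ ζ, lam a) * ((q:ℝ) ^ kk ζ * h ζ) := by
    intro h
    rw [← sum_univ_eq F (fun ζ => (q:ℝ) ^ kk ζ * h ζ)]
    exact Finset.sum_congr rfl fun ζ _ => by ring
  -- FKG inequality
  have hfkg := fkg (Pw w) (gq q e)
    (fun ζ => (∏ a ∈ ζ, lamF (lam := lam) F a) * (q:ℝ) ^ kk ζ)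
    (fun ζ => mul_nonneg (Finset.prod_nonneg fun a _ => by
      unfold lamF; split <;> simp [hlam _]) (pow_nonneg hq0.le _))
    (fun ζ => Pw_nonneg hw ζ) (fun ζ => gq_nonneg hq e ζ)
    (Pw_mono hw hsup) (gq_monotone hq e)
    (fun a b => by
      have := mu_supermod (lam := lam) hq hlam F a b
      simpa [Finset.inf_eq_inter, Finset.sup_eq_union] using this)
  rw [conv (Pw w), conv (gq q e), conv (fun ζ => Pw w ζ * gq q e ζ)] at hfkg
  have hZuniv : (∑ ζ : Finset (Sym2 V), (∏ a ∈ ζ, lamF (lam := lam) F a) * (q:ℝ) ^ kk ζ)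
      = ZZ q lam F := by
    rw [ZZ, ← sum_univ_eq F (fun ζ => (q:ℝ) ^ kk ζ)]
  rw [hZuniv] at hfkg
  have id1 : (∑ ζ ∈ F.powerset, (∏ a ∈ ζ, lam a) * ((q:ℝ) ^ kk ζ * Pw w ζ))
      = NN q lam w F := by
    rw [NN]; exact Finset.sum_congr rfl fun ζ _ => by ring
  have id2 : (∑ ζ ∈ F.powerset, (∏ a ∈ ζ, lam a) * ((q:ℝ) ^ kk ζ * gq q e ζ)) = B := by
    rw [hB]
    apply Finset.sum_congr rfl
    intro ζ _
    rw [gq]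
    congr 1
    rw [mul_comm ((q:ℝ) ^ kk (insert e ζ)) (((q:ℝ) ^ kk ζ)⁻¹), ← mul_assoc,
      mul_inv_cancel₀ (hqne ζ), one_mul]
  have id4 : (∑ ζ ∈ F.powerset, (∏ a ∈ ζ, lam a) * ((q:ℝ) ^ kk ζ * (Pw w ζ * gq q e ζ)))
      = A' := by
    rw [hA']
    apply Finset.sum_congr rfl
    intro ζ _
    rw [gq]
    field_simp
  rw [id1, id2, id4] at hfkg
  have hkey : NN q lam w F * B ≤ ZZ q lam F * A :=
    le_trans hfkg (mul_le_mul_of_nonneg_left hAA' (ZZ_pos hq hlam F).le)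
  rw [eZ, eN]
  calc NN q lam w F * (ZZ q lam F + lam e * B)
      = NN q lam w F * ZZ q lam F + lam e * (NN q lam w F * B) := by ring
    _ ≤ NN q lam w F * ZZ q lam F + lam e * (ZZ q lam F * A) := by
        have := mul_le_mul_of_nonneg_left hkey (hlam e); linarith
    _ = (NN q lam w F + lam e * A) * ZZ q lam F := by ring

/-- Ratio of the random-cluster expectation. -/
def rr (q : ℕ) (lam : Sym2 V → ℝ) (w : Finset V → ℝ) (F : Finset (Sym2 V)) : ℝ :=
  NN q lam w F / ZZ q lam F

lemma rr_step (hq : 1 ≤ (q : ℝ)) (hlam : ∀ e, 0 ≤ lam e) (hw : ∀ C, 0 ≤ w C)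
    (hsup : ∀ A B : Finset V, Disjoint A B → w A * w B ≤ w (A ∪ B))
    (F : Finset (Sym2 V)) (e : Sym2 V) :
    rr q lam w F ≤ rr q lam w (insert e F) := by
  rw [rr, rr, div_le_div_iff₀ (ZZ_pos hq hlam F) (ZZ_pos hq hlam _)]
  exact step_ineq hq hlam hw hsup F e

lemma rr_mono (hq : 1 ≤ (q : ℝ)) (hlam : ∀ e, 0 ≤ lam e) (hw : ∀ C, 0 ≤ w C)
    (hsup : ∀ A B : Finset V, Disjoint A B → w A * w B ≤ w (A ∪ B))
    {F F' : Finset (Sym2 V)} (hFF : F ⊆ F') :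
    rr q lam w F ≤ rr q lam w F' := by
  have key : ∀ (D G : Finset (Sym2 V)), rr q lam w G ≤ rr q lam w (G ∪ D) := by
    intro D
    induction D using Finset.induction with
    | empty => intro G; simp
    | @insert a D ha IH =>
      intro G
      rw [Finset.union_insert]
      exact le_trans (IH G) (rr_step hq hlam hw hsup _ a)
  have := key (F' \ F) F
  rwa [Finset.union_sdiff_of_subset hFF] at this

end Measure

variable {V : Type*} [Fintype V] [DecidableEq V]

lemma conn_spin_eq {q : ℕ} {ζ : Finset (Sym2 V)} {σ : V → Fin q}
    (h : ∀ x y : V, s(x,y) ∈ ζ → σ x = σ y) {u v : V} (hc : conn ζ u v) : σ u = σ v := by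
  induction hc with
  | refl => rfl
  | @tail b c _ hbc ih => exact ih.trans (h b c hbc)

/-- The product of edge deltas is the indicator of spin constancy on clusters. -/
lemma prod_edgeDelta (q : ℕ) [NeZero q] (ζ : Finset (Sym2 V)) (σ : V → Fin q) :
    (∏ e ∈ ζ, edgeDelta σ e)
      = if (∀ u v : V, conn ζ u v → σ u = σ v) then (1:ℝ) else 0 := by
  by_cases h : ∀ u v : V, conn ζ u v → σ u = σ v
  · rw [if_pos h]
    apply Finset.prod_eq_one
    intro e he
    induction e using Sym2.ind with
    | _ x y =>
      have : σ x = σ y := h x y (conn_single he)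
      simp [edgeDelta, this]
  · rw [if_neg h]
    push_neg at h
    obtain ⟨u, v, hc, hne⟩ := h
    by_cases hall : ∀ x y : V, s(x,y) ∈ ζ → σ x = σ y
    · exact absurd (conn_spin_eq hall hc) hne
    · push_neg at hall
      obtain ⟨x, y, hxy, hnexy⟩ := hall
      refine Finset.prod_eq_zero hxy ?_
      simp [edgeDelta, hnexy]

/-- Core factorization: summing a product observable over spin configurations
constant on clusters factorizes over the clusters. -/
lemma sum_spin_factor (q : ℕ) [NeZero q] (ζ : Finset (Sym2 V)) (g : V → Fin q → ℂ) :
    (∑ σ : V → Fin q,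
        (if (∀ u v : V, conn ζ u v → σ u = σ v) then (1:ℂ) else 0) * ∏ v, g v (σ v))
      = ∏ C ∈ comps ζ, ∑ x : Fin q, ∏ v ∈ C, g v x := by
  classical
  simp only [ite_mul, one_mul, zero_mul, ← Finset.sum_filter]
  set sd : Setoid V := ⟨conn ζ, ⟨conn_refl ζ, fun h => conn_symm h, fun h h' => conn_trans h h'⟩⟩
    with hsd
  have hrel : ∀ u v : V, (Quotient.mk sd u = Quotient.mk sd v) ↔ conn ζ u v := by
    intro u v
    rw [Quotient.eq]
    rfl
  -- step 1: the constrained sum equals a sum over functions on the quotient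
  have step1 : (∑ σ ∈ Finset.univ.filter (fun σ : V → Fin q =>
        ∀ u v : V, conn ζ u v → σ u = σ v), ∏ v, g v (σ v))
      = ∑ τ : Quotient sd → Fin q,
          ∏ c : Quotient sd, ∏ v ∈ Finset.univ.filter (fun v => Quotient.mk sd v = c),
            g v (τ c) := by
    rw [eq_comm]
    apply Finset.sum_nbij' (i := fun τ => fun v => τ (Quotient.mk sd v))
      (j := fun σ => fun c => σ c.out)
    · intro τ _
      simp only [Finset.mem_filter, Finset.mem_univ, true_and]
      intro u v hc
      rw [(hrel u v).2 hc]
    · intro σ _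
      exact Finset.mem_univ _
    · intro τ _
      funext c
      simp only
      rw [Quotient.out_eq]
    · intro σ hσ
      simp only [Finset.mem_filter, Finset.mem_univ, true_and] at hσ
      funext v
      simp only
      apply hσ
      exact (hrel _ _).1 (Quotient.out_eq _)
    · intro τ _
      rw [eq_comm]
      rw [← Finset.prod_fiberwise Finset.univ (fun v => Quotient.mk sd v)
        (fun v => g v (τ (Quotient.mk sd v)))]
      apply Finset.prod_congr rfl
      intro c _
      apply Finset.prod_congr rfl
      intro v hv
      rw [(Finset.mem_filter.1 hv).2]
  rw [step1]
  -- step 2: sum over functions factorizes as a product of sums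
  have step2 : (∑ τ : Quotient sd → Fin q,
        ∏ c : Quotient sd, ∏ v ∈ Finset.univ.filter (fun v => Quotient.mk sd v = c),
          g v (τ c))
      = ∏ c : Quotient sd, ∑ x : Fin q,
          ∏ v ∈ Finset.univ.filter (fun v => Quotient.mk sd v = c), g v x := by
    rw [Finset.prod_univ_sum]
    rw [← Fintype.piFinset_univ]
  rw [step2]
  -- step 3: identify the quotient classes with the components
  apply Finset.prod_bij
    (i := fun c (_ : c ∈ Finset.univ) =>
      Finset.univ.filter (fun v => Quotient.mk sd v = c))
  · intro c _
    rw [mem_comps]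
    refine ⟨c.out, ?_⟩
    ext u
    simp only [mem_cls, Finset.mem_filter, Finset.mem_univ, true_and]
    rw [← hrel]
    constructor
    · intro h; rw [← h, Quotient.out_eq]
    · intro h; rw [h, Quotient.out_eq]
  · intro c _ c' _ hcc
    have h1 : c.out ∈ Finset.univ.filter (fun v => Quotient.mk sd v = c) := by
      simp only [Finset.mem_filter, Finset.mem_univ, true_and, Quotient.out_eq]
    rw [hcc] at h1
    simp only [Finset.mem_filter, Finset.mem_univ, true_and, Quotient.out_eq] at h1
    first
      | exact h1
      | (rw [← h1, Quotient.out_eq])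
  · intro C hC
    rcases mem_comps.1 hC with ⟨v, rfl⟩
    refine ⟨Quotient.mk sd v, Finset.mem_univ _, ?_⟩
    ext u
    simp only [mem_cls, Finset.mem_filter, Finset.mem_univ, true_and]
    rw [hrel u v]
    exact ⟨fun h => conn_symm h, fun h => conn_symm h⟩
  · intro c _
    rfl


variable {V : Type*} [Fintype V] [DecidableEq V]

lemma pottsWeight_prod (q : ℕ) [NeZero q] (E : Finset (Sym2 V)) (J : Sym2 V → ℝ)
    (σ : V → Fin q) :
    pottsWeight q E J (fun _ => 0) σ
      = ∏ e ∈ E, (1 + (Real.exp (J e) - 1) * edgeDelta σ e) := by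
  unfold pottsWeight
  have h0 : (∑ v : V, (fun _ : V => (0:ℝ)) v * (if σ v = 0 then 1 else 0)) = 0 := by
    simp
  rw [h0, add_zero, Real.exp_sum]
  apply Finset.prod_congr rfl
  intro e he
  induction e using Sym2.ind with
  | _ x y =>
    have hδ : edgeDelta σ s(x,y) = if σ x = σ y then 1 else 0 := rfl
    by_cases h : σ x = σ y
    · rw [hδ, if_pos h, mul_one, mul_one]; ring
    · rw [hδ, if_neg h, mul_zero, mul_zero, Real.exp_zero, add_zero]

/-- Master identity: spin sums of product observables as random-cluster sums. -/
lemma master (q : ℕ) [NeZero q] (E : Finset (Sym2 V)) (J : Sym2 V → ℝ)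
    (g : V → Fin q → ℂ) :
    (∑ σ : V → Fin q, ((pottsWeight q E J (fun _ => 0) σ : ℝ) : ℂ) * ∏ v, g v (σ v))
      = ∑ ζ ∈ E.powerset, ((∏ e ∈ ζ, (Real.exp (J e) - 1) : ℝ) : ℂ)
          * ∏ C ∈ comps ζ, ∑ x : Fin q, ∏ v ∈ C, g v x := by
  have hw : ∀ σ : V → Fin q, ((pottsWeight q E J (fun _ => 0) σ : ℝ) : ℂ)
      = ∑ ζ ∈ E.powerset, ∏ e ∈ ζ, (((Real.exp (J e) - 1 : ℝ) : ℂ) * ((edgeDelta σ e : ℝ) : ℂ)) := by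
    intro σ
    rw [pottsWeight_prod q E J σ, Complex.ofReal_prod]
    have : ∀ e ∈ E, ((1 + (Real.exp (J e) - 1) * edgeDelta σ e : ℝ) : ℂ)
        = (((Real.exp (J e) - 1 : ℝ) : ℂ) * ((edgeDelta σ e : ℝ) : ℂ)) + 1 := fun e _ => by
      rw [Complex.ofReal_add, Complex.ofReal_mul, Complex.ofReal_one, add_comm]
    rw [Finset.prod_congr rfl this, Finset.prod_add]
    apply Finset.sum_congr rfl
    intro ζ hζ
    simp
  calc (∑ σ : V → Fin q, ((pottsWeight q E J (fun _ => 0) σ : ℝ) : ℂ) * ∏ v, g v (σ v))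
      = ∑ σ : V → Fin q, ∑ ζ ∈ E.powerset,
          (∏ e ∈ ζ, (((Real.exp (J e) - 1 : ℝ) : ℂ) * ((edgeDelta σ e : ℝ) : ℂ)))
            * ∏ v, g v (σ v) := by
        apply Finset.sum_congr rfl
        intro σ _
        rw [hw σ, Finset.sum_mul]
    _ = ∑ ζ ∈ E.powerset, ∑ σ : V → Fin q,
          (∏ e ∈ ζ, (((Real.exp (J e) - 1 : ℝ) : ℂ) * ((edgeDelta σ e : ℝ) : ℂ)))
            * ∏ v, g v (σ v) := Finset.sum_comm
    _ = ∑ ζ ∈ E.powerset, ((∏ e ∈ ζ, (Real.exp (J e) - 1) : ℝ) : ℂ)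
          * ∏ C ∈ comps ζ, ∑ x : Fin q, ∏ v ∈ C, g v x := by
        apply Finset.sum_congr rfl
        intro ζ hζ
        rw [← sum_spin_factor q ζ g, Finset.mul_sum]
        apply Finset.sum_congr rfl
        intro σ _
        rw [Finset.prod_mul_distrib]
        have h1 : (∏ e ∈ ζ, ((edgeDelta σ e : ℝ) : ℂ))
            = if (∀ u v : V, conn ζ u v → σ u = σ v) then (1:ℂ) else 0 := by
          rw [← Complex.ofReal_prod, prod_edgeDelta q ζ σ]
          split <;> simp
        rw [h1, ← Complex.ofReal_prod, mul_assoc]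
  

variable {V : Type*} [Fintype V] [DecidableEq V]

lemma sym2_exists_mem (e : Sym2 V) : ∃ a, a ∈ e := by
  induction e using Sym2.ind with
  | _ x y => exact ⟨x, Sym2.mem_mk_left x y⟩

section Fiber

variable (S : Finset V)

/-- The union of all clusters meeting `S`. -/
def Wof (ω : Finset (Sym2 V)) : Finset V :=
  univ.filter (fun v => ∃ s ∈ S, conn ω s v)

/-- The open edges inside the `S`-territory. -/
def etaOf (ω : Finset (Sym2 V)) : Finset (Sym2 V) :=
  ω.filter (fun e => ∀ v ∈ e, v ∈ Wof S ω)

/-- The open edges outside the `S`-territory. -/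
def zetaOf (ω : Finset (Sym2 V)) : Finset (Sym2 V) :=
  ω.filter (fun e => ∀ v ∈ e, v ∉ Wof S ω)

variable {S}

lemma mem_Wof {ω : Finset (Sym2 V)} {v : V} :
    v ∈ Wof S ω ↔ ∃ s ∈ S, conn ω s v := by simp [Wof]

lemma S_subset_Wof {ω : Finset (Sym2 V)} : S ⊆ Wof S ω :=
  fun s hs => mem_Wof.2 ⟨s, hs, conn_refl _ _⟩

lemma Wof_closed {ω : Finset (Sym2 V)} {u v : V} (h : conn ω u v) (hu : u ∈ Wof S ω) :
    v ∈ Wof S ω := by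
  rcases mem_Wof.1 hu with ⟨s, hs, hc⟩
  exact mem_Wof.2 ⟨s, hs, conn_trans hc h⟩

lemma edge_dichotomy {ω : Finset (Sym2 V)} {e : Sym2 V} (he : e ∈ ω) :
    (∀ v ∈ e, v ∈ Wof S ω) ∨ (∀ v ∈ e, v ∉ Wof S ω) := by
  induction e using Sym2.ind with
  | _ a b =>
    by_cases ha : a ∈ Wof S ω
    · left
      intro v hv
      rcases Sym2.mem_iff.1 hv with rfl | rfl
      · exact ha
      · exact Wof_closed (conn_single he) ha
    · by_cases hb : b ∈ Wof S ω
      · left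
        intro v hv
        rcases Sym2.mem_iff.1 hv with rfl | rfl
        · exact Wof_closed (conn_single (by rwa [Sym2.eq_swap] at he)) hb
        · exact hb
      · right
        intro v hv
        rcases Sym2.mem_iff.1 hv with rfl | rfl
        · exact ha
        · exact hb

lemma eta_union_zeta {ω : Finset (Sym2 V)} : etaOf S ω ∪ zetaOf S ω = ω := by
  ext e
  simp only [Finset.mem_union, etaOf, zetaOf, Finset.mem_filter]
  constructor
  · rintro (⟨h, _⟩ | ⟨h, _⟩) <;> exact h
  · intro he
    rcases edge_dichotomy he with h | h
    · exact Or.inl ⟨he, h⟩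
    · exact Or.inr ⟨he, h⟩

lemma eta_edges_inside {ω : Finset (Sym2 V)} :
    ∀ e ∈ etaOf S ω, ∀ v ∈ e, v ∈ Wof S ω := fun e he => (Finset.mem_filter.1 he).2

lemma zeta_edges_outside {ω : Finset (Sym2 V)} :
    ∀ e ∈ zetaOf S ω, ∀ v ∈ e, v ∉ Wof S ω := fun e he => (Finset.mem_filter.1 he).2

/-- Admissibility: each point of the territory is `η`-connected to `S`. -/
lemma Wof_eta_conn {ω : Finset (Sym2 V)} {v : V} (hv : v ∈ Wof S ω) :
    ∃ s ∈ S, conn (etaOf S ω) s v := by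
  rcases mem_Wof.1 hv with ⟨s, hs, hc⟩
  rw [← eta_union_zeta (S := S) (ω := ω)] at hc
  rcases (conn_union_iff eta_edges_inside zeta_edges_outside).1 hc with h | h
  · exact ⟨s, hs, h⟩
  · have : s = v := conn_stuck zeta_edges_outside h
      (by simp only [not_not]; exact S_subset_Wof hs)
    exact ⟨s, hs, this ▸ conn_refl _ _⟩

/-- The fiber structure: replacing the outside of the territory leaves the
territory data unchanged. -/
lemma fiber_eq {ω ζ : Finset (Sym2 V)}
    (hζ : ∀ e ∈ ζ, ∀ v ∈ e, v ∉ Wof S ω) :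
    Wof S (etaOf S ω ∪ ζ) = Wof S ω ∧ etaOf S (etaOf S ω ∪ ζ) = etaOf S ω ∧
      zetaOf S (etaOf S ω ∪ ζ) = ζ := by
  set W := Wof S ω with hW
  set η := etaOf S ω with hη
  have hηin : ∀ e ∈ η, ∀ v ∈ e, v ∈ W := eta_edges_inside
  have hWeq : Wof S (η ∪ ζ) = W := by
    ext v
    rw [mem_Wof]
    constructor
    · rintro ⟨s, hs, hc⟩
      rcases (conn_union_iff hηin hζ).1 hc with h | h
      · exact Wof_closed (conn_mono (Finset.filter_subset _ _) h) (S_subset_Wof hs)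
      · have : s = v := conn_stuck hζ h (by simp only [not_not]; exact S_subset_Wof hs)
        exact this ▸ S_subset_Wof hs
    · intro hv
      rcases Wof_eta_conn hv with ⟨s, hs, hc⟩
      exact ⟨s, hs, conn_mono Finset.subset_union_left hc⟩
  refine ⟨hWeq, ?_, ?_⟩
  · ext e
    simp only [etaOf, Finset.mem_filter, hWeq, Finset.mem_union]
    constructor
    · rintro ⟨h1 | h1, h2⟩
      · exact h1
      · obtain ⟨a, ha⟩ := sym2_exists_mem e
        exact absurd (h2 a ha) (hζ e h1 a ha)
    · intro he
      exact ⟨Or.inl he, hηin e he⟩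
  · ext e
    simp only [zetaOf, Finset.mem_filter, hWeq, Finset.mem_union]
    constructor
    · rintro ⟨h1 | h1, h2⟩
      · obtain ⟨a, ha⟩ := sym2_exists_mem e
        exact absurd (hηin e h1 a ha) (h2 a ha)
      · exact h1
    · intro he
      exact ⟨Or.inr he, hζ e he⟩

lemma eta_zeta_disjoint {η ζ : Finset (Sym2 V)} {W : Finset V}
    (hη : ∀ e ∈ η, ∀ v ∈ e, v ∈ W) (hζ : ∀ e ∈ ζ, ∀ v ∈ e, v ∉ W) :
    Disjoint η ζ := by
  rw [Finset.disjoint_left]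
  intro e he he'
  obtain ⟨a, ha⟩ := sym2_exists_mem e
  exact hζ e he' a ha (hη e he a ha)

/-- The fiber of the territory map is the image of the powerset of outside edges. -/
lemma fiber_image {E : Finset (Sym2 V)} {ω₀ : Finset (Sym2 V)} (hω₀ : ω₀ ⊆ E) :
    E.powerset.filter (fun ω => Wof S ω = Wof S ω₀ ∧ etaOf S ω = etaOf S ω₀)
      = ((E.filter (fun e => ∀ v ∈ e, v ∉ Wof S ω₀)).powerset).image
          (fun ζ => etaOf S ω₀ ∪ ζ) := by
  ext ω
  simp only [Finset.mem_filter, Finset.mem_powerset, Finset.mem_image]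
  constructor
  · rintro ⟨hωE, hW, hη⟩
    refine ⟨zetaOf S ω, ?_, ?_⟩
    · intro e he
      rw [Finset.mem_filter]
      have h2 := zeta_edges_outside e he
      rw [hW] at h2
      exact ⟨hωE ((Finset.filter_subset _ _) he), h2⟩
    · rw [← hη, eta_union_zeta]
  · rintro ⟨ζ, hζ, rfl⟩
    have hζ' : ∀ e ∈ ζ, ∀ v ∈ e, v ∉ Wof S ω₀ := fun e he => (Finset.mem_filter.1 (hζ he)).2
    obtain ⟨h1, h2, _⟩ := fiber_eq hζ'
    refine ⟨Finset.union_subset (fun e he => hω₀ ((Finset.filter_subset _ _) he))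
      (fun e he => (Finset.mem_filter.1 (hζ he)).1), h1, h2⟩

lemma fiber_inj {η : Finset (Sym2 V)} {W : Finset V}
    (hη : ∀ e ∈ η, ∀ v ∈ e, v ∈ W) {F : Finset (Sym2 V)}
    (hF : ∀ e ∈ F, ∀ v ∈ e, v ∉ W) :
    Set.InjOn (fun ζ => η ∪ ζ) (F.powerset : Set (Finset (Sym2 V))) := by
  intro u hu v hv huv
  simp only [Finset.coe_powerset, Set.mem_preimage, Set.mem_powerset_iff,
    Finset.coe_subset] at hu hv
  have recover : ∀ ζ : Finset (Sym2 V), ζ ⊆ F →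
      (η ∪ ζ).filter (fun e => ∀ x ∈ e, x ∉ W) = ζ := by
    intro ζ hζ
    ext e
    simp only [Finset.mem_filter, Finset.mem_union]
    constructor
    · rintro ⟨h1 | h1, h2⟩
      · obtain ⟨a, ha⟩ := sym2_exists_mem e
        exact absurd (hη e h1 a ha) (h2 a ha)
      · exact h1
    · intro he
      exact ⟨Or.inr he, hF e (hζ he)⟩
  have := recover u hu
  rw [← this, ← recover v hv]
  simp only at huv
  rw [huv]

end Fiber

lemma powerMean_zero (q : ℕ) [NeZero q] (f : Fin q → ℂ) : powerMean q f 0 = 1 := by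
  have hq : (q:ℂ) ≠ 0 := Nat.cast_ne_zero.2 (NeZero.ne q)
  simp [powerMean, div_self hq]

lemma sum_pow_eq (q : ℕ) [NeZero q] (f : Fin q → ℂ) (m : ℕ)
    (him : (powerMean q f m).im = 0) :
    (∑ x : Fin q, f x ^ m) = (((q:ℝ) * (powerMean q f m).re : ℝ) : ℂ) := by
  have hq : (q:ℂ) ≠ 0 := Nat.cast_ne_zero.2 (NeZero.ne q)
  have h1 : (∑ x : Fin q, f x ^ m) = (q:ℂ) * powerMean q f m := by
    rw [powerMean]; field_simp
  have h2 : powerMean q f m = ((powerMean q f m).re : ℂ) := by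
    apply Complex.ext
    · simp
    · simpa using him
  rw [h1]
  conv_lhs => rw [h2]
  rw [Complex.ofReal_mul, Complex.ofReal_natCast]

lemma prod_ite_pow (C R : Finset V) (z : ℂ) :
    (∏ v ∈ C, (if v ∈ R then z else 1)) = z ^ (C ∩ R).card := by
  rw [← Finset.prod_filter, Finset.filter_mem_eq_inter, Finset.prod_const]


end NegCorr

open NegCorr

/-- Schonmann-type negative correlation with zero external field: it suffices that
`f₀ ∈ F_q` (membership in `F_q^0` is not required). -/
theorem pottsMean_negative_correlation_zero_field
    (q : ℕ) [NeZero q] (hq : 2 ≤ q)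
    (E : Finset (Sym2 V)) (hE : ∀ e ∈ E, ¬ e.IsDiag)
    (J : Sym2 V → ℝ) (hJ : ∀ e ∈ E, 0 ≤ J e)
    (f₀ f₁ : Fin q → ℂ) (hf₀ : memF q f₀)
    (hf₁ : ∀ m : ℕ, (powerMean q f₁ m).im = 0 ∧ 0 ≤ (powerMean q f₁ m).re)
    (hdisj : ∀ x : Fin q, f₀ x * f₁ x = 0) (R S : Finset V) :
    (pottsMean2 q E J (fun _ => 0) f₀ f₁ R S).re ≤
      (pottsMean q E J (fun _ => 0) f₀ R).re *
        (pottsMean q E J (fun _ => 0) f₁ S).re := by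
  
  classical
  have hq1 : (1:ℝ) ≤ (q:ℝ) := by
    have h2 : (2:ℝ) ≤ (q:ℝ) := by exact_mod_cast hq
    linarith
  set lam : Sym2 V → ℝ := fun e => if e ∈ E then Real.exp (J e) - 1 else 0 with hlamdef
  have hlam : ∀ e, 0 ≤ lam e := by
    intro e
    rw [hlamdef]
    dsimp only
    split
    · rename_i h
      have := Real.one_le_exp_iff.2 (hJ e h)
      linarith
    · exact le_refl 0
  have lam_eq : ∀ ζ ∈ E.powerset, (∏ e ∈ ζ, (Real.exp (J e) - 1)) = ∏ e ∈ ζ, lam e := by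
    intro ζ hζ
    apply Finset.prod_congr rfl
    intro e he
    rw [hlamdef]
    dsimp only
    rw [if_pos (Finset.mem_powerset.1 hζ he)]
  -- weights
  set r0 : ℕ → ℝ := fun m => (powerMean q f₀ m).re with hr0def
  set r1 : ℕ → ℝ := fun m => (powerMean q f₁ m).re with hr1def
  set w0 : Finset V → ℝ := fun C => r0 (C ∩ R).card with hw0def
  set w1 : Finset V → ℝ := fun C => r1 (C ∩ S).card with hw1def
  have hw0 : ∀ C, 0 ≤ w0 C := fun C => (hf₀.1 _).2
  have hw1 : ∀ C, 0 ≤ w1 C := fun C => (hf₁ _).2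
  have r0zero : r0 0 = 1 := by rw [hr0def]; simp [powerMean_zero]
  have r1zero : r1 0 = 1 := by rw [hr1def]; simp [powerMean_zero]
  have hsup0 : ∀ A B : Finset V, Disjoint A B → w0 A * w0 B ≤ w0 (A ∪ B) := by
    intro A B hAB
    have hcard : ((A ∪ B) ∩ R).card = (A ∩ R).card + (B ∩ R).card := by
      rw [Finset.union_inter_distrib_right]
      exact Finset.card_union_of_disjoint
        (hAB.mono Finset.inter_subset_left Finset.inter_subset_left)
    rw [hw0def]
    dsimp only
    rw [hcard]
    exact hf₀.2 _ _
  -- cluster factors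
  have cluster0 : ∀ C : Finset V, (∑ x : Fin q, f₀ x ^ (C ∩ R).card)
      = (((q:ℝ) * w0 C : ℝ) : ℂ) := fun C => sum_pow_eq q f₀ _ (hf₀.1 _).1
  have cluster1 : ∀ C : Finset V, (∑ x : Fin q, f₁ x ^ (C ∩ S).card)
      = (((q:ℝ) * w1 C : ℝ) : ℂ) := fun C => sum_pow_eq q f₁ _ (hf₁ _).1
  have prodq : ∀ (ζ : Finset (Sym2 V)) (u : Finset V → ℝ),
      (∏ C ∈ comps ζ, (((q:ℝ) * u C : ℝ) : ℂ))
        = (((q:ℝ) ^ kk ζ * Pw u ζ : ℝ) : ℂ) := by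
    intro ζ u
    rw [← Complex.ofReal_prod]
    congr 1
    rw [Finset.prod_mul_distrib, Finset.prod_const]
    rfl
  have prodfac0 : ∀ ζ : Finset (Sym2 V),
      (∏ C ∈ comps ζ, (∑ x : Fin q, f₀ x ^ (C ∩ R).card))
        = (((q:ℝ) ^ kk ζ * Pw w0 ζ : ℝ) : ℂ) := by
    intro ζ
    rw [Finset.prod_congr rfl (fun C _ => cluster0 C), prodq]
  have prodfac1 : ∀ ζ : Finset (Sym2 V),
      (∏ C ∈ comps ζ, (∑ x : Fin q, f₁ x ^ (C ∩ S).card))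
        = (((q:ℝ) ^ kk ζ * Pw w1 ζ : ℝ) : ℂ) := by
    intro ζ
    rw [Finset.prod_congr rfl (fun C _ => cluster1 C), prodq]
  -- mixed per-configuration computation
  have prodmix : ∀ ζ : Finset (Sym2 V),
      (∏ C ∈ comps ζ, (∑ x : Fin q, f₀ x ^ (C ∩ R).card * f₁ x ^ (C ∩ S).card))
        = (((q:ℝ) ^ kk ζ *
            (if Wof S ζ ∩ R = ∅ then Pw w0 ζ * Pw w1 ζ else 0) : ℝ) : ℂ) := by
    intro ζ
    by_cases hWR : Wof S ζ ∩ R = ∅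
    · rw [if_pos hWR]
      have perC : ∀ C ∈ comps ζ,
          (∑ x : Fin q, f₀ x ^ (C ∩ R).card * f₁ x ^ (C ∩ S).card)
            = (((q:ℝ) * (w0 C * w1 C) : ℝ) : ℂ) := by
        intro C hC
        by_cases hCS : C ∩ S = ∅
        · have hterm0 : ∀ x : Fin q, f₀ x ^ (C ∩ R).card * f₁ x ^ (C ∩ S).card
              = f₀ x ^ (C ∩ R).card := by
            intro x
            rw [hCS, Finset.card_empty, pow_zero, mul_one]
          rw [Finset.sum_congr rfl (fun x _ => hterm0 x), cluster0 C]
          have hw1C : w1 C = 1 := by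
            rw [hw1def]; dsimp only; rw [hCS, Finset.card_empty]; exact r1zero
          rw [hw1C, mul_one]
        · -- C meets S, so C ⊆ Wof S ζ, so C ∩ R = ∅
          obtain ⟨s, hs⟩ := Finset.nonempty_iff_ne_empty.2 hCS
          rcases Finset.mem_inter.1 hs with ⟨hsC, hsS⟩
          rcases mem_comps.1 hC with ⟨v, rfl⟩
          have hCR : cls ζ v ∩ R = ∅ := by
            rw [← Finset.subset_empty, ← hWR]
            intro u hu
            rcases Finset.mem_inter.1 hu with ⟨huC, huR⟩
            refine Finset.mem_inter.2 ⟨?_, huR⟩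
            exact mem_Wof.2 ⟨s, hsS, conn_trans (conn_symm (mem_cls.1 hsC)) (mem_cls.1 huC)⟩
          have hterm : ∀ x : Fin q, f₀ x ^ (cls ζ v ∩ R).card * f₁ x ^ (cls ζ v ∩ S).card
              = f₁ x ^ (cls ζ v ∩ S).card := by
            intro x
            rw [hCR, Finset.card_empty, pow_zero, one_mul]
          rw [Finset.sum_congr rfl (fun x _ => hterm x), cluster1 _]
          have hw0C : w0 (cls ζ v) = 1 := by
            rw [hw0def]; dsimp only; rw [hCR, Finset.card_empty]; exact r0zero
          rw [hw0C, one_mul]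
      rw [Finset.prod_congr rfl perC, ← Complex.ofReal_prod]
      congr 1
      rw [Finset.prod_mul_distrib, Finset.prod_const, Finset.prod_mul_distrib]
      rfl
    · rw [if_neg hWR, mul_zero, Complex.ofReal_zero]
      obtain ⟨v, hv⟩ := Finset.nonempty_iff_ne_empty.2 hWR
      rcases Finset.mem_inter.1 hv with ⟨hvW, hvR⟩
      apply Finset.prod_eq_zero (cls_mem_comps v (ω := ζ))
      apply Finset.sum_eq_zero
      intro x _
      have hm : 0 < (cls ζ v ∩ R).card :=
        Finset.card_pos.2 ⟨v, Finset.mem_inter.2 ⟨self_mem_cls, hvR⟩⟩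
      have hn : 0 < (cls ζ v ∩ S).card := by
        rcases mem_Wof.1 hvW with ⟨s, hsS, hc⟩
        exact Finset.card_pos.2 ⟨s, Finset.mem_inter.2 ⟨mem_cls.2 (conn_symm hc), hsS⟩⟩
      rcases mul_eq_zero.1 (hdisj x) with h | h
      · rw [h, zero_pow hm.ne', zero_mul]
      · rw [h, zero_pow hn.ne', mul_zero]
  -- spin-sum identities via the master expansion
  have hZZ : pottsZ q E J (fun _ => 0) = ZZ q lam E := by
    have h1 := master q E J (fun (_ : V) (_ : Fin q) => (1:ℂ))
    simp only [Finset.prod_const_one, mul_one] at h1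
    apply Complex.ofReal_injective
    rw [pottsZ, Complex.ofReal_sum, h1, ZZ, Complex.ofReal_sum]
    apply Finset.sum_congr rfl
    intro ζ hζ
    have hx : (∏ C ∈ comps ζ, ∑ _x : Fin q, (1:ℂ)) = (((q:ℝ) ^ kk ζ : ℝ) : ℂ) := by
      have : ∀ C ∈ comps ζ, (∑ _x : Fin q, (1:ℂ)) = ((q:ℝ):ℂ) := by
        intro C _
        simp
      rw [Finset.prod_congr rfl this, Finset.prod_const]
      norm_cast
    rw [hx, lam_eq ζ hζ, ← Complex.ofReal_mul]
  have hZpos' : 0 < ZZ q lam E := ZZ_pos hq1 hlam E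
  have hZpos : 0 < pottsZ q E J (fun _ => 0) := by rw [hZZ]; exact hZpos'
  have hmean : ∀ h : (V → Fin q) → ℂ,
      (∑ σ : V → Fin q, ((pottsPMF q E J (fun _ => 0) σ : ℝ) : ℂ) * h σ)
        = (((pottsZ q E J (fun _ => 0))⁻¹ : ℝ) : ℂ)
            * ∑ σ : V → Fin q, ((pottsWeight q E J (fun _ => 0) σ : ℝ) : ℂ) * h σ := by
    intro h
    rw [Finset.mul_sum]
    apply Finset.sum_congr rfl
    intro σ _
    rw [pottsPMF, div_eq_mul_inv, Complex.ofReal_mul, Complex.ofReal_inv]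
    ring
  have hprod0 : ∀ σ : V → Fin q, (∏ v ∈ R, f₀ (σ v))
      = ∏ v : V, (if v ∈ R then f₀ (σ v) else 1) := by
    intro σ
    calc (∏ v ∈ R, f₀ (σ v)) = ∏ v ∈ R, (if v ∈ R then f₀ (σ v) else 1) :=
        Finset.prod_congr rfl fun v hv => (if_pos hv).symm
      _ = ∏ v : V, (if v ∈ R then f₀ (σ v) else 1) :=
        Finset.prod_subset (Finset.subset_univ R) (fun v _ hv => if_neg hv)
  have hprod1 : ∀ σ : V → Fin q, (∏ v ∈ S, f₁ (σ v))
      = ∏ v : V, (if v ∈ S then f₁ (σ v) else 1) := by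
    intro σ
    calc (∏ v ∈ S, f₁ (σ v)) = ∏ v ∈ S, (if v ∈ S then f₁ (σ v) else 1) :=
        Finset.prod_congr rfl fun v hv => (if_pos hv).symm
      _ = ∏ v : V, (if v ∈ S then f₁ (σ v) else 1) :=
        Finset.prod_subset (Finset.subset_univ S) (fun v _ hv => if_neg hv)
  have key0 : (∑ σ : V → Fin q, ((pottsWeight q E J (fun _ => 0) σ : ℝ) : ℂ)
        * ∏ v ∈ R, f₀ (σ v)) = ((NN q lam w0 E : ℝ) : ℂ) := by
    calc (∑ σ : V → Fin q, ((pottsWeight q E J (fun _ => 0) σ : ℝ) : ℂ)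
          * ∏ v ∈ R, f₀ (σ v))
        = ∑ σ : V → Fin q, ((pottsWeight q E J (fun _ => 0) σ : ℝ) : ℂ)
          * ∏ v : V, (if v ∈ R then f₀ (σ v) else 1) :=
          Finset.sum_congr rfl fun σ _ => by rw [hprod0 σ]
      _ = ∑ ζ ∈ E.powerset, ((∏ e ∈ ζ, (Real.exp (J e) - 1) : ℝ) : ℂ)
          * ∏ C ∈ comps ζ, ∑ x : Fin q, ∏ v ∈ C, (if v ∈ R then f₀ x else 1) :=
          master q E J (fun v x => if v ∈ R then f₀ x else 1)
      _ = ((NN q lam w0 E : ℝ) : ℂ) := by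
          rw [NN, Complex.ofReal_sum]
          apply Finset.sum_congr rfl
          intro ζ hζ
          have hin : (∏ C ∈ comps ζ, ∑ x : Fin q, ∏ v ∈ C, (if v ∈ R then f₀ x else 1))
              = (((q:ℝ) ^ kk ζ * Pw w0 ζ : ℝ) : ℂ) := by
            rw [← prodfac0 ζ]
            apply Finset.prod_congr rfl
            intro C _
            exact Finset.sum_congr rfl fun x _ => prod_ite_pow C R (f₀ x)
          rw [hin, lam_eq ζ hζ, ← Complex.ofReal_mul]
          congr 1
          ring
  have key1 : (∑ σ : V → Fin q, ((pottsWeight q E J (fun _ => 0) σ : ℝ) : ℂ)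
        * ∏ v ∈ S, f₁ (σ v)) = ((NN q lam w1 E : ℝ) : ℂ) := by
    calc (∑ σ : V → Fin q, ((pottsWeight q E J (fun _ => 0) σ : ℝ) : ℂ)
          * ∏ v ∈ S, f₁ (σ v))
        = ∑ σ : V → Fin q, ((pottsWeight q E J (fun _ => 0) σ : ℝ) : ℂ)
          * ∏ v : V, (if v ∈ S then f₁ (σ v) else 1) :=
          Finset.sum_congr rfl fun σ _ => by rw [hprod1 σ]
      _ = ∑ ζ ∈ E.powerset, ((∏ e ∈ ζ, (Real.exp (J e) - 1) : ℝ) : ℂ)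
          * ∏ C ∈ comps ζ, ∑ x : Fin q, ∏ v ∈ C, (if v ∈ S then f₁ x else 1) :=
          master q E J (fun v x => if v ∈ S then f₁ x else 1)
      _ = ((NN q lam w1 E : ℝ) : ℂ) := by
          rw [NN, Complex.ofReal_sum]
          apply Finset.sum_congr rfl
          intro ζ hζ
          have hin : (∏ C ∈ comps ζ, ∑ x : Fin q, ∏ v ∈ C, (if v ∈ S then f₁ x else 1))
              = (((q:ℝ) ^ kk ζ * Pw w1 ζ : ℝ) : ℂ) := by
            rw [← prodfac1 ζ]
            apply Finset.prod_congr rfl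
            intro C _
            exact Finset.sum_congr rfl fun x _ => prod_ite_pow C S (f₁ x)
          rw [hin, lam_eq ζ hζ, ← Complex.ofReal_mul]
          congr 1
          ring
  set NL : ℝ := ∑ ζ ∈ E.powerset, (∏ e ∈ ζ, lam e) * (q:ℝ) ^ kk ζ *
      (if Wof S ζ ∩ R = ∅ then Pw w0 ζ * Pw w1 ζ else 0) with hNLdef
  have keymix : (∑ σ : V → Fin q, ((pottsWeight q E J (fun _ => 0) σ : ℝ) : ℂ)
        * ((∏ v ∈ R, f₀ (σ v)) * ∏ v ∈ S, f₁ (σ v))) = ((NL : ℝ) : ℂ) := by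
    calc (∑ σ : V → Fin q, ((pottsWeight q E J (fun _ => 0) σ : ℝ) : ℂ)
          * ((∏ v ∈ R, f₀ (σ v)) * ∏ v ∈ S, f₁ (σ v)))
        = ∑ σ : V → Fin q, ((pottsWeight q E J (fun _ => 0) σ : ℝ) : ℂ)
          * ∏ v : V, ((if v ∈ R then f₀ (σ v) else 1) * (if v ∈ S then f₁ (σ v) else 1)) := by
          apply Finset.sum_congr rfl
          intro σ _
          rw [Finset.prod_mul_distrib, hprod0 σ, hprod1 σ]
      _ = ∑ ζ ∈ E.powerset, ((∏ e ∈ ζ, (Real.exp (J e) - 1) : ℝ) : ℂ)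
          * ∏ C ∈ comps ζ, ∑ x : Fin q,
              ∏ v ∈ C, ((if v ∈ R then f₀ x else 1) * (if v ∈ S then f₁ x else 1)) :=
          master q E J (fun v x => (if v ∈ R then f₀ x else 1) * (if v ∈ S then f₁ x else 1))
      _ = ((NL : ℝ) : ℂ) := by
          rw [hNLdef, Complex.ofReal_sum]
          apply Finset.sum_congr rfl
          intro ζ hζ
          have hin : (∏ C ∈ comps ζ, ∑ x : Fin q,
                ∏ v ∈ C, ((if v ∈ R then f₀ x else 1) * (if v ∈ S then f₁ x else 1)))
              = (((q:ℝ) ^ kk ζ *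
                  (if Wof S ζ ∩ R = ∅ then Pw w0 ζ * Pw w1 ζ else 0) : ℝ) : ℂ) := by
            rw [← prodmix ζ]
            apply Finset.prod_congr rfl
            intro C _
            apply Finset.sum_congr rfl
            intro x _
            rw [Finset.prod_mul_distrib, prod_ite_pow C R (f₀ x), prod_ite_pow C S (f₁ x)]
          rw [hin, lam_eq ζ hζ, ← Complex.ofReal_mul]
          congr 1
          ring
  -- real parts of the three means
  set Z : ℝ := ZZ q lam E with hZdef
  set N0 : ℝ := NN q lam w0 E with hN0def
  set N1 : ℝ := NN q lam w1 E with hN1def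
  have hre2 : (pottsMean2 q E J (fun _ => 0) f₀ f₁ R S).re = Z⁻¹ * NL := by
    have h2 := hmean (fun σ => (∏ v ∈ R, f₀ (σ v)) * ∏ v ∈ S, f₁ (σ v))
    rw [pottsMean2, h2, keymix, hZZ, ← Complex.ofReal_mul, Complex.ofReal_re]
  have hre0 : (pottsMean q E J (fun _ => 0) f₀ R).re = Z⁻¹ * N0 := by
    have h2 := hmean (fun σ => ∏ v ∈ R, f₀ (σ v))
    rw [pottsMean, h2, key0, hZZ, ← Complex.ofReal_mul, Complex.ofReal_re]
  have hre1 : (pottsMean q E J (fun _ => 0) f₁ S).re = Z⁻¹ * N1 := by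
    have h2 := hmean (fun σ => ∏ v ∈ S, f₁ (σ v))
    rw [pottsMean, h2, key1, hZZ, ← Complex.ofReal_mul, Complex.ofReal_re]
  -- regrouping by the S-territory
  set m : ℕ := Fintype.card V with hmdef
  have hqm : (0:ℝ) < (q:ℝ) ^ m := pow_pos (by linarith) m
  set keyf : Finset (Sym2 V) → Finset V × Finset (Sym2 V) :=
    fun ω => (Wof S ω, etaOf S ω) with hkeyfdef
  set Gw : Finset (Sym2 V) → ℝ := fun ω => (∏ e ∈ ω, lam e) * (q:ℝ) ^ kk ω *
      (if Wof S ω ∩ R = ∅ then Pw w0 ω * Pw w1 ω else 0) with hGwdef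
  set G1 : Finset (Sym2 V) → ℝ := fun ω => (∏ e ∈ ω, lam e) * (q:ℝ) ^ kk ω * Pw w1 ω
    with hG1def
  set T := E.powerset.image keyf with hTdef
  have hmaps : ∀ ω ∈ E.powerset, keyf ω ∈ T := fun ω h => Finset.mem_image_of_mem _ h
  have hNL : NL = ∑ p ∈ T, ∑ ω ∈ E.powerset.filter (fun ω => keyf ω = p), Gw ω :=
    (Finset.sum_fiberwise_of_maps_to hmaps Gw).symm
  have hN1T : N1 = ∑ p ∈ T, ∑ ω ∈ E.powerset.filter (fun ω => keyf ω = p), G1 ω := by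
    rw [hN1def, NN]
    exact (Finset.sum_fiberwise_of_maps_to hmaps G1).symm
  have hG1nonneg : ∀ ω, 0 ≤ G1 ω := by
    intro ω
    exact mul_nonneg (mul_nonneg (Finset.prod_nonneg fun e _ => hlam e)
      (pow_nonneg (by linarith) _)) (Pw_nonneg hw1 ω)
  have hN0nonneg : 0 ≤ N0 := NN_nonneg hq1 hlam hw0 E
  have perfiber : ∀ p ∈ T,
      (∑ ω ∈ E.powerset.filter (fun ω => keyf ω = p), Gw ω)
        ≤ (N0 / Z) * ∑ ω ∈ E.powerset.filter (fun ω => keyf ω = p), G1 ω := by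
    intro p hp
    obtain ⟨ω₀, hω₀, hkey0⟩ := Finset.mem_image.1 hp
    have hω₀E : ω₀ ⊆ E := Finset.mem_powerset.1 hω₀
    set W := Wof S ω₀ with hWdef
    set η := etaOf S ω₀ with hηdef
    set Fout := E.filter (fun e => ∀ v ∈ e, v ∉ W) with hFoutdef
    have hfilter : E.powerset.filter (fun ω => keyf ω = p)
        = Fout.powerset.image (fun ζ => η ∪ ζ) := by
      rw [hFoutdef, hηdef, hWdef, ← fiber_image hω₀E]
      apply Finset.filter_congr
      intro ω _
      rw [← hkey0, hkeyfdef]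
      simp [Prod.ext_iff]
    have hηin : ∀ e ∈ η, ∀ v ∈ e, v ∈ W := eta_edges_inside
    have hFoutE : Fout ⊆ E := Finset.filter_subset _ _
    have hFoutdef' : ∀ e ∈ Fout, ∀ v ∈ e, v ∉ W := fun e he => (Finset.mem_filter.1 he).2
    have hinj := fiber_inj hηin hFoutdef'
    have hSW : S ⊆ W := S_subset_Wof
    rw [hfilter, Finset.sum_image hinj, Finset.sum_image hinj]
    -- per-element facts
    set Ybar : ℝ := ∏ C ∈ W.image (cls η), w1 C with hYbardef
    have hYbar : 0 ≤ Ybar := Finset.prod_nonneg fun C _ => hw1 C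
    have perζ : ∀ ζ ∈ Fout.powerset,
        (∀ e ∈ ζ, ∀ v ∈ e, v ∉ W) ∧ Wof S (η ∪ ζ) = W ∧ Pw w1 (η ∪ ζ) = Ybar ∧
        (∏ e ∈ η ∪ ζ, lam e) = (∏ e ∈ η, lam e) * ∏ e ∈ ζ, lam e ∧
        (q:ℝ) ^ kk (η ∪ ζ) * (q:ℝ) ^ m = (q:ℝ) ^ kk η * (q:ℝ) ^ kk ζ := by
      intro ζ hζ
      have hζsub : ζ ⊆ Fout := Finset.mem_powerset.1 hζ
      have hζout : ∀ e ∈ ζ, ∀ v ∈ e, v ∉ W := fun e he => hFoutdef' e (hζsub he)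
      have hWeq : Wof S (η ∪ ζ) = W := (fiber_eq hζout).1
      refine ⟨hζout, hWeq, ?_, Finset.prod_union (eta_zeta_disjoint hηin hζout), ?_⟩
      · rw [prod_comps_union hηin hζout w1, ← hYbardef]
        have hone : (∏ C ∈ (univ \ W).image (cls ζ), w1 C) = 1 := by
          apply Finset.prod_eq_one
          intro C hC
          rcases Finset.mem_image.1 hC with ⟨u, hu, rfl⟩
          have hu' : u ∉ W := (Finset.mem_sdiff.1 hu).2
          have hCS : cls ζ u ∩ S = ∅ := by
            rw [Finset.eq_empty_iff_forall_notMem]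
            intro x hx
            rcases Finset.mem_inter.1 hx with ⟨hx1, hx2⟩
            exact cls_subset_outside hζout hu' x hx1 (hSW hx2)
          rw [hw1def]
          dsimp only
          rw [hCS, Finset.card_empty]
          exact r1zero
        rw [hone, mul_one]
      · rw [← pow_add, ← pow_add, hmdef, kk_union_split hηin hζout]
    by_cases hWR : W ∩ R = ∅
    · -- main case
      have claimX : ∀ ζ ∈ Fout.powerset, Pw w0 (η ∪ ζ) = Pw w0 ζ := by
        intro ζ hζ
        obtain ⟨hζout, -, -, -, -⟩ := perζ ζ hζ
        have honeW : ∀ v ∈ W, w0 {v} = 1 := by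
          intro v hv
          have h1 : ({v} : Finset V) ∩ R = ∅ := by
            rw [Finset.eq_empty_iff_forall_notMem]
            intro x hx
            rcases Finset.mem_inter.1 hx with ⟨hx1, hx2⟩
            rw [Finset.mem_singleton] at hx1
            subst hx1
            rw [Finset.eq_empty_iff_forall_notMem] at hWR
            exact hWR x (Finset.mem_inter.2 ⟨hv, hx2⟩)
          rw [hw0def]
          dsimp only
          rw [h1, Finset.card_empty]
          exact r0zero
        rw [prod_comps_union hηin hζout w0, Pw_zeta_eq hζout w0 honeW]
        have hone : (∏ C ∈ W.image (cls η), w0 C) = 1 := by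
          apply Finset.prod_eq_one
          intro C hC
          rcases Finset.mem_image.1 hC with ⟨v, hv, rfl⟩
          have hCR : cls η v ∩ R = ∅ := by
            rw [Finset.eq_empty_iff_forall_notMem]
            intro x hx
            rcases Finset.mem_inter.1 hx with ⟨hx1, hx2⟩
            rw [Finset.eq_empty_iff_forall_notMem] at hWR
            exact hWR x (Finset.mem_inter.2 ⟨cls_subset_inside hηin hv hx1, hx2⟩)
          rw [hw0def]
          dsimp only
          rw [hCR, Finset.card_empty]
          exact r0zero
        rw [hone, one_mul]
      set cη : ℝ := (∏ e ∈ η, lam e) * (q:ℝ) ^ kk η * Ybar with hcηdef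
      have hcη : 0 ≤ cη :=
        mul_nonneg (mul_nonneg (Finset.prod_nonneg fun e _ => hlam e)
          (pow_nonneg (by linarith) _)) hYbar
      have eqL : (∑ ζ ∈ Fout.powerset, Gw (η ∪ ζ)) * (q:ℝ) ^ m
          = cη * NN q lam w0 Fout := by
        rw [Finset.sum_mul, NN, Finset.mul_sum]
        apply Finset.sum_congr rfl
        intro ζ hζ
        obtain ⟨hζout, hWeq, hY, hlamsplit, hkkq⟩ := perζ ζ hζ
        rw [hGwdef]
        dsimp only
        rw [hWeq, if_pos hWR, claimX ζ hζ, hY, hlamsplit, hcηdef]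
        linear_combination
          ((∏ e ∈ η, lam e) * (∏ e ∈ ζ, lam e) * (Pw w0 ζ * Ybar)) * hkkq
      have eq1 : (∑ ζ ∈ Fout.powerset, G1 (η ∪ ζ)) * (q:ℝ) ^ m
          = cη * ZZ q lam Fout := by
        rw [Finset.sum_mul, ZZ, Finset.mul_sum]
        apply Finset.sum_congr rfl
        intro ζ hζ
        obtain ⟨hζout, hWeq, hY, hlamsplit, hkkq⟩ := perζ ζ hζ
        rw [hG1def]
        dsimp only
        rw [hY, hlamsplit, hcηdef]
        linear_combination ((∏ e ∈ η, lam e) * (∏ e ∈ ζ, lam e) * Ybar) * hkkq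
      have hZFpos : 0 < ZZ q lam Fout := ZZ_pos hq1 hlam Fout
      have hmono := rr_mono (w := w0) hq1 hlam hw0 hsup0 hFoutE
      rw [rr, rr] at hmono
      have hineq : NN q lam w0 Fout ≤ N0 / Z * ZZ q lam Fout := by
        rw [div_mul_eq_mul_div, le_div_iff₀ hZpos']
        have := (div_le_div_iff₀ hZFpos hZpos').1 hmono
        linarith
      have final : (∑ ζ ∈ Fout.powerset, Gw (η ∪ ζ)) * (q:ℝ) ^ m
          ≤ ((N0 / Z) * ∑ ζ ∈ Fout.powerset, G1 (η ∪ ζ)) * (q:ℝ) ^ m := by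
        rw [eqL]
        conv_rhs => rw [mul_assoc, eq1]
        calc cη * NN q lam w0 Fout ≤ cη * (N0 / Z * ZZ q lam Fout) :=
              mul_le_mul_of_nonneg_left hineq hcη
          _ = N0 / Z * (cη * ZZ q lam Fout) := by ring
      exact (mul_le_mul_iff_of_pos_right hqm).1 final
    · -- degenerate case: the indicator vanishes on the whole fiber
      have hzero : ∀ ζ ∈ Fout.powerset, Gw (η ∪ ζ) = 0 := by
        intro ζ hζ
        obtain ⟨hζout, hWeq, -, -, -⟩ := perζ ζ hζ
        rw [hGwdef]
        dsimp only
        rw [hWeq, if_neg hWR, mul_zero]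
      rw [Finset.sum_eq_zero hzero]
      exact mul_nonneg (div_nonneg hN0nonneg hZpos'.le)
        (Finset.sum_nonneg fun ζ _ => hG1nonneg _)
  have main : NL ≤ N0 / Z * N1 := by
    rw [hNL, hN1T, Finset.mul_sum]
    exact Finset.sum_le_sum perfiber
  rw [hre2, hre0, hre1]
  have hfin : Z⁻¹ * NL ≤ Z⁻¹ * (N0 / Z * N1) :=
    mul_le_mul_of_nonneg_left main (inv_nonneg.2 hZpos'.le)
  have heq : Z⁻¹ * (N0 / Z * N1) = (Z⁻¹ * N0) * (Z⁻¹ * N1) := by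
    rw [div_eq_mul_inv]
    ring
  linarith
end
end

section
/- (GKS inequalities for angular spins.) Let f : Q → ℂ be given by f(x) = e^{2πix/q}. Then for all R, S ⊆ V the Potts means ⟨f(σ)^R⟩, ⟨f(σ)^S⟩ and ⟨f(σ)^R f(σ)^S⟩ are real numbers, ⟨f(σ)^R⟩ ≥ 0, and ⟨f(σ)^R f(σ)^S⟩ ≥ ⟨f(σ)^R⟩ · ⟨f(σ)^S⟩. -/
open Finset

noncomputable section

variable {V : Type*} [Fintype V] [DecidableEq V]

section Aux
open SimpleGraph
namespace GKSaux

variable {W : Type*}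

lemma reach_const {G : SimpleGraph W} {β : Type*} {g : W → β}
    (hg : ∀ ⦃a b⦄, G.Adj a b → g a = g b) {a b : W} (h : G.Reachable a b) :
    g a = g b := by
  obtain ⟨w⟩ := h
  induction w with
  | nil => rfl
  | cons h p ih => exact (hg h).trans ih

lemma reach_sup_edge {G : SimpleGraph W} {u v : W} {a b : W}
    (h : (G ⊔ edge u v).Reachable a b) :
    G.Reachable a b ∨ (G.Reachable a u ∧ G.Reachable v b) ∨
      (G.Reachable a v ∧ G.Reachable u b) := by
  obtain ⟨w⟩ := h
  induction w with
  | nil => exact Or.inl (Reachable.refl _)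
  | @cons a c b h p ih =>
    rw [sup_adj, edge_adj] at h
    rcases h with h | ⟨h | h, -⟩
    · rcases ih with h2 | ⟨h2, h3⟩ | ⟨h2, h3⟩
      · exact Or.inl (h.reachable.trans h2)
      · exact Or.inr (Or.inl ⟨h.reachable.trans h2, h3⟩)
      · exact Or.inr (Or.inr ⟨h.reachable.trans h2, h3⟩)
    · obtain ⟨rfl, rfl⟩ := h
      rcases ih with h2 | ⟨h2, h3⟩ | ⟨h2, h3⟩
      · exact Or.inr (Or.inl ⟨Reachable.refl _, h2⟩)
      · exact Or.inr (Or.inl ⟨Reachable.refl _, h3⟩)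
      · exact Or.inl h3
    · obtain ⟨rfl, rfl⟩ := h
      rcases ih with h2 | ⟨h2, h3⟩ | ⟨h2, h3⟩
      · exact Or.inr (Or.inr ⟨Reachable.refl _, h2⟩)
      · exact Or.inl h3
      · exact Or.inr (Or.inr ⟨Reachable.refl _, h3⟩)

lemma reach_sup_edge_iff {G : SimpleGraph W} {u v : W} (huv : u ≠ v) {a b : W} :
    (G ⊔ edge u v).Reachable a b ↔ G.Reachable a b ∨ (G.Reachable a u ∧ G.Reachable v b) ∨
      (G.Reachable a v ∧ G.Reachable u b) := by
  constructor
  · exact reach_sup_edge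
  · have hadj : (G ⊔ edge u v).Adj u v := by
      rw [sup_adj, edge_adj]; exact Or.inr ⟨Or.inl ⟨rfl, rfl⟩, huv⟩
    rintro (h | ⟨h1, h2⟩ | ⟨h1, h2⟩)
    · exact h.mono le_sup_left
    · exact ((h1.mono le_sup_left).trans hadj.reachable).trans (h2.mono le_sup_left)
    · exact ((h1.mono le_sup_left).trans hadj.symm.reachable).trans (h2.mono le_sup_left)

/-- number of connected components -/
noncomputable def kappaG (G : SimpleGraph W) : ℕ := Nat.card G.ConnectedComponent

lemma kappaG_sup_edge_of_reachable {G : SimpleGraph W} {u v : W} (h : G.Reachable u v) :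
    kappaG (G ⊔ edge u v) = kappaG G := by
  rcases eq_or_ne u v with rfl | huv
  · rw [sup_edge_self]
  have hiff : ∀ a b, G.Reachable a b ↔ (G ⊔ edge u v).Reachable a b := by
    intro a b
    rw [reach_sup_edge_iff huv]
    constructor
    · exact Or.inl
    · rintro (h1 | ⟨h1, h2⟩ | ⟨h1, h2⟩)
      · exact h1
      · exact (h1.trans h).trans h2
      · exact (h1.trans h.symm).trans h2
  exact (Nat.card_congr (Quot.congrRight hiff)).symm

end GKSaux


namespace GKSaux2
open GKSaux

variable {W : Type*} [Finite W]

noncomputable local instance (G : SimpleGraph W) : Fintype G.ConnectedComponent :=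
  Fintype.ofFinite _

lemma kappaG_eq_succ {G : SimpleGraph W} {u v : W} (h : ¬ G.Reachable u v) :
    kappaG G = kappaG (G ⊔ edge u v) + 1 := by
  classical
  have huv : u ≠ v := by rintro rfl; exact h (Reachable.refl u)
  set G' : SimpleGraph W := G ⊔ edge u v with hG'
  have hadj : G'.Adj u v := by
    rw [hG', sup_adj, edge_adj]; exact Or.inr ⟨Or.inl ⟨rfl, rfl⟩, huv⟩
  have hchar : ∀ a b : W, G'.Reachable a b ↔ G.Reachable a b ∨
      (G.Reachable a u ∧ G.Reachable v b) ∨ (G.Reachable a v ∧ G.Reachable u b) :=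
    fun a b => reach_sup_edge_iff huv
  set φ : G.ConnectedComponent → G'.ConnectedComponent :=
    ConnectedComponent.map (Hom.ofLE le_sup_left) with hφ
  have hφmk : ∀ a : W, φ (G.connectedComponentMk a) = G'.connectedComponentMk a := fun a => rfl
  have hcard : ∀ d : G'.ConnectedComponent,
      (univ.filter fun c => φ c = d).card
        = if d = G'.connectedComponentMk u then 2 else 1 := by
    intro d
    induction d using ConnectedComponent.ind with
    | _ a =>
    by_cases hau : G'.Reachable a u
    · rw [if_pos (ConnectedComponent.sound hau)]
      have hset : (univ.filter fun c => φ c = G'.connectedComponentMk a) =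
          {G.connectedComponentMk u, G.connectedComponentMk v} := by
        ext c
        induction c using ConnectedComponent.ind with
        | _ b =>
        simp only [mem_filter, mem_univ, true_and, mem_insert, mem_singleton, hφmk,
          ConnectedComponent.eq]
        constructor
        · intro hba
          rcases (hchar b u).1 (hba.trans hau) with h1 | ⟨h1, h2⟩ | ⟨h1, h2⟩
          · exact Or.inl h1
          · exact Or.inl h1
          · exact Or.inr h1
        · rintro (h1 | h1)
          · exact (h1.mono (le_sup_left : G ≤ G')).trans hau.symm
          · exact ((h1.mono (le_sup_left : G ≤ G')).trans hadj.symm.reachable).trans hau.symm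
      rw [hset, card_insert_of_notMem, card_singleton]
      simp only [mem_singleton, ConnectedComponent.eq]
      exact h
    · rw [if_neg (fun hh => hau (ConnectedComponent.exact hh))]
      have hset : (univ.filter fun c => φ c = G'.connectedComponentMk a) =
          {G.connectedComponentMk a} := by
        ext c
        induction c using ConnectedComponent.ind with
        | _ b =>
        simp only [mem_filter, mem_univ, true_and, mem_singleton, hφmk,
          ConnectedComponent.eq]
        constructor
        · intro hba
          rcases (hchar b a).1 hba with h1 | ⟨h1, h2⟩ | ⟨h1, h2⟩
          · exact h1
          · exact absurd ((h2.mono (le_sup_left : G ≤ G')).symm.trans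
              hadj.symm.reachable) hau
          · exact absurd (h2.mono (le_sup_left : G ≤ G')).symm hau
        · exact fun h1 => h1.mono (le_sup_left : G ≤ G')
      rw [hset, card_singleton]
  have hsum : (univ : Finset G.ConnectedComponent).card
      = ∑ d : G'.ConnectedComponent, (univ.filter fun c => φ c = d).card :=
    card_eq_sum_card_fiberwise (fun c _ => mem_univ _)
  rw [kappaG, kappaG, Nat.card_eq_fintype_card, Nat.card_eq_fintype_card, ← Finset.card_univ,
    hsum]
  simp only [hcard]
  have h2 : ∀ x : G'.ConnectedComponent,
      (if x = G'.connectedComponentMk u then 2 else 1) = 1 + (if x = G'.connectedComponentMk u then 1 else 0) := by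
    intro x; split <;> rfl
  simp only [h2]
  rw [Finset.sum_add_distrib, Finset.sum_const, Finset.sum_ite_eq' univ
    (G'.connectedComponentMk u) (fun _ => 1), if_pos (mem_univ _)]
  simp [Finset.card_univ, mul_comm]

end GKSaux2

namespace GKSaux3
open GKSaux GKSaux2

variable {W : Type*} [Finite W] [DecidableEq W]

/-- number of components of the graph with edge set `s` -/
noncomputable def kappa (s : Finset (Sym2 W)) : ℕ :=
  kappaG (SimpleGraph.fromEdgeSet (↑s : Set (Sym2 W)))

lemma fromEdgeSet_insert' (e : Sym2 W) (s : Finset (Sym2 W)) (u v : W) (he : e = s(u, v)) :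
    SimpleGraph.fromEdgeSet (↑(insert e s) : Set (Sym2 W)) =
      SimpleGraph.fromEdgeSet (↑s : Set (Sym2 W)) ⊔ edge u v := by
  rw [Finset.coe_insert, Set.insert_eq, fromEdgeSet_union, he, sup_comm]
  rfl

lemma kappa_insert_le (e : Sym2 W) (s : Finset (Sym2 W)) : kappa (insert e s) ≤ kappa s := by
  induction e using Sym2.ind with
  | _ u v =>
  rw [kappa, kappa, fromEdgeSet_insert' _ s u v rfl]
  by_cases hr : (SimpleGraph.fromEdgeSet (↑s : Set (Sym2 W))).Reachable u v
  · rw [kappaG_sup_edge_of_reachable hr]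
  · rw [kappaG_eq_succ hr]; omega

lemma kappa_step (e : Sym2 W) {s t : Finset (Sym2 W)} (hst : s ⊆ t) :
    kappa t + kappa (insert e s) ≤ kappa s + kappa (insert e t) := by
  induction e using Sym2.ind with
  | _ u v =>
  have hmono : SimpleGraph.fromEdgeSet (↑s : Set (Sym2 W)) ≤
      SimpleGraph.fromEdgeSet (↑t : Set (Sym2 W)) :=
    SimpleGraph.fromEdgeSet_mono (Finset.coe_subset.mpr hst)
  rw [kappa, kappa, kappa, kappa, fromEdgeSet_insert' _ s u v rfl,
    fromEdgeSet_insert' _ t u v rfl]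
  by_cases hrs : (SimpleGraph.fromEdgeSet (↑s : Set (Sym2 W))).Reachable u v
  · rw [kappaG_sup_edge_of_reachable hrs, kappaG_sup_edge_of_reachable (hrs.mono hmono)]
    omega
  · have hs := kappaG_eq_succ hrs
    by_cases hrt : (SimpleGraph.fromEdgeSet (↑t : Set (Sym2 W))).Reachable u v
    · rw [kappaG_sup_edge_of_reachable hrt]
      omega
    · have ht := kappaG_eq_succ hrt
      omega

lemma kappa_union_step (d : Finset (Sym2 W)) :
    ∀ {s t : Finset (Sym2 W)}, s ⊆ t →
      kappa t + kappa (s ∪ d) ≤ kappa s + kappa (t ∪ d) := by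
  classical
  induction d using Finset.induction with
  | empty => intro s t hst; simp only [Finset.union_empty]; omega
  | @insert a d ha ih =>
    intro s t hst
    rw [Finset.union_insert, Finset.union_insert]
    have h1 := kappa_step a (Finset.union_subset_union hst (Finset.Subset.refl d))
    have h2 := ih hst
    omega

lemma kappa_supermodular (s t : Finset (Sym2 W)) :
    kappa s + kappa t ≤ kappa (s ∩ t) + kappa (s ∪ t) := by
  classical
  have := kappa_union_step s (Finset.inter_subset_right : s ∩ t ⊆ t)
  rwa [Finset.union_comm (s ∩ t) s, Finset.union_eq_left.mpr Finset.inter_subset_left,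
    Finset.union_comm t s, Nat.add_comm (kappa t)] at this

end GKSaux3

namespace GKSmain
open GKSaux GKSaux2 GKSaux3

variable {V : Type*} [Fintype V] [DecidableEq V]

/-- edges on `Option V` : real edges plus ghost edges -/
def ghostEdges (x : Finset (Sym2 V) × Finset V) : Finset (Sym2 (Option V)) :=
  x.1.image (Sym2.map some) ∪ x.2.image (fun v => s(none, some v))

/-- the FK graph with ghost vertex -/
def GG (x : Finset (Sym2 V) × Finset V) : SimpleGraph (Option V) :=
  SimpleGraph.fromEdgeSet (↑(ghostEdges x) : Set (Sym2 (Option V)))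

noncomputable local instance (G : SimpleGraph (Option V)) : Fintype G.ConnectedComponent :=
  Fintype.ofFinite _

noncomputable local instance (G : SimpleGraph (Option V)) : DecidableEq G.ConnectedComponent :=
  Classical.decEq _

lemma ghostEdges_mono {x y : Finset (Sym2 V) × Finset V} (h : x ≤ y) :
    ghostEdges x ⊆ ghostEdges y :=
  Finset.union_subset_union (Finset.image_subset_image h.1) (Finset.image_subset_image h.2)

lemma GG_mono {x y : Finset (Sym2 V) × Finset V} (h : x ≤ y) : GG x ≤ GG y :=
  SimpleGraph.fromEdgeSet_mono (Finset.coe_subset.mpr (ghostEdges_mono h))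

lemma ghostEdges_sup (x y : Finset (Sym2 V) × Finset V) :
    ghostEdges (x ⊔ y) = ghostEdges x ∪ ghostEdges y := by
  simp only [ghostEdges, Prod.fst_sup, Prod.snd_sup, Finset.sup_eq_union, Finset.image_union]
  ac_rfl

lemma ghost_disj (F : Finset (Sym2 V)) (U : Finset V) :
    Disjoint (F.image (Sym2.map some)) (U.image (fun v => s((none : Option V), some v))) := by
  rw [Finset.disjoint_left]
  rintro e he he'
  obtain ⟨e', _, rfl⟩ := Finset.mem_image.mp he
  obtain ⟨v, _, hv⟩ := Finset.mem_image.mp he'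
  have : (none : Option V) ∈ Sym2.map some e' := by rw [← hv]; exact Sym2.mem_mk_left _ _
  obtain ⟨w, _, hw⟩ := Sym2.mem_map.mp this
  exact Option.some_ne_none w hw

lemma ghostEdges_inf (x y : Finset (Sym2 V) × Finset V) :
    ghostEdges (x ⊓ y) = ghostEdges x ∩ ghostEdges y := by
  have hinj1 : Function.Injective (Sym2.map (some : V → Option V)) :=
    Sym2.map.injective (Option.some_injective V)
  have hinj2 : Function.Injective (fun v : V => s((none : Option V), some v)) := by
    intro a b hab
    simp only [Sym2.eq_iff] at hab
    rcases hab with ⟨-, h⟩ | ⟨h, -⟩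
    · exact Option.some_injective V h
    · exact absurd h.symm (Option.some_ne_none b)
  simp only [ghostEdges, Prod.fst_inf, Prod.snd_inf, Finset.inf_eq_inter]
  rw [Finset.image_inter _ _ hinj1, Finset.image_inter _ _ hinj2]
  ext e
  simp only [Finset.mem_union, Finset.mem_inter]
  have d1 := Finset.disjoint_left.mp (ghost_disj x.1 y.2)
  have d2 := Finset.disjoint_left.mp (ghost_disj y.1 x.2)
  tauto

variable (q : ℕ) [NeZero q]

/-- the angular spin function -/
noncomputable def ff : Fin q → ℂ := fun z => Complex.exp (2 * Real.pi * Complex.I * (z : ℕ) / q)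

lemma ff_eq (z : Fin q) :
    ff q z = Complex.exp (2 * Real.pi * Complex.I / q) ^ (z : ℕ) := by
  rw [← Complex.exp_nat_mul, ff]
  ring_nf

lemma ff_zero : ff q 0 = 1 := by
  have : ((0 : Fin q) : ℕ) = 0 := Fin.val_zero q
  rw [ff, this]
  simp

lemma zeta_sum (M : ℕ) :
    ∑ z : Fin q, (ff q z) ^ M = if q ∣ M then (q : ℂ) else 0 := by
  have hq : q ≠ 0 := NeZero.ne q
  have hprim := Complex.isPrimitiveRoot_exp q hq
  set ζ : ℂ := Complex.exp (2 * Real.pi * Complex.I / q) with hζ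
  have hz : ∀ z : Fin q, (ff q z) ^ M = (ζ ^ M) ^ (z : ℕ) := by
    intro z
    rw [ff_eq, ← pow_mul, ← pow_mul, Nat.mul_comm]
  simp only [hz]
  rw [Fin.sum_univ_eq_sum_range (fun i => (ζ ^ M) ^ i) q]
  by_cases hd : q ∣ M
  · rw [if_pos hd, (hprim.pow_eq_one_iff_dvd M).mpr hd]
    simp
  · rw [if_neg hd]
    have hne : ζ ^ M ≠ 1 := fun hh => hd ((hprim.pow_eq_one_iff_dvd M).mp hh)
    rw [geom_sum_eq hne]
    have : (ζ ^ M) ^ q = 1 := by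
      rw [← pow_mul, Nat.mul_comm, pow_mul, hprim.pow_eq_one, one_pow]
    rw [this, sub_self, zero_div]

/-- spin configuration extended to the ghost -/
def extSpin (σ : V → Fin q) : Option V → Fin q := fun o => o.elim 0 σ

/-- compatibility of a spin configuration with an FK configuration -/
def compat (x : Finset (Sym2 V) × Finset V) (σ : V → Fin q) : Prop :=
  (∀ a b : V, s(a, b) ∈ x.1 → σ a = σ b) ∧ ∀ v ∈ x.2, σ v = 0

instance (x : Finset (Sym2 V) × Finset V) (σ : V → Fin q) : Decidable (compat q x σ) := by
  unfold compat; infer_instance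

lemma compat_adj {x : Finset (Sym2 V) × Finset V} {σ : V → Fin q} (hc : compat q x σ)
    ⦃a b : Option V⦄ (hab : (GG x).Adj a b) : extSpin q σ a = extSpin q σ b := by
  rw [GG, SimpleGraph.fromEdgeSet_adj] at hab
  obtain ⟨hmem, hne⟩ := hab
  rw [Finset.mem_coe, ghostEdges, Finset.mem_union] at hmem
  rcases hmem with hmem | hmem
  · obtain ⟨e', he', heq⟩ := Finset.mem_image.mp hmem
    induction e' using Sym2.ind with
    | _ c d =>
    rw [Sym2.map_pair_eq, Sym2.eq_iff] at heq
    have hcd : σ c = σ d := hc.1 c d he'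
    rcases heq with ⟨rfl, rfl⟩ | ⟨rfl, rfl⟩
    · exact hcd
    · exact hcd.symm
  · obtain ⟨v, hv, heq⟩ := Finset.mem_image.mp hmem
    rw [Sym2.eq_iff] at heq
    have h0 : σ v = 0 := hc.2 v hv
    rcases heq with ⟨rfl, rfl⟩ | ⟨rfl, rfl⟩
    · exact h0.symm
    · exact h0

lemma compat_reach {x : Finset (Sym2 V) × Finset V} {σ : V → Fin q} (hc : compat q x σ)
    {a b : Option V} (h : (GG x).Reachable a b) : extSpin q σ a = extSpin q σ b :=
  reach_const (compat_adj q hc) h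

/-- fiber of a connected component -/
noncomputable def fib (x : Finset (Sym2 V) × Finset V) (C : (GG x).ConnectedComponent) : Finset V :=
  univ.filter (fun v => (GG x).connectedComponentMk (some v) = C)

/-- total multiplicity in a component -/
noncomputable def Mfib (x : Finset (Sym2 V) × Finset V) (m : V → ℕ) (C : (GG x).ConnectedComponent) : ℕ :=
  ∑ v ∈ fib x C, m v

/-- value of the spin sum for one FK configuration -/
noncomputable def gval (m : V → ℕ) (x : Finset (Sym2 V) × Finset V) : ℝ :=
  ∏ C ∈ univ.erase ((GG x).connectedComponentMk none),
    (if q ∣ Mfib x m C then (q : ℝ) else 0)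

lemma gval_nonneg (m : V → ℕ) (x : Finset (Sym2 V) × Finset V) : 0 ≤ gval q m x :=
  Finset.prod_nonneg fun C _ => by positivity

/-- factor function -/
noncomputable def tfun (m : V → ℕ) (x : Finset (Sym2 V) × Finset V)
    (C : (GG x).ConnectedComponent) (z : Fin q) : ℂ :=
  if C = (GG x).connectedComponentMk none then (if z = 0 then 1 else 0)
  else (ff q z) ^ (Mfib x m C)

lemma tfun_self (m : V → ℕ) (x : Finset (Sym2 V) × Finset V) (z : Fin q) :
    tfun q m x ((GG x).connectedComponentMk none) z = if z = 0 then 1 else 0 := by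
  rw [tfun, if_pos rfl]

lemma tfun_ne (m : V → ℕ) (x : Finset (Sym2 V) × Finset V) {C : (GG x).ConnectedComponent}
    (hC : C ≠ (GG x).connectedComponentMk none) (z : Fin q) :
    tfun q m x C z = (ff q z) ^ (Mfib x m C) := by
  rw [tfun, if_neg hC]

lemma spin_sum_eval (m : V → ℕ) (x : Finset (Sym2 V) × Finset V) :
    ∑ σ : V → Fin q, (if compat q x σ then (1 : ℂ) else 0) * ∏ v, (ff q (σ v)) ^ (m v)
      = ((gval q m x : ℝ) : ℂ) := by
  classical
  set c₀ : (GG x).ConnectedComponent := (GG x).connectedComponentMk none with hc₀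
  -- step 1 : restrict to compatible configurations
  have step1 : ∑ σ : V → Fin q, (if compat q x σ then (1 : ℂ) else 0) * ∏ v, (ff q (σ v)) ^ (m v)
      = ∑ σ ∈ univ.filter (compat q x), ∏ v, (ff q (σ v)) ^ (m v) := by
    rw [Finset.sum_filter]
    exact Finset.sum_congr rfl fun σ _ => by split <;> simp
  -- step 2 : reindex by functions on components
  have step2 : ∑ σ ∈ univ.filter (compat q x), ∏ v, (ff q (σ v)) ^ (m v)
      = ∑ g ∈ univ.filter (fun g : (GG x).ConnectedComponent → Fin q => g c₀ = 0),
          ∏ v, (ff q (g ((GG x).connectedComponentMk (some v)))) ^ (m v) := by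
    refine Finset.sum_bij'
      (fun σ hσ => fun C => ConnectedComponent.lift (extSpin q σ)
        (fun v w p _ => compat_reach q (Finset.mem_filter.mp hσ).2 p.reachable) C)
      (fun g _ => fun v => g ((GG x).connectedComponentMk (some v))) ?_ ?_ ?_ ?_ ?_
    · intro σ hσ
      simp only [Finset.mem_filter, Finset.mem_univ, true_and, hc₀,
        ConnectedComponent.lift_mk]
      rfl
    · intro g hg
      simp only [Finset.mem_filter, Finset.mem_univ, true_and] at hg ⊢
      constructor
      · intro a b hab
        rcases eq_or_ne a b with rfl | hne
        · rfl
        · have hadj : (GG x).Adj (some a) (some b) := by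
            rw [GG, SimpleGraph.fromEdgeSet_adj]
            refine ⟨?_, fun hh => hne (Option.some_injective V hh)⟩
            rw [Finset.mem_coe, ghostEdges, Finset.mem_union]
            exact Or.inl (Finset.mem_image.mpr ⟨s(a, b), hab, Sym2.map_pair_eq _ _ _⟩)
          show g ((GG x).connectedComponentMk (some a)) = g ((GG x).connectedComponentMk (some b))
          rw [ConnectedComponent.connectedComponentMk_eq_of_adj hadj]
      · intro v hv
        have hadj : (GG x).Adj none (some v) := by
          rw [GG, SimpleGraph.fromEdgeSet_adj]
          refine ⟨?_, fun hh => Option.some_ne_none v hh.symm⟩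
          rw [Finset.mem_coe, ghostEdges, Finset.mem_union]
          exact Or.inr (Finset.mem_image.mpr ⟨v, hv, rfl⟩)
        show g ((GG x).connectedComponentMk (some v)) = 0
        rw [← ConnectedComponent.connectedComponentMk_eq_of_adj hadj, ← hc₀, hg]
    · intro σ hσ
      funext v
      simp [extSpin]
    · intro g hg
      funext C
      induction C using ConnectedComponent.ind with
      | _ a =>
      match a with
      | some v => simp [extSpin]
      | none =>
        simp only [ConnectedComponent.lift_mk, extSpin, Option.elim]
        exact ((Finset.mem_filter.mp hg).2).symm
    · intro σ hσ
      exact Finset.prod_congr rfl fun v _ => by simp [extSpin]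
  -- step 3 : group the product by components
  have step3 : ∀ g : (GG x).ConnectedComponent → Fin q,
      ∏ v, (ff q (g ((GG x).connectedComponentMk (some v)))) ^ (m v)
        = ∏ C : (GG x).ConnectedComponent, (ff q (g C)) ^ (Mfib x m C) := by
    intro g
    rw [← Finset.prod_fiberwise_of_maps_to
      (fun v _ => mem_univ ((GG x).connectedComponentMk (some v)))
      (fun v => (ff q (g ((GG x).connectedComponentMk (some v)))) ^ (m v))]
    refine Finset.prod_congr rfl fun C _ => ?_
    rw [Mfib, fib, ← Finset.prod_pow_eq_pow_sum]
    exact Finset.prod_congr rfl fun v hv => by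
      rw [(Finset.mem_filter.mp hv).2]
  -- step 4+5 : unconstrained sum and factorization
  have step4 : ∑ g ∈ univ.filter (fun g : (GG x).ConnectedComponent → Fin q => g c₀ = 0),
      ∏ C : (GG x).ConnectedComponent, (ff q (g C)) ^ (Mfib x m C)
      = ∑ g : (GG x).ConnectedComponent → Fin q, ∏ C, tfun q m x C (g C) := by
    rw [← Finset.sum_filter_add_sum_filter_not univ
      (fun g : (GG x).ConnectedComponent → Fin q => g c₀ = 0)
      (fun g => ∏ C, tfun q m x C (g C))]
    have hz : ∑ g ∈ univ.filter
        (fun g : (GG x).ConnectedComponent → Fin q => ¬ g c₀ = 0),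
        ∏ C, tfun q m x C (g C) = 0 := by
      refine Finset.sum_eq_zero fun g hg => ?_
      refine Finset.prod_eq_zero (mem_univ c₀) ?_
      rw [hc₀, tfun_self, if_neg (hc₀ ▸ (Finset.mem_filter.mp hg).2)]
    rw [hz, add_zero]
    refine Finset.sum_congr rfl fun g hg => ?_
    refine Finset.prod_congr rfl fun C _ => ?_
    by_cases hC : C = c₀
    · have hg0 : g ((GG x).connectedComponentMk none) = 0 := (Finset.mem_filter.mp hg).2
      rw [hC, hc₀, tfun_self, hg0, if_pos rfl, ff_zero, one_pow]
    · rw [tfun_ne q m x (hc₀ ▸ hC)]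
  have step5 : ∑ g : (GG x).ConnectedComponent → Fin q, ∏ C, tfun q m x C (g C)
      = ∏ C : (GG x).ConnectedComponent, ∑ z : Fin q, tfun q m x C z :=
    (Fintype.prod_sum (tfun q m x)).symm
  -- step 6 : evaluate the factors
  have step6 : ∏ C : (GG x).ConnectedComponent, ∑ z : Fin q, tfun q m x C z
      = ∏ C ∈ univ.erase c₀, (if q ∣ Mfib x m C then (q : ℂ) else 0) := by
    rw [← Finset.mul_prod_erase univ _ (mem_univ c₀)]
    have h1 : ∑ z : Fin q, tfun q m x c₀ z = 1 := by
      simp only [hc₀, tfun_self]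
      rw [Finset.sum_ite_eq' univ (0 : Fin q) (fun _ => (1 : ℂ)), if_pos (mem_univ _)]
    rw [h1, one_mul]
    refine Finset.prod_congr rfl fun C hC => ?_
    have hCne : C ≠ c₀ := (Finset.mem_erase.mp hC).1
    simp only [tfun_ne q m x (hc₀ ▸ hCne)]
    exact zeta_sum q (Mfib x m C)
  rw [step1, step2]
  rw [Finset.sum_congr rfl fun g _ => step3 g, step4, step5, step6, gval,
    Complex.ofReal_prod]
  exact Finset.prod_congr rfl fun C hC => by split <;> simp

lemma gval_eq_pow {m : V → ℕ} {x : Finset (Sym2 V) × Finset V}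
    (h : ∀ C ∈ univ.erase ((GG x).connectedComponentMk none), q ∣ Mfib x m C) :
    gval q m x = (q : ℝ) ^ (Fintype.card (GG x).ConnectedComponent - 1) := by
  rw [gval, Finset.prod_congr rfl (fun C hC => if_pos (h C hC)), Finset.prod_const,
    Finset.card_erase_of_mem (mem_univ _), Finset.card_univ]

lemma gval_dvd_of_ne_zero {m : V → ℕ} {x : Finset (Sym2 V) × Finset V}
    (h : gval q m x ≠ 0) :
    ∀ C ∈ univ.erase ((GG x).connectedComponentMk none), q ∣ Mfib x m C := by
  intro C hC
  by_contra hd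
  exact h (Finset.prod_eq_zero hC (if_neg hd))

lemma mem_fib {x : Finset (Sym2 V) × Finset V} {C : (GG x).ConnectedComponent} {v : V} :
    v ∈ fib x C ↔ (GG x).connectedComponentMk (some v) = C := by
  rw [fib, Finset.mem_filter]
  simp

lemma div_lemma {m : V → ℕ} {a c : Finset (Sym2 V) × Finset V} (hac : a ≤ c)
    {D : (GG c).ConnectedComponent} (hD : D ≠ (GG c).connectedComponentMk none)
    (h : ∀ C ∈ univ.erase ((GG a).connectedComponentMk none), q ∣ Mfib a m C) :
    q ∣ Mfib c m D := by
  classical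
  have hmono : GG a ≤ GG c := GG_mono hac
  set θ : V → (GG a).ConnectedComponent := fun v => (GG a).connectedComponentMk (some v) with hθ
  rw [Mfib, ← Finset.sum_fiberwise_of_maps_to
    (fun v hv => Finset.mem_image_of_mem θ hv) m]
  refine Finset.dvd_sum fun C hC => ?_
  obtain ⟨v₀, hv₀, hv₀C⟩ := Finset.mem_image.mp hC
  have hfull : (fib c D).filter (fun v => θ v = C) = fib a C := by
    ext v
    simp only [Finset.mem_filter, fib, mem_univ, true_and, hθ]
    constructor
    · rintro ⟨-, hvC⟩; exact hvC
    · intro hvC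
      refine ⟨?_, hvC⟩
      have hreach : (GG a).Reachable (some v) (some v₀) :=
        ConnectedComponent.exact (hvC.trans hv₀C.symm)
      have : (GG c).connectedComponentMk (some v) = (GG c).connectedComponentMk (some v₀) :=
        ConnectedComponent.sound (hreach.mono hmono)
      rw [this]
      exact mem_fib.mp hv₀
  have hCne : C ∈ univ.erase ((GG a).connectedComponentMk none) := by
    refine Finset.mem_erase.mpr ⟨?_, mem_univ _⟩
    rintro rfl
    have hreach : (GG a).Reachable (some v₀) none := ConnectedComponent.exact hv₀C
    have : (GG c).connectedComponentMk (some v₀) = (GG c).connectedComponentMk none :=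
      ConnectedComponent.sound (hreach.mono hmono)
    exact hD ((mem_fib.mp hv₀).symm.trans this)
  rw [hfull]
  exact h C hCne

lemma card_cc_pos (x : Finset (Sym2 V) × Finset V) :
    1 ≤ Fintype.card (GG x).ConnectedComponent :=
  Fintype.card_pos_iff.mpr ⟨(GG x).connectedComponentMk none⟩

lemma kappa_eq_card (x : Finset (Sym2 V) × Finset V) :
    kappa (ghostEdges x) = Fintype.card (GG x).ConnectedComponent := by
  rw [kappa, kappaG, Nat.card_eq_fintype_card]
  rfl

lemma gval_fkg (m₁ m₂ : V → ℕ) (a b : Finset (Sym2 V) × Finset V) :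
    gval q m₁ a * gval q m₂ b ≤
      gval q (fun _ => 0) (a ⊓ b) * gval q (fun v => m₁ v + m₂ v) (a ⊔ b) := by
  rcases eq_or_ne (gval q m₁ a) 0 with h1 | h1
  · rw [h1, zero_mul]
    exact mul_nonneg (gval_nonneg q _ _) (gval_nonneg q _ _)
  rcases eq_or_ne (gval q m₂ b) 0 with h2 | h2
  · rw [h2, mul_zero]
    exact mul_nonneg (gval_nonneg q _ _) (gval_nonneg q _ _)
  have hA := gval_dvd_of_ne_zero q h1
  have hB := gval_dvd_of_ne_zero q h2
  have hdiv : ∀ D ∈ univ.erase ((GG (a ⊔ b)).connectedComponentMk none),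
      q ∣ Mfib (a ⊔ b) (fun v => m₁ v + m₂ v) D := by
    intro D hD
    have hDne := (Finset.mem_erase.mp hD).1
    have : Mfib (a ⊔ b) (fun v => m₁ v + m₂ v) D
        = Mfib (a ⊔ b) m₁ D + Mfib (a ⊔ b) m₂ D := by
      rw [Mfib, Mfib, Mfib, ← Finset.sum_add_distrib]
    rw [this]
    exact dvd_add (div_lemma q le_sup_left hDne hA) (div_lemma q le_sup_right hDne hB)
  have hdiv0 : ∀ C ∈ univ.erase ((GG (a ⊓ b)).connectedComponentMk none),
      q ∣ Mfib (a ⊓ b) (fun _ => 0) C := by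
    intro C _
    have : Mfib (a ⊓ b) (fun _ => 0) C = 0 := by rw [Mfib]; exact Finset.sum_const_zero
    rw [this]
    exact dvd_zero q
  rw [gval_eq_pow q hA, gval_eq_pow q hB, gval_eq_pow q hdiv0, gval_eq_pow q hdiv,
    ← pow_add, ← pow_add]
  have hq1 : (1 : ℝ) ≤ (q : ℝ) := by
    have := Nat.one_le_iff_ne_zero.mpr (NeZero.ne q)
    exact_mod_cast this
  refine pow_le_pow_right₀ hq1 ?_
  have hsup := kappa_supermodular (ghostEdges a) (ghostEdges b)
  rw [← ghostEdges_inf, ← ghostEdges_sup, kappa_eq_card, kappa_eq_card, kappa_eq_card,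
    kappa_eq_card] at hsup
  have p1 := card_cc_pos a
  have p2 := card_cc_pos b
  have p3 := card_cc_pos (a ⊓ b)
  have p4 := card_cc_pos (a ⊔ b)
  omega

section Expansion
variable (E : Finset (Sym2 V)) (J : Sym2 V → ℝ) (hh : V → ℝ)

/-- FK weight of a configuration -/
noncomputable def cC (x : Finset (Sym2 V) × Finset V) : ℝ :=
  if x.1 ⊆ E then (∏ e ∈ x.1, (Real.exp (J e) - 1)) * ∏ v ∈ x.2, (Real.exp (hh v) - 1)
  else 0

lemma cC_nonneg (hJ : ∀ e ∈ E, 0 ≤ J e) (hhn : ∀ v : V, 0 ≤ hh v)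
    (x : Finset (Sym2 V) × Finset V) : 0 ≤ cC E J hh x := by
  rw [cC]
  split
  · refine mul_nonneg (Finset.prod_nonneg fun e he => ?_) (Finset.prod_nonneg fun v _ => ?_)
    · exact sub_nonneg.mpr (Real.one_le_exp (hJ e (by tauto)))
    · exact sub_nonneg.mpr (Real.one_le_exp (hhn v))
  · exact le_refl 0

lemma edgeDelta_pair (σ : V → Fin q) (a b : V) :
    edgeDelta σ s(a, b) = if σ a = σ b then 1 else 0 :=
  rfl

lemma delta_prod (σ : V → Fin q) (x : Finset (Sym2 V) × Finset V) :
    (∏ e ∈ x.1, edgeDelta σ e) * (∏ v ∈ x.2, if σ v = 0 then (1 : ℝ) else 0)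
      = if compat q x σ then 1 else 0 := by
  by_cases hc : compat q x σ
  · rw [if_pos hc]
    rw [Finset.prod_congr rfl (fun e he => ?_), Finset.prod_congr rfl
      (fun v hv => if_pos (hc.2 v hv)), Finset.prod_const_one, Finset.prod_const_one, one_mul]
    · induction e using Sym2.ind with
      | _ a b => rw [edgeDelta_pair, if_pos (hc.1 a b he)]
  · rw [if_neg hc]
    rw [compat, not_and_or] at hc
    rcases hc with hc | hc
    · push_neg at hc
      obtain ⟨a, b, hab, hne⟩ := hc
      rw [Finset.prod_eq_zero hab (by rw [edgeDelta_pair, if_neg hne]), zero_mul]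
    · push_neg at hc
      obtain ⟨v, hv, hne⟩ := hc
      rw [Finset.prod_eq_zero hv (show (if σ v = 0 then (1:ℝ) else 0) = 0 from if_neg hne), mul_zero]

lemma weight_expand (σ : V → Fin q) :
    pottsWeight q E J hh σ
      = ∑ x : Finset (Sym2 V) × Finset V, cC E J hh x * (if compat q x σ then 1 else 0) := by
  classical
  have hW : pottsWeight q E J hh σ
      = (∏ e ∈ E, Real.exp (J e * edgeDelta σ e))
        * ∏ v : V, Real.exp (hh v * (if σ v = 0 then 1 else 0)) := by
    rw [pottsWeight, Real.exp_add, Real.exp_sum, Real.exp_sum]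
  have hfac1 : ∀ e ∈ E, Real.exp (J e * edgeDelta σ e)
      = (Real.exp (J e) - 1) * edgeDelta σ e + 1 := by
    intro e _
    induction e using Sym2.ind with
    | _ a b =>
    rw [edgeDelta_pair]
    split
    · rw [mul_one, mul_one]; ring
    · rw [mul_zero, mul_zero, Real.exp_zero]; ring
  have hfac2 : ∀ v : V, Real.exp (hh v * (if σ v = 0 then 1 else 0))
      = (Real.exp (hh v) - 1) * (if σ v = 0 then 1 else 0) + 1 := by
    intro v
    split
    · rw [mul_one, mul_one]; ring
    · rw [mul_zero, mul_zero, Real.exp_zero]; ring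
  rw [hW, Finset.prod_congr rfl hfac1, Finset.prod_congr rfl fun v _ => hfac2 v,
    Finset.prod_add, Finset.prod_add]
  simp only [Finset.prod_const_one, mul_one]
  rw [Finset.sum_mul_sum]
  rw [← Finset.sum_product']
  rw [← Finset.sum_subset (Finset.subset_univ (E.powerset ×ˢ (univ : Finset V).powerset))
    (f := fun x : Finset (Sym2 V) × Finset V =>
      cC E J hh x * (if compat q x σ then 1 else 0))]
  · refine Finset.sum_congr rfl fun x hx => ?_
    have hxE : x.1 ⊆ E := Finset.mem_powerset.mp (Finset.mem_product.mp hx).1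
    rw [cC, if_pos hxE, Finset.prod_mul_distrib, Finset.prod_mul_distrib]
    rw [← delta_prod q σ x]
    ring
  · intro x _ hx
    have : ¬ x.1 ⊆ E := by
      intro hsub
      exact hx (Finset.mem_product.mpr ⟨Finset.mem_powerset.mpr hsub,
        Finset.mem_powerset.mpr (Finset.subset_univ _)⟩)
    rw [cC, if_neg this, zero_mul]

lemma main_expand (m : V → ℕ) :
    ∑ σ : V → Fin q, ((pottsWeight q E J hh σ : ℝ) : ℂ) * ∏ v, ff q (σ v) ^ m v
      = ((∑ x : Finset (Sym2 V) × Finset V, cC E J hh x * gval q m x : ℝ) : ℂ) := by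
  classical
  have : ∀ σ : V → Fin q, ((pottsWeight q E J hh σ : ℝ) : ℂ)
      = ∑ x : Finset (Sym2 V) × Finset V,
          ((cC E J hh x : ℝ) : ℂ) * (if compat q x σ then 1 else 0) := by
    intro σ
    rw [weight_expand q E J hh σ]
    push_cast
    refine Finset.sum_congr rfl fun x _ => ?_
    split <;> simp
  simp only [this, Finset.sum_mul]
  rw [Finset.sum_comm]
  rw [Complex.ofReal_sum]
  refine Finset.sum_congr rfl fun x _ => ?_
  rw [Complex.ofReal_mul, ← spin_sum_eval q m x, Finset.mul_sum]
  refine Finset.sum_congr rfl fun σ _ => ?_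
  ring

lemma Z_expand :
    pottsZ q E J hh = ∑ x : Finset (Sym2 V) × Finset V, cC E J hh x * gval q (fun _ => 0) x := by
  have hme := main_expand q E J hh (fun _ => 0)
  simp only [pow_zero, Finset.prod_const_one, mul_one] at hme
  have hL : ∑ σ : V → Fin q, ((pottsWeight q E J hh σ : ℝ) : ℂ) = ((pottsZ q E J hh : ℝ) : ℂ) := by
    rw [pottsZ]
    push_cast
    rfl
  rw [hL] at hme
  exact_mod_cast hme

lemma Z_pos : 0 < pottsZ q E J hh :=
  Finset.sum_pos (fun σ _ => Real.exp_pos _) ⟨fun _ => 0, mem_univ _⟩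

/-- indicator multiplicity -/
def indR (R : Finset V) : V → ℕ := fun v => if v ∈ R then 1 else 0

lemma prod_ind (σ : V → Fin q) (R : Finset V) :
    ∏ v, ff q (σ v) ^ (indR R v) = ∏ v ∈ R, ff q (σ v) := by
  have h1 : ∀ v : V, ff q (σ v) ^ (indR R v) = if v ∈ R then ff q (σ v) else 1 := by
    intro v
    rw [indR]
    split
    · rw [pow_one]
    · rw [pow_zero]
  rw [Finset.prod_congr rfl fun v _ => h1 v, ← Finset.prod_filter, Finset.filter_univ_mem]

lemma UZ_nonneg (hJ : ∀ e ∈ E, 0 ≤ J e) (hhn : ∀ v : V, 0 ≤ hh v) (m : V → ℕ) :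
    0 ≤ ∑ x : Finset (Sym2 V) × Finset V, cC E J hh x * gval q m x :=
  Finset.sum_nonneg fun x _ => mul_nonneg (cC_nonneg E J hh hJ hhn x) (gval_nonneg q m x)

lemma mean_eq (R : Finset V) :
    pottsMean q E J hh (fun z : Fin q => Complex.exp (2 * Real.pi * Complex.I * (z : ℕ) / q)) R
      = (((∑ x : Finset (Sym2 V) × Finset V, cC E J hh x * gval q (indR R) x)
          / pottsZ q E J hh : ℝ) : ℂ) := by
  rw [pottsMean]
  have hstep : ∀ σ : V → Fin q,
      ((pottsPMF q E J hh σ : ℝ) : ℂ) * ∏ v ∈ R,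
        Complex.exp (2 * Real.pi * Complex.I * ((σ v : ℕ) : ℂ) / q)
      = (((pottsZ q E J hh : ℝ) : ℂ))⁻¹ * (((pottsWeight q E J hh σ : ℝ) : ℂ)
          * ∏ v, ff q (σ v) ^ (indR R v)) := by
    intro σ
    rw [prod_ind, pottsPMF]
    have : ∀ v ∈ R, Complex.exp (2 * Real.pi * Complex.I * ((σ v : ℕ) : ℂ) / q) = ff q (σ v) :=
      fun v _ => rfl
    rw [Finset.prod_congr rfl this]
    push_cast
    ring
  rw [Finset.sum_congr rfl fun σ _ => hstep σ, ← Finset.mul_sum, main_expand q E J hh (indR R)]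
  rw [div_eq_inv_mul]
  push_cast
  ring

lemma mean2_eq (R S : Finset V) :
    pottsMean2 q E J hh (fun z : Fin q => Complex.exp (2 * Real.pi * Complex.I * (z : ℕ) / q))
        (fun z : Fin q => Complex.exp (2 * Real.pi * Complex.I * (z : ℕ) / q)) R S
      = (((∑ x : Finset (Sym2 V) × Finset V,
            cC E J hh x * gval q (fun v => indR R v + indR S v) x)
          / pottsZ q E J hh : ℝ) : ℂ) := by
  rw [pottsMean2]
  have hstep : ∀ σ : V → Fin q,
      ((pottsPMF q E J hh σ : ℝ) : ℂ) *
        ((∏ v ∈ R, Complex.exp (2 * Real.pi * Complex.I * ((σ v : ℕ) : ℂ) / q)) *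
          ∏ v ∈ S, Complex.exp (2 * Real.pi * Complex.I * ((σ v : ℕ) : ℂ) / q))
      = (((pottsZ q E J hh : ℝ) : ℂ))⁻¹ * (((pottsWeight q E J hh σ : ℝ) : ℂ)
          * ∏ v, ff q (σ v) ^ (indR R v + indR S v)) := by
    intro σ
    have hsplit : ∏ v, ff q (σ v) ^ (indR R v + indR S v)
        = (∏ v, ff q (σ v) ^ (indR R v)) * ∏ v, ff q (σ v) ^ (indR S v) := by
      rw [← Finset.prod_mul_distrib]
      exact Finset.prod_congr rfl fun v _ => pow_add _ _ _
    rw [hsplit, prod_ind, prod_ind, pottsPMF]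
    have hR : ∀ v ∈ R, Complex.exp (2 * Real.pi * Complex.I * ((σ v : ℕ) : ℂ) / q) = ff q (σ v) :=
      fun v _ => rfl
    have hS : ∀ v ∈ S, Complex.exp (2 * Real.pi * Complex.I * ((σ v : ℕ) : ℂ) / q) = ff q (σ v) :=
      fun v _ => rfl
    rw [Finset.prod_congr rfl hR, Finset.prod_congr rfl hS]
    push_cast
    ring
  rw [Finset.sum_congr rfl fun σ _ => hstep σ, ← Finset.mul_sum,
    main_expand q E J hh (fun v => indR R v + indR S v)]
  rw [div_eq_inv_mul]
  push_cast
  ring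

lemma pointwise_ffour (hJ : ∀ e ∈ E, 0 ≤ J e) (hhn : ∀ v : V, 0 ≤ hh v) (m₁ m₂ : V → ℕ)
    (a b : Finset (Sym2 V) × Finset V) :
    (cC E J hh a * gval q m₁ a) * (cC E J hh b * gval q m₂ b)
      ≤ (cC E J hh (a ⊓ b) * gval q (fun _ => 0) (a ⊓ b))
        * (cC E J hh (a ⊔ b) * gval q (fun v => m₁ v + m₂ v) (a ⊔ b)) := by
  have hRHS : 0 ≤ (cC E J hh (a ⊓ b) * gval q (fun _ => 0) (a ⊓ b))
      * (cC E J hh (a ⊔ b) * gval q (fun v => m₁ v + m₂ v) (a ⊔ b)) :=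
    mul_nonneg (mul_nonneg (cC_nonneg E J hh hJ hhn _) (gval_nonneg q _ _))
      (mul_nonneg (cC_nonneg E J hh hJ hhn _) (gval_nonneg q _ _))
  by_cases hab : a.1 ⊆ E ∧ b.1 ⊆ E
  · have hcc : cC E J hh a * cC E J hh b = cC E J hh (a ⊓ b) * cC E J hh (a ⊔ b) := by
      have hi : (a ⊓ b).1 ⊆ E := by
        rw [Prod.fst_inf, Finset.inf_eq_inter]
        exact Finset.Subset.trans Finset.inter_subset_left hab.1
      have hu : (a ⊔ b).1 ⊆ E := by
        rw [Prod.fst_sup, Finset.sup_eq_union]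
        exact Finset.union_subset hab.1 hab.2
      rw [cC, cC, cC, cC, if_pos hab.1, if_pos hab.2, if_pos hi, if_pos hu,
        Prod.fst_inf, Prod.snd_inf, Prod.fst_sup, Prod.snd_sup, Finset.inf_eq_inter,
        Finset.sup_eq_union, Finset.inf_eq_inter, Finset.sup_eq_union]
      have h1 := Finset.prod_union_inter (s₁ := a.1) (s₂ := b.1)
        (f := fun e => Real.exp (J e) - 1)
      have h2 := Finset.prod_union_inter (s₁ := a.2) (s₂ := b.2)
        (f := fun v => Real.exp (hh v) - 1)
      calc (∏ e ∈ a.1, (Real.exp (J e) - 1)) * (∏ v ∈ a.2, (Real.exp (hh v) - 1)) *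
            ((∏ e ∈ b.1, (Real.exp (J e) - 1)) * ∏ v ∈ b.2, (Real.exp (hh v) - 1))
          = ((∏ e ∈ a.1 ∪ b.1, (Real.exp (J e) - 1)) * ∏ e ∈ a.1 ∩ b.1, (Real.exp (J e) - 1)) *
            ((∏ v ∈ a.2 ∪ b.2, (Real.exp (hh v) - 1)) * ∏ v ∈ a.2 ∩ b.2, (Real.exp (hh v) - 1)) := by
            rw [h1, h2]; ring
        _ = _ := by ring
    have hkey := gval_fkg q m₁ m₂ a b
    have hccn : 0 ≤ cC E J hh a * cC E J hh b :=
      mul_nonneg (cC_nonneg E J hh hJ hhn a) (cC_nonneg E J hh hJ hhn b)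
    calc (cC E J hh a * gval q m₁ a) * (cC E J hh b * gval q m₂ b)
        = (cC E J hh a * cC E J hh b) * (gval q m₁ a * gval q m₂ b) := by ring
      _ ≤ (cC E J hh a * cC E J hh b) *
            (gval q (fun _ => 0) (a ⊓ b) * gval q (fun v => m₁ v + m₂ v) (a ⊔ b)) :=
          mul_le_mul_of_nonneg_left hkey hccn
      _ = _ := by rw [hcc]; ring
  · rw [not_and_or] at hab
    rcases hab with hab | hab
    · have h0 : cC E J hh a = 0 := by rw [cC, if_neg hab]
      rw [h0, zero_mul, zero_mul]
      exact hRHS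
    · have h0 : cC E J hh b = 0 := by rw [cC, if_neg hab]
      rw [h0, zero_mul, mul_zero]
      exact hRHS

lemma four_conclusion (hJ : ∀ e ∈ E, 0 ≤ J e) (hhn : ∀ v : V, 0 ≤ hh v) (m₁ m₂ : V → ℕ) :
    (∑ x : Finset (Sym2 V) × Finset V, cC E J hh x * gval q m₁ x)
      * (∑ x : Finset (Sym2 V) × Finset V, cC E J hh x * gval q m₂ x)
    ≤ (∑ x : Finset (Sym2 V) × Finset V, cC E J hh x * gval q (fun _ => 0) x)
      * (∑ x : Finset (Sym2 V) × Finset V, cC E J hh x * gval q (fun v => m₁ v + m₂ v) x) := by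
  refine four_functions_theorem_univ
    (fun x => cC E J hh x * gval q m₁ x) (fun x => cC E J hh x * gval q m₂ x)
    (fun x => cC E J hh x * gval q (fun _ => 0) x)
    (fun x => cC E J hh x * gval q (fun v => m₁ v + m₂ v) x)
    (fun x => mul_nonneg (cC_nonneg E J hh hJ hhn x) (gval_nonneg q _ x))
    (fun x => mul_nonneg (cC_nonneg E J hh hJ hhn x) (gval_nonneg q _ x))
    (fun x => mul_nonneg (cC_nonneg E J hh hJ hhn x) (gval_nonneg q _ x))
    (fun x => mul_nonneg (cC_nonneg E J hh hJ hhn x) (gval_nonneg q _ x))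
    (fun a b => pointwise_ffour q E J hh hJ hhn m₁ m₂ a b)

end Expansion

end GKSmain
end Aux

/-- GKS inequalities for angular spins: for `f(x) = e^{2πix/q}`, the means
`⟨f(σ)^R⟩`, `⟨f(σ)^S⟩`, `⟨f(σ)^R f(σ)^S⟩` are real, `⟨f(σ)^R⟩ ≥ 0`, and
`⟨f(σ)^R f(σ)^S⟩ ≥ ⟨f(σ)^R⟩ ⟨f(σ)^S⟩`. -/
theorem gks_angular_spins
    (q : ℕ) [NeZero q] (hq : 2 ≤ q)
    (E : Finset (Sym2 V)) (hE : ∀ e ∈ E, ¬ e.IsDiag)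
    (J : Sym2 V → ℝ) (hJ : ∀ e ∈ E, 0 ≤ J e)
    (h : V → ℝ) (hh : ∀ v : V, 0 ≤ h v)
    (R S : Finset V) :
    (pottsMean q E J h (fun x : Fin q =>
        Complex.exp (2 * Real.pi * Complex.I * (x : ℕ) / q)) R).im = 0 ∧
    (pottsMean q E J h (fun x : Fin q =>
        Complex.exp (2 * Real.pi * Complex.I * (x : ℕ) / q)) S).im = 0 ∧
    (pottsMean2 q E J h (fun x : Fin q =>
        Complex.exp (2 * Real.pi * Complex.I * (x : ℕ) / q))
      (fun x : Fin q => Complex.exp (2 * Real.pi * Complex.I * (x : ℕ) / q)) R S).im = 0 ∧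
    0 ≤ (pottsMean q E J h (fun x : Fin q =>
        Complex.exp (2 * Real.pi * Complex.I * (x : ℕ) / q)) R).re ∧
    (pottsMean q E J h (fun x : Fin q =>
        Complex.exp (2 * Real.pi * Complex.I * (x : ℕ) / q)) R).re *
      (pottsMean q E J h (fun x : Fin q =>
        Complex.exp (2 * Real.pi * Complex.I * (x : ℕ) / q)) S).re ≤
    (pottsMean2 q E J h (fun x : Fin q =>
        Complex.exp (2 * Real.pi * Complex.I * (x : ℕ) / q))
      (fun x : Fin q => Complex.exp (2 * Real.pi * Complex.I * (x : ℕ) / q)) R S).re := by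
  classical
  have hmR := GKSmain.mean_eq q E J h R
  have hmS := GKSmain.mean_eq q E J h S
  have hm2 := GKSmain.mean2_eq q E J h R S
  rw [hmR, hmS, hm2]
  have hZ := GKSmain.Z_pos q E J h
  have hZe := GKSmain.Z_expand q E J h
  have h4 := GKSmain.four_conclusion q E J h hJ hh (GKSmain.indR R) (GKSmain.indR S)
  have hnR := GKSmain.UZ_nonneg q E J h hJ hh (GKSmain.indR R)
  have hnS := GKSmain.UZ_nonneg q E J h hJ hh (GKSmain.indR S)
  have hn2 := GKSmain.UZ_nonneg q E J h hJ hh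
    (fun v => GKSmain.indR R v + GKSmain.indR S v)
  rw [← hZe] at h4
  refine ⟨Complex.ofReal_im _, Complex.ofReal_im _, Complex.ofReal_im _, ?_, ?_⟩
  · rw [Complex.ofReal_re]
    exact div_nonneg hnR hZ.le
  · simp only [Complex.ofReal_re]
    rw [div_mul_div_comm, div_le_div_iff₀ (by positivity) hZ]
    nlinarith [h4, hZ, hnR, hnS, hn2]
end
end

section
/- (Schonmann's positive correlation inequality.) For all R, S ⊆ V, the Potts measure satisfies π(σ_v = 0 for all v ∈ R ∪ S) ≥ π(σ_v = 0 for all v ∈ R) · π(σ_v = 0 for all v ∈ S). -/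
open Finset Relation

set_option linter.unusedSectionVars false
set_option linter.unusedVariables false
set_option maxHeartbeats 1000000
noncomputable section

variable {V : Type*} [Fintype V] [DecidableEq V]

namespace SchAux
variable {X : Type*} [Fintype X] [DecidableEq X]

def rel (P : Finset (Sym2 X)) (x y : X) : Prop := s(x, y) ∈ P

def st (P : Finset (Sym2 X)) : Setoid X := EqvGen.setoid (rel P)

abbrev Qt (P : Finset (Sym2 X)) : Type _ := Quotient (st P)

def mk (P : Finset (Sym2 X)) (x : X) : Qt P := Quotient.mk (st P) x

lemma mk_eq_mk {P : Finset (Sym2 X)} {x y : X} :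
    mk P x = mk P y ↔ EqvGen (rel P) x y :=
  ⟨fun h => Quotient.exact h, fun h => Quotient.sound h⟩

lemma eqv_mono {P P' : Finset (Sym2 X)} (h : P ⊆ P') {x y : X}
    (hxy : EqvGen (rel P) x y) : EqvGen (rel P') x y :=
  EqvGen.mono (fun a b hab => h hab) _ _ hxy

def k (P : Finset (Sym2 X)) : ℕ := Nat.card (Qt P)

def N (T : Finset X) (P : Finset (Sym2 X)) : ℕ :=
  Nat.card {c : Qt P // ∀ x ∈ T, mk P x ≠ c}

def qmap {P P' : Finset (Sym2 X)} (h : P ⊆ P') : Qt P → Qt P' :=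
  Quotient.map id (fun _ _ hxy => eqv_mono h hxy)

@[simp] lemma qmap_mk {P P' : Finset (Sym2 X)} (h : P ⊆ P') (x : X) :
    qmap h (mk P x) = mk P' x := rfl

lemma qmap_surjective {P P' : Finset (Sym2 X)} (h : P ⊆ P') :
    Function.Surjective (qmap h) := by
  intro c
  obtain ⟨x, rfl⟩ := Quotient.exists_rep c
  exact ⟨mk P x, rfl⟩

section InsertEdge
variable {P : Finset (Sym2 X)} {a b : X}

local notation "P'" => insert (s(a,b) : Sym2 X) P

lemma eqv_insert_iff {x y : X} :
    EqvGen (rel P') x y ↔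
      EqvGen (rel P) x y ∨ (EqvGen (rel P) x a ∧ EqvGen (rel P) b y)
        ∨ (EqvGen (rel P) x b ∧ EqvGen (rel P) a y) := by
  have e := EqvGen.is_equivalence (rel P)
  constructor
  · intro h
    induction h with
    | rel u v huv =>
      rcases Finset.mem_insert.1 huv with h | h
      · rw [Sym2.eq_iff] at h
        rcases h with ⟨rfl, rfl⟩ | ⟨rfl, rfl⟩
        · exact Or.inr (Or.inl ⟨e.refl _, e.refl _⟩)
        · exact Or.inr (Or.inr ⟨e.refl _, e.refl _⟩)
      · exact Or.inl (EqvGen.rel _ _ h)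
    | refl u => exact Or.inl (e.refl _)
    | symm u v _ ih =>
      rcases ih with h | ⟨h1, h2⟩ | ⟨h1, h2⟩
      · exact Or.inl (e.symm h)
      · exact Or.inr (Or.inr ⟨e.symm h2, e.symm h1⟩)
      · exact Or.inr (Or.inl ⟨e.symm h2, e.symm h1⟩)
    | trans u v w _ _ ih1 ih2 =>
      rcases ih1 with h | ⟨h1, h2⟩ | ⟨h1, h2⟩ <;>
        rcases ih2 with h' | ⟨h1', h2'⟩ | ⟨h1', h2'⟩
      · exact Or.inl (e.trans h h')
      · exact Or.inr (Or.inl ⟨e.trans h h1', h2'⟩)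
      · exact Or.inr (Or.inr ⟨e.trans h h1', h2'⟩)
      · exact Or.inr (Or.inl ⟨h1, e.trans h2 h'⟩)
      · exact Or.inr (Or.inl ⟨h1, h2'⟩)
      · exact Or.inl (e.trans h1 h2')
      · exact Or.inr (Or.inr ⟨h1, e.trans h2 h'⟩)
      · exact Or.inl (e.trans h1 h2')
      · exact Or.inr (Or.inr ⟨h1, h2'⟩)
  · intro h
    have hab : EqvGen (rel P') a b :=
      EqvGen.rel _ _ (Finset.mem_insert_self _ _)
    have e' := EqvGen.is_equivalence (rel P')
    have mono : ∀ {u v : X}, EqvGen (rel P) u v → EqvGen (rel P') u v :=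
      fun h => eqv_mono (Finset.subset_insert _ _) h
    rcases h with h | ⟨h1, h2⟩ | ⟨h1, h2⟩
    · exact mono h
    · exact e'.trans (mono h1) (e'.trans hab (mono h2))
    · exact e'.trans (mono h1) (e'.trans (e'.symm hab) (mono h2))

lemma st_insert_of_rel (hab : EqvGen (rel P) a b) : st P' = st P := by
  apply Setoid.ext
  intro x y
  show EqvGen (rel P') x y ↔ EqvGen (rel P) x y
  rw [eqv_insert_iff]
  have e := EqvGen.is_equivalence (rel P)
  constructor
  · rintro (h | ⟨h1, h2⟩ | ⟨h1, h2⟩)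
    · exact h
    · exact e.trans h1 (e.trans hab h2)
    · exact e.trans h1 (e.trans (e.symm hab) h2)
  · exact Or.inl

lemma k_insert_of_rel (hab : EqvGen (rel P) a b) : k P' = k P := by
  unfold k Qt
  rw [st_insert_of_rel hab]

lemma k_insert_le (p : Sym2 X) : k (insert p P) ≤ k P :=
  Nat.card_le_card_of_surjective _ (qmap_surjective (Finset.subset_insert _ _))

lemma k_insert_drop (hab : ¬ EqvGen (rel P) a b) : k P' + 1 ≤ k P := by
  classical
  have hsub : P ⊆ P' := Finset.subset_insert _ _
  have hsurj := qmap_surjective (X := X) hsub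
  set g : Qt P' → Qt P := Function.surjInv hsurj with hg
  have hgr : ∀ c, qmap hsub (g c) = c := fun c => Function.surjInv_eq hsurj c
  set g' : Qt P' → Qt P := fun c => if g c = mk P b then mk P a else g c with hg'
  have hab' : mk P' a = mk P' b :=
    mk_eq_mk.2 (EqvGen.rel _ _ (Finset.mem_insert_self _ _))
  have hgr' : ∀ c, qmap hsub (g' c) = c := by
    intro c
    by_cases hc : g c = mk P b
    · have hgc : g' c = mk P a := by simp [hg', hc]
      have h2 : qmap hsub (mk P b) = c := by rw [← hc]; exact hgr c
      rw [hgc, qmap_mk, hab', ← h2, qmap_mk]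
    · simp only [hg', if_neg hc, hgr]
  have hg'inj : Function.Injective g' :=
    Function.LeftInverse.injective (g := qmap hsub) hgr'
  have hg'ne : ∀ c, g' c ≠ mk P b := by
    intro c
    by_cases hc : g c = mk P b
    · simp only [hg', if_pos hc]
      intro h
      exact hab (mk_eq_mk.1 h)
    · simp only [hg', if_neg hc]
      exact hc
  have hinj : Function.Injective (fun x : Qt P' ⊕ Unit =>
      Sum.elim g' (fun _ => mk P b) x) := by
    rintro (c1 | u1) (c2 | u2) h <;> simp only [Sum.elim_inl, Sum.elim_inr] at h
    · rw [hg'inj h]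
    · exact absurd h (hg'ne c1)
    · exact absurd h.symm (hg'ne c2)
    · rfl
  have := Nat.card_le_card_of_injective _ hinj
  simpa [k, Nat.card_sum, Nat.card_eq_fintype_card] using this

lemma k_insert_lb : k P ≤ k P' + 1 := by
  classical
  have hsub : P ⊆ P' := Finset.subset_insert _ _
  set F : Qt P → Qt P' ⊕ Unit := fun c =>
    if c = mk P b then Sum.inr Unit.unit else Sum.inl (qmap hsub c) with hF
  have hFinj : Function.Injective F := by
    intro c1 c2 h
    obtain ⟨x1, rfl⟩ := Quotient.exists_rep c1
    obtain ⟨x2, rfl⟩ := Quotient.exists_rep c2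
    have e := EqvGen.is_equivalence (rel P)
    by_cases h1 : (Quotient.mk (st P) x1 : Qt P) = mk P b <;>
      by_cases h2 : (Quotient.mk (st P) x2 : Qt P) = mk P b
    · rw [h1, h2]
    · simp only [hF, if_pos h1, if_neg h2] at h
      exact absurd h (by simp)
    · simp only [hF, if_neg h1, if_pos h2] at h
      exact absurd h (by simp)
    · simp only [hF, if_neg h1, if_neg h2, Sum.inl.injEq] at h
      have h' : EqvGen (rel P') x1 x2 := mk_eq_mk.1 h
      rcases eqv_insert_iff.1 h' with hh | ⟨hh1, hh2⟩ | ⟨hh1, hh2⟩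
      · exact Quotient.sound hh
      · exact absurd (mk_eq_mk.2 hh2).symm h2
      · exact absurd (mk_eq_mk.2 hh1) h1
  have := Nat.card_le_card_of_injective _ hFinj
  simpa [k, Nat.card_sum, Nat.card_eq_fintype_card] using this

end InsertEdge

lemma k_insert_mono {P P' : Finset (Sym2 X)} (h : P ⊆ P') (e : Sym2 X) :
    k (insert e P) + k P' ≤ k (insert e P') + k P := by
  induction e using Sym2.ind with
  | _ a b =>
    by_cases hr : EqvGen (rel P') a b
    · rw [k_insert_of_rel hr]
      have := k_insert_le (P := P) (s(a,b))
      omega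
    · have hrP : ¬ EqvGen (rel P) a b := fun hh => hr (eqv_mono h hh)
      have h1 := k_insert_lb (P := P') (a := a) (b := b)
      have h2 := k_insert_drop hrP
      omega

lemma k_supermodular (A B : Finset (Sym2 X)) : k A + k B ≤ k (A ∪ B) + k (A ∩ B) := by
  classical
  suffices H : ∀ n A, (A \ B).card = n → k A + k B ≤ k (A ∪ B) + k (A ∩ B) from H _ A rfl
  intro n
  induction n using Nat.strong_induction_on with
  | _ n ih =>
    intro A hn
    rcases Finset.eq_empty_or_nonempty (A \ B) with hAB | ⟨e, he⟩
    · have hsub : A ⊆ B := by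
        intro x hx
        by_contra hxB
        exact Finset.notMem_empty x (hAB ▸ Finset.mem_sdiff.2 ⟨hx, hxB⟩)
      rw [Finset.union_eq_right.2 hsub, Finset.inter_eq_left.2 hsub]
      omega
    · obtain ⟨heA, heB⟩ := Finset.mem_sdiff.1 he
      set A' := A.erase e with hA'
      have hA : A = insert e A' := (Finset.insert_erase heA).symm
      have hcard : (A' \ B).card < n := by
        rw [← hn, hA']
        rw [Finset.erase_sdiff_comm]
        exact Finset.card_erase_lt_of_mem (Finset.mem_sdiff.2 ⟨heA, heB⟩)
      have hIH := ih _ hcard A' rfl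
      have hAB' : A ∪ B = insert e (A' ∪ B) := by
        rw [hA, Finset.insert_union]
      have hab' : A ∩ B = A' ∩ B := by
        rw [hA, Finset.insert_inter_of_notMem heB]
      have hmono := k_insert_mono (Finset.subset_union_left (s₁ := A') (s₂ := B)) e
      rw [hAB', hab', hA]
      omega


section NLemmas
variable {P P' : Finset (Sym2 X)} {T U : Finset X}

lemma card_subtype_congr {α : Type*} {p q : α → Prop} (h : ∀ x, p x ↔ q x) :
    Nat.card {x // p x} = Nat.card {x // q x} :=
  Nat.card_congr (Equiv.subtypeEquivRight h)

lemma card_split {α : Type*} [Finite α] (p q : α → Prop) :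
    Nat.card {x // p x} = Nat.card {x // p x ∧ q x} + Nat.card {x // p x ∧ ¬ q x} := by
  classical
  rw [← Nat.card_sum]
  apply Nat.card_congr
  exact {
    toFun := fun x => if h : q x.1 then Sum.inl ⟨x.1, x.2, h⟩ else Sum.inr ⟨x.1, x.2, h⟩
    invFun := fun y => Sum.elim (fun z => ⟨z.1, z.2.1⟩) (fun z => ⟨z.1, z.2.1⟩) y
    left_inv := by
      intro x
      by_cases h : q x.1 <;> simp [h]
    right_inv := by
      rintro (z | z)
      · simp [z.2.2]
      · simp [z.2.2] }

/-- `N {u} P + 1 = k P`. -/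
lemma N_singleton_add_one (u : X) : N {u} P + 1 = k P := by
  classical
  have h1 : Nat.card {c : Qt P // ∀ x ∈ ({u} : Finset X), mk P x ≠ c}
      = Nat.card {c : Qt P // mk P u ≠ c} :=
    card_subtype_congr (by intro c; simp)
  have h2 : (Nat.card {c : Qt P // mk P u = c}) = 1 := by
    rw [Nat.card_eq_one_iff_unique]
    refine ⟨⟨fun c1 c2 => ?_⟩, ⟨⟨mk P u, rfl⟩⟩⟩
    obtain ⟨c1, hc1⟩ := c1
    obtain ⟨c2, hc2⟩ := c2
    simp [← hc1, ← hc2]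
  have h3 := card_split (α := Qt P) (fun _ => True) (fun c => mk P u ≠ c)
  have h4 : Nat.card {c : Qt P // True} = Nat.card (Qt P) :=
    Nat.card_congr (Equiv.subtypeUnivEquiv (by simp))
  have h5 : Nat.card {c : Qt P // True ∧ mk P u ≠ c}
      = Nat.card {c : Qt P // mk P u ≠ c} := card_subtype_congr (by simp)
  have h6 : Nat.card {c : Qt P // True ∧ ¬ mk P u ≠ c}
      = Nat.card {c : Qt P // mk P u = c} := card_subtype_congr (by intro c; simp)
  have h7 : k P = Nat.card (Qt P) := rfl
  rw [N, h1]
  omega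

lemma N_supermodular (u : X) (A B : Finset (Sym2 X)) :
    N {u} A + N {u} B ≤ N {u} (A ∪ B) + N {u} (A ∩ B) := by
  have h1 := N_singleton_add_one (P := A) u
  have h2 := N_singleton_add_one (P := B) u
  have h3 := N_singleton_add_one (P := A ∪ B) u
  have h4 := N_singleton_add_one (P := A ∩ B) u
  have h5 := k_supermodular A B
  omega

lemma N_anti (hT : T ⊆ U) : N U P ≤ N T P := by
  apply Nat.card_le_card_of_injective
    (fun c => (⟨c.1, fun x hx => c.2 x (hT hx)⟩ : {c : Qt P // ∀ x ∈ T, mk P x ≠ c}))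
  intro c1 c2 h
  simp only [Subtype.mk.injEq] at h
  exact Subtype.ext h

/-- Monotonicity of the "defect" `N U - N T` in `P`, for `U ⊆ T`. -/
lemma N_defect_mono (hP : P ⊆ P') (hUT : U ⊆ T) :
    N T P + N U P' ≤ N U P + N T P' := by
  classical
  have key : ∀ (P : Finset (Sym2 X)),
      N U P = N T P + Nat.card {c : Qt P //
        (∀ x ∈ U, mk P x ≠ c) ∧ ¬ (∀ x ∈ T, mk P x ≠ c)} := by
    intro P
    rw [N, card_split (fun c : Qt P => ∀ x ∈ U, mk P x ≠ c) (fun c => ∀ x ∈ T, mk P x ≠ c)]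
    congr 1
    rw [N]
    exact card_subtype_congr (by
      intro c
      constructor
      · rintro ⟨_, h2⟩; exact h2
      · intro h; exact ⟨fun x hx => h x (hUT hx), h⟩)
  have hD : Nat.card {c : Qt P' // (∀ x ∈ U, mk P' x ≠ c) ∧ ¬ (∀ x ∈ T, mk P' x ≠ c)}
      ≤ Nat.card {c : Qt P // (∀ x ∈ U, mk P x ≠ c) ∧ ¬ (∀ x ∈ T, mk P x ≠ c)} := by
    have wit : ∀ c : {c : Qt P' // (∀ x ∈ U, mk P' x ≠ c) ∧ ¬ (∀ x ∈ T, mk P' x ≠ c)},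
        ∃ x, x ∈ T ∧ mk P' x = c.1 := by
      rintro ⟨c, hU', hT'⟩
      push_neg at hT'
      obtain ⟨x, hx, hxc⟩ := hT'
      exact ⟨x, hx, hxc⟩
    set w : _ → X := fun c => (wit c).choose with hw
    refine Nat.card_le_card_of_injective
      (fun c => ⟨mk P (w c), ?_, ?_⟩) ?_
    · intro x hx hxe
      obtain ⟨hwT, hwc⟩ := (wit c).choose_spec
      have : mk P' x = c.1 := by
        rw [← hwc]
        exact Quotient.sound (eqv_mono hP (Quotient.exact hxe))
      exact c.2.1 x hx this
    · intro hall
      obtain ⟨hwT, hwc⟩ := (wit c).choose_spec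
      exact hall (w c) hwT rfl
    · rintro c1 c2 h
      simp only [Subtype.mk.injEq] at h
      obtain ⟨hw1T, hw1c⟩ := (wit c1).choose_spec
      obtain ⟨hw2T, hw2c⟩ := (wit c2).choose_spec
      apply Subtype.ext
      rw [← hw1c, ← hw2c]
      exact Quotient.sound (eqv_mono hP (Quotient.exact h))
  have k1 := key P
  have k2 := key P'
  omega

/-- Union bound: `N T₁ + N T₂ ≤ N (T₁ ∪ T₂) + N U` when `U ⊆ T₁ ∩ T₂`. -/
lemma N_union_bound {T₁ T₂ : Finset X} (h1 : U ⊆ T₁) (h2 : U ⊆ T₂) :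
    N T₁ P + N T₂ P ≤ N (T₁ ∪ T₂) P + N U P := by
  classical
  set p : Qt P → Prop := fun c => ∀ x ∈ T₁, mk P x ≠ c with hp
  set q : Qt P → Prop := fun c => ∀ x ∈ T₂, mk P x ≠ c with hq
  have e1 : N T₁ P = Nat.card {c // p c ∧ q c} + Nat.card {c // p c ∧ ¬ q c} :=
    card_split p q
  have e2 : Nat.card {c // p c ∨ q c}
      = Nat.card {c // q c} + Nat.card {c // p c ∧ ¬ q c} := by
    rw [card_split (fun c => p c ∨ q c) q]
    congr 1
    · exact card_subtype_congr (by tauto)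
    · exact card_subtype_congr (by tauto)
  have e3 : N (T₁ ∪ T₂) P = Nat.card {c // p c ∧ q c} := by
    rw [N]
    exact card_subtype_congr (by
      intro c
      simp only [Finset.mem_union, hp, hq]
      constructor
      · intro h; exact ⟨fun x hx => h x (Or.inl hx), fun x hx => h x (Or.inr hx)⟩
      · rintro ⟨ha, hb⟩ x (hx | hx)
        · exact ha x hx
        · exact hb x hx)
  have e4 : Nat.card {c // p c ∨ q c} ≤ N U P := by
    rw [N]
    apply Nat.card_le_card_of_injective
      (fun c => (⟨c.1, ?_⟩ : {c : Qt P // ∀ x ∈ U, mk P x ≠ c}))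
    · intro c1 c2 h
      simp only [Subtype.mk.injEq] at h
      exact Subtype.ext h
    · rcases c.2 with hc | hc
      · exact fun x hx => hc x (h1 hx)
      · exact fun x hx => hc x (h2 hx)
  have e5 : N T₂ P = Nat.card {c // q c} := rfl
  omega

end NLemmas


section Counting

/-- The proposition that `σ` takes equal values on the two ends of `e`. -/
def eSame {q : ℕ} (σ : X → Fin q) : Sym2 X → Prop :=
  Sym2.lift ⟨fun x y => σ x = σ y, fun x y => propext eq_comm⟩

lemma eSame_mk {q : ℕ} {σ : X → Fin q} {x y : X} : eSame σ s(x,y) ↔ σ x = σ y := Iff.rfl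

lemma edgeDelta_one {q : ℕ} {σ : X → Fin q} {e : Sym2 X} (h : eSame σ e) :
    edgeDelta σ e = 1 := by
  induction e using Sym2.ind with
  | _ x y =>
    simp only [edgeDelta, Sym2.lift_mk]
    rw [if_pos (eSame_mk.1 h)]

lemma edgeDelta_zero {q : ℕ} {σ : X → Fin q} {e : Sym2 X} (h : ¬ eSame σ e) :
    edgeDelta σ e = 0 := by
  induction e using Sym2.ind with
  | _ x y =>
    simp only [edgeDelta, Sym2.lift_mk]
    rw [if_neg (fun hc => h (eSame_mk.2 hc))]

lemma resp_of_eqvGen {q : ℕ} {σ : X → Fin q} {P : Finset (Sym2 X)}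
    (h : ∀ e ∈ P, eSame σ e) {x y : X} (hxy : EqvGen (rel P) x y) : σ x = σ y := by
  induction hxy with
  | rel u v huv => exact h _ huv
  | refl u => rfl
  | symm u v _ ih => exact ih.symm
  | trans u v w _ _ ih1 ih2 => exact ih1.trans ih2

lemma count_ident (q : ℕ) [NeZero q] (T : Finset X) (P : Finset (Sym2 X)) :
    ∑ τ : X → Fin q, (if ∀ x ∈ T, τ x = 0 then (1:ℝ) else 0) * ∏ e ∈ P, edgeDelta τ e
      = (q : ℝ) ^ N T P := by
  classical
  have step1 : ∀ τ : X → Fin q,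
      (if ∀ x ∈ T, τ x = 0 then (1:ℝ) else 0) * ∏ e ∈ P, edgeDelta τ e
        = if (∀ x ∈ T, τ x = 0) ∧ (∀ e ∈ P, eSame τ e) then 1 else 0 := by
    intro τ
    by_cases hP : ∀ e ∈ P, eSame τ e
    · have hprod : ∏ e ∈ P, edgeDelta τ e = 1 :=
        Finset.prod_eq_one (fun e he => edgeDelta_one (hP e he))
      rw [hprod, mul_one]
      by_cases hT : ∀ x ∈ T, τ x = 0
      · rw [if_pos hT, if_pos ⟨hT, hP⟩]
      · rw [if_neg hT, if_neg (fun hc => hT hc.1)]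
    · push_neg at hP
      obtain ⟨e, he, hne⟩ := hP
      have hprod : ∏ e ∈ P, edgeDelta τ e = 0 :=
        Finset.prod_eq_zero he (edgeDelta_zero hne)
      rw [hprod, mul_zero, if_neg (fun hc => hne (hc.2 e he))]
  rw [Finset.sum_congr rfl (fun τ _ => step1 τ), Finset.sum_boole]
  have E1 : {τ : X → Fin q // (∀ x ∈ T, τ x = 0) ∧ (∀ e ∈ P, eSame τ e)}
      ≃ {g : Qt P → Fin q // ∀ x ∈ T, g (mk P x) = 0} := by
    refine {
      toFun := fun τ => ⟨Quotient.lift τ.1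
        (fun x y (hxy : EqvGen (rel P) x y) => resp_of_eqvGen τ.2.2 hxy),
        fun x hx => τ.2.1 x hx⟩
      invFun := fun g => ⟨fun x => g.1 (mk P x), fun x hx => g.2 x hx, ?_⟩
      left_inv := fun τ => rfl
      right_inv := fun g => ?_ }
    · intro e he
      induction e using Sym2.ind with
      | _ x y =>
        show g.1 (mk P x) = g.1 (mk P y)
        exact congrArg g.1 (Quotient.sound (EqvGen.rel _ _ he))
    · apply Subtype.ext
      funext c
      obtain ⟨x, rfl⟩ := Quotient.exists_rep c
      rfl
  have E2 : {g : Qt P → Fin q // ∀ x ∈ T, g (mk P x) = 0}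
      ≃ ({c : Qt P // ∀ x ∈ T, mk P x ≠ c} → Fin q) := by
    refine {
      toFun := fun g c => g.1 c.1
      invFun := fun G => ⟨fun c => if h : ∀ x ∈ T, mk P x ≠ c then G ⟨c, h⟩ else 0, ?_⟩
      left_inv := fun g => ?_
      right_inv := fun G => ?_ }
    · intro x hx
      dsimp only
      rw [dif_neg]
      push_neg
      exact ⟨x, hx, rfl⟩
    · apply Subtype.ext
      funext c
      dsimp only
      by_cases h : ∀ x' ∈ T, mk P x' ≠ c
      · rw [dif_pos h]
      · rw [dif_neg h]
        push_neg at h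
        obtain ⟨x', hx', hxc⟩ := h
        rw [← hxc]
        exact (g.2 x' hx').symm
    · funext c
      dsimp only
      rw [dif_pos c.2]
  have card_eq : (Finset.univ.filter
      (fun τ : X → Fin q => (∀ x ∈ T, τ x = 0) ∧ (∀ e ∈ P, eSame τ e))).card
      = q ^ N T P := by
    rw [← Fintype.card_subtype, Fintype.card_congr (E1.trans E2), Fintype.card_fun,
      Fintype.card_fin]
    congr 1
    rw [N, Nat.card_eq_fintype_card]
  rw [card_eq]
  push_cast
  rfl

end Counting

end SchAux
namespace SchApp

/-- ghost edge -/
def ge (v : V) : Sym2 (Option V) := s(none, some v)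

def cw (J : Sym2 V → ℝ) (h : V → ℝ) : Sym2 (Option V) → ℝ :=
  Sym2.lift ⟨fun x y =>
    match x, y with
    | some a, some b => Real.exp (J s(a,b)) - 1
    | some a, none => Real.exp (h a) - 1
    | none, some b => Real.exp (h b) - 1
    | none, none => 0,
    fun x y => by
      cases x <;> cases y <;> simp [Sym2.eq_swap]⟩

def barE (E : Finset (Sym2 V)) : Finset (Sym2 (Option V)) :=
  E.image (Sym2.map some) ∪ univ.image ge

def barT (T : Finset V) : Finset (Option V) := insert none (T.image some)

def ext {q : ℕ} (a : Fin q) (σ : V → Fin q) : Option V → Fin q :=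
  fun o => o.elim a σ

lemma cw_map (J : Sym2 V → ℝ) (h : V → ℝ) (e : Sym2 V) :
    cw J h (Sym2.map some e) = Real.exp (J e) - 1 := by
  induction e using Sym2.ind with
  | _ a b => rfl

lemma cw_ge (J : Sym2 V → ℝ) (h : V → ℝ) (v : V) :
    cw J h (ge v) = Real.exp (h v) - 1 := rfl

lemma edgeDelta_ext_map {q : ℕ} (a : Fin q) (σ : V → Fin q) (e : Sym2 V) :
    edgeDelta (ext a σ) (Sym2.map some e) = edgeDelta σ e := by
  induction e using Sym2.ind with
  | _ x y => rfl

lemma edgeDelta_ext_ge {q : ℕ} [NeZero q] (σ : V → Fin q) (v : V) :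
    edgeDelta (ext 0 σ) (ge v) = if σ v = 0 then 1 else 0 := by
  show (if (0 : Fin q) = σ v then (1:ℝ) else 0) = _
  simp [eq_comm]

lemma disj (E : Finset (Sym2 V)) :
    Disjoint (E.image (Sym2.map some)) (univ.image (ge (V := V))) := by
  rw [Finset.disjoint_left]
  rintro e he hg
  obtain ⟨e', he', rfl⟩ := Finset.mem_image.1 he
  obtain ⟨v, _, hv⟩ := Finset.mem_image.1 hg
  induction e' using Sym2.ind with
  | _ a b =>
    rw [Sym2.map_pair_eq] at hv
    rw [ge, Sym2.eq_iff] at hv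
    rcases hv with ⟨h1, _⟩ | ⟨_, h2⟩ <;> simp_all

lemma map_some_injective : Function.Injective (Sym2.map (some : V → Option V)) :=
  Sym2.map.injective (Option.some_injective V)

lemma ge_injective : Function.Injective (ge (V := V)) := by
  intro v w h
  rw [ge, ge, Sym2.eq_iff] at h
  rcases h with ⟨_, h⟩ | ⟨h, _⟩ <;> simp_all

/-- Pointwise weight factorization over the ghost graph. -/
lemma weight_factor (q : ℕ) [NeZero q] (E : Finset (Sym2 V)) (J : Sym2 V → ℝ)
    (h : V → ℝ) (σ : V → Fin q) :
    pottsWeight q E J h σ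
      = ∏ e ∈ barE E, (1 + cw J h e * edgeDelta (ext 0 σ) e) := by
  have delta01 : ∀ (e : Sym2 V), edgeDelta σ e = 0 ∨ edgeDelta σ e = 1 := by
    intro e
    induction e using Sym2.ind with
    | _ x y =>
      show (if σ x = σ y then (1:ℝ) else 0) = 0 ∨ (if σ x = σ y then (1:ℝ) else 0) = 1
      split_ifs <;> simp
  have expmul : ∀ (c d : ℝ), d = 0 ∨ d = 1 → Real.exp (c * d) = 1 + (Real.exp c - 1) * d := by
    rintro c d (rfl | rfl) <;> simp
  rw [pottsWeight, Real.exp_add, Real.exp_sum, Real.exp_sum, barE,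
    Finset.prod_union (disj E), Finset.prod_image (fun a _ b _ hab => map_some_injective hab),
    Finset.prod_image (fun a _ b _ hab => ge_injective hab)]
  congr 1
  · refine Finset.prod_congr rfl fun e he => ?_
    rw [expmul _ _ (delta01 e), cw_map, edgeDelta_ext_map]
  · refine Finset.prod_congr rfl fun v _ => ?_
    rw [expmul _ _ (by split_ifs <;> simp), cw_ge, edgeDelta_ext_ge]

end SchApp

namespace SchApp
open SchAux

variable {V : Type*} [Fintype V] [DecidableEq V]

lemma sum_reindex (q : ℕ) [NeZero q] (E : Finset (Sym2 V)) (J : Sym2 V → ℝ)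
    (h : V → ℝ) (T : Finset V) :
    ∑ σ : V → Fin q, (if ∀ v ∈ T, σ v = 0 then pottsWeight q E J h σ else 0)
      = ∑ τ : Option V → Fin q,
          (if ∀ x ∈ barT T, τ x = 0 then (1:ℝ) else 0)
            * ∏ e ∈ barE E, (1 + cw J h e * edgeDelta τ e) := by
  classical
  set e : Fin q × (V → Fin q) ≃ (Option V → Fin q) :=
    (Equiv.piOptionEquivProd (β := fun _ : Option V => Fin q)).symm with he
  have hep : ∀ (a : Fin q) (σ : V → Fin q), e (a, σ) = ext a σ := by
    intro a σ
    funext o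
    cases o <;> rfl
  symm
  rw [← Equiv.sum_comp e (fun τ => (if ∀ x ∈ barT T, τ x = 0 then (1:ℝ) else 0)
    * ∏ e ∈ barE E, (1 + cw J h e * edgeDelta τ e)), Fintype.sum_prod_type]
  rw [Finset.sum_eq_single (0 : Fin q)]
  · refine Finset.sum_congr rfl fun σ _ => ?_
    rw [hep 0 σ]
    have hiff : (∀ x ∈ barT T, ext 0 σ x = 0) ↔ (∀ v ∈ T, σ v = 0) := by
      simp [barT, ext]
    rw [if_congr hiff rfl rfl, boole_mul, weight_factor]
  · intro a _ ha
    apply Finset.sum_eq_zero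
    intro σ _
    rw [hep a σ]
    have hno : ¬ (∀ x ∈ barT T, ext a σ x = 0) := by
      intro hc
      exact ha (hc none (by simp [barT]))
    rw [if_neg hno, zero_mul]
  · intro h0
    exact absurd (Finset.mem_univ _) h0

lemma expansion (q : ℕ) [NeZero q] (E : Finset (Sym2 V)) (J : Sym2 V → ℝ)
    (h : V → ℝ) (T : Finset V) :
    ∑ σ : V → Fin q, (if ∀ v ∈ T, σ v = 0 then pottsWeight q E J h σ else 0)
      = ∑ P ∈ (barE E).powerset,
          (∏ e ∈ P, cw J h e) * (q:ℝ) ^ SchAux.N (barT T) P := by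
  classical
  rw [sum_reindex]
  have exp1 : ∀ τ : Option V → Fin q,
      ∏ e ∈ barE E, (1 + cw J h e * edgeDelta τ e)
        = ∑ P ∈ (barE E).powerset,
            (∏ e ∈ P, cw J h e) * ∏ e ∈ P, edgeDelta τ e := by
    intro τ
    calc ∏ e ∈ barE E, (1 + cw J h e * edgeDelta τ e)
        = ∏ e ∈ barE E, (cw J h e * edgeDelta τ e + 1) :=
          Finset.prod_congr rfl fun e _ => add_comm _ _
      _ = ∑ P ∈ (barE E).powerset,
            (∏ e ∈ P, cw J h e * edgeDelta τ e) * ∏ e ∈ barE E \ P, (1:ℝ) :=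
          Finset.prod_add _ _ _
      _ = ∑ P ∈ (barE E).powerset,
            (∏ e ∈ P, cw J h e) * ∏ e ∈ P, edgeDelta τ e := by
          refine Finset.sum_congr rfl fun P hP => ?_
          rw [Finset.prod_const_one, mul_one, Finset.prod_mul_distrib]
  rw [Finset.sum_congr rfl fun τ (_ : τ ∈ Finset.univ) => by rw [exp1 τ, Finset.mul_sum]]
  rw [Finset.sum_comm]
  refine Finset.sum_congr rfl fun P hP => ?_
  rw [← count_ident (X := Option V) q (barT T) P, Finset.mul_sum]
  refine Finset.sum_congr rfl fun τ _ => ?_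
  ring

lemma cw_nonneg {E : Finset (Sym2 V)} {J : Sym2 V → ℝ} {h : V → ℝ}
    (hJ : ∀ e ∈ E, 0 ≤ J e) (hh : ∀ v : V, 0 ≤ h v) :
    ∀ e ∈ barE E, 0 ≤ cw J h e := by
  intro e he
  rw [barE, Finset.mem_union] at he
  rcases he with he | he
  · obtain ⟨e', he', rfl⟩ := Finset.mem_image.1 he
    rw [cw_map]
    linarith [Real.add_one_le_exp (J e'), hJ e' he']
  · obtain ⟨v, _, rfl⟩ := Finset.mem_image.1 he
    rw [cw_ge]
    linarith [Real.add_one_le_exp (h v), hh v]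

lemma barT_empty : barT (∅ : Finset V) = {none} := by simp [barT]

lemma barT_union (R S : Finset V) : barT R ∪ barT S = barT (R ∪ S) := by
  simp [barT, Finset.image_union, Finset.insert_union, Finset.union_insert]

lemma none_subset_barT (T : Finset V) : ({none} : Finset (Option V)) ⊆ barT T := by
  intro x hx
  simp only [Finset.mem_singleton] at hx
  simp [hx, barT]

end SchApp

/-- Schonmann's positive correlation inequality:
`π(σ = 0 on R ∪ S) ≥ π(σ = 0 on R) · π(σ = 0 on S)`. -/
theorem schonmann_positive
    (q : ℕ) [NeZero q] (hq : 2 ≤ q)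
    (E : Finset (Sym2 V)) (hE : ∀ e ∈ E, ¬ e.IsDiag)
    (J : Sym2 V → ℝ) (hJ : ∀ e ∈ E, 0 ≤ J e)
    (h : V → ℝ) (hh : ∀ v : V, 0 ≤ h v)
    (R S : Finset V) :
    (∑ σ : V → Fin q, if ∀ v ∈ R, σ v = 0 then pottsPMF q E J h σ else 0) *
      (∑ σ : V → Fin q, if ∀ v ∈ S, σ v = 0 then pottsPMF q E J h σ else 0) ≤
    ∑ σ : V → Fin q, if ∀ v ∈ R ∪ S, σ v = 0 then pottsPMF q E J h σ else 0 := by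
  classical
  have hq1 : (1:ℝ) ≤ (q:ℝ) := by exact_mod_cast Nat.one_le_of_lt hq
  set A : Finset V → ℝ := fun T =>
    ∑ σ : V → Fin q, (if ∀ v ∈ T, σ v = 0 then pottsWeight q E J h σ else 0) with hA
  have hZA : pottsZ q E J h = A ∅ := by simp [pottsZ, hA]
  have hZpos : 0 < pottsZ q E J h := by
    rw [pottsZ]
    have hne : Nonempty (V → Fin q) := ⟨fun _ => 0⟩
    exact Finset.sum_pos (fun σ _ => Real.exp_pos _) Finset.univ_nonempty
  have goal_red : ∀ T : Finset V,
      (∑ σ : V → Fin q, if ∀ v ∈ T, σ v = 0 then pottsPMF q E J h σ else 0)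
        = A T / pottsZ q E J h := by
    intro T
    rw [hA]
    rw [Finset.sum_div]
    refine Finset.sum_congr rfl fun σ _ => ?_
    rw [pottsPMF]
    split_ifs <;> simp
  rw [goal_red R, goal_red S, goal_red (R ∪ S)]
  rw [div_mul_div_comm, div_le_div_iff₀ (by positivity) hZpos]
  -- key inequality via FKG on subsets of the ghost edge set
  set U : Finset (Option V) := {none} with hU
  set μ : Finset (Sym2 (Option V)) → ℝ := fun P =>
    (if P ∈ (SchApp.barE E).powerset then ∏ e ∈ P, SchApp.cw J h e else 0)
      * (q:ℝ) ^ SchAux.N U P with hμ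
  set f : Finset (Sym2 (Option V)) → ℝ := fun P =>
    (q:ℝ) ^ SchAux.N (SchApp.barT R) P / (q:ℝ) ^ SchAux.N U P with hf
  set g : Finset (Sym2 (Option V)) → ℝ := fun P =>
    (q:ℝ) ^ SchAux.N (SchApp.barT S) P / (q:ℝ) ^ SchAux.N U P with hg
  have hμ0 : 0 ≤ μ := by
    intro P
    rw [hμ]
    apply mul_nonneg _ (by positivity)
    split_ifs with hP
    · exact Finset.prod_nonneg fun e he =>
        SchApp.cw_nonneg hJ hh e (Finset.mem_powerset.1 hP he)
    · exact le_refl 0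
  have hf0 : 0 ≤ f := fun P => by rw [hf]; positivity
  have hg0 : 0 ≤ g := fun P => by rw [hg]; positivity
  have hmonof : ∀ (T : Finset V), Monotone (fun P : Finset (Sym2 (Option V)) =>
      (q:ℝ) ^ SchAux.N (SchApp.barT T) P / (q:ℝ) ^ SchAux.N U P) := by
    intro T P P' hPP'
    dsimp only
    rw [div_le_div_iff₀ (by positivity) (by positivity), ← pow_add, ← pow_add]
    apply pow_le_pow_right₀ hq1
    have := SchAux.N_defect_mono (P := P) (P' := P') hPP'
      (show U ⊆ SchApp.barT T by rw [hU]; exact SchApp.none_subset_barT T)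
    omega
  have hμcond : ∀ P P' : Finset (Sym2 (Option V)), μ P * μ P' ≤ μ (P ⊓ P') * μ (P ⊔ P') := by
    intro P P'
    rw [Finset.inf_eq_inter, Finset.sup_eq_union]
    by_cases h1 : P ∈ (SchApp.barE E).powerset ∧ P' ∈ (SchApp.barE E).powerset
    · obtain ⟨hp1, hp2⟩ := h1
      have hs1 := Finset.mem_powerset.1 hp1
      have hs2 := Finset.mem_powerset.1 hp2
      have hi : P ∩ P' ∈ (SchApp.barE E).powerset :=
        Finset.mem_powerset.2 ((Finset.inter_subset_left).trans hs1)
      have hu : P ∪ P' ∈ (SchApp.barE E).powerset :=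
        Finset.mem_powerset.2 (Finset.union_subset hs1 hs2)
      rw [hμ]
      dsimp only
      rw [if_pos hp1, if_pos hp2, if_pos hi, if_pos hu]
      have hprod : ((∏ e ∈ P ∩ P', SchApp.cw J h e) * ∏ e ∈ P ∪ P', SchApp.cw J h e)
          = (∏ e ∈ P, SchApp.cw J h e) * ∏ e ∈ P', SchApp.cw J h e := by
        rw [mul_comm]
        exact Finset.prod_union_inter
      have hprodnn : 0 ≤ (∏ e ∈ P ∩ P', SchApp.cw J h e) * ∏ e ∈ P ∪ P', SchApp.cw J h e := by
        apply mul_nonneg <;>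
          exact Finset.prod_nonneg fun e he => SchApp.cw_nonneg hJ hh e
            (Finset.mem_powerset.1 (by first | exact hi | exact hu) he)
      have hpow : (q:ℝ) ^ SchAux.N U P * (q:ℝ) ^ SchAux.N U P'
          ≤ (q:ℝ) ^ SchAux.N U (P ∩ P') * (q:ℝ) ^ SchAux.N U (P ∪ P') := by
        rw [← pow_add, ← pow_add]
        apply pow_le_pow_right₀ hq1
        have := SchAux.N_supermodular (none : Option V) P P'
        rw [hU]
        omega
      calc (∏ e ∈ P, SchApp.cw J h e) * (q:ℝ) ^ SchAux.N U P
            * ((∏ e ∈ P', SchApp.cw J h e) * (q:ℝ) ^ SchAux.N U P')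
          = ((∏ e ∈ P ∩ P', SchApp.cw J h e) * ∏ e ∈ P ∪ P', SchApp.cw J h e)
              * ((q:ℝ) ^ SchAux.N U P * (q:ℝ) ^ SchAux.N U P') := by
            rw [hprod]; ring
        _ ≤ ((∏ e ∈ P ∩ P', SchApp.cw J h e) * ∏ e ∈ P ∪ P', SchApp.cw J h e)
              * ((q:ℝ) ^ SchAux.N U (P ∩ P') * (q:ℝ) ^ SchAux.N U (P ∪ P')) :=
            mul_le_mul_of_nonneg_left hpow hprodnn
        _ = (∏ e ∈ P ∩ P', SchApp.cw J h e) * (q:ℝ) ^ SchAux.N U (P ∩ P')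
              * ((∏ e ∈ P ∪ P', SchApp.cw J h e) * (q:ℝ) ^ SchAux.N U (P ∪ P')) := by ring
    · have hzero : μ P = 0 ∨ μ P' = 0 := by
        rw [not_and_or] at h1
        rcases h1 with h1 | h1
        · left; rw [hμ]; dsimp only; rw [if_neg h1, zero_mul]
        · right; rw [hμ]; dsimp only; rw [if_neg h1, zero_mul]
      rcases hzero with hz | hz <;>
        rw [hz] <;> simpa using mul_nonneg (hμ0 _) (hμ0 _)
  have sum_muf : ∀ T : Finset V,
      ∑ P : Finset (Sym2 (Option V)), μ P
          * ((q:ℝ) ^ SchAux.N (SchApp.barT T) P / (q:ℝ) ^ SchAux.N U P) = A T := by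
    intro T
    rw [hA]
    dsimp only
    rw [SchApp.expansion q E J h T]
    rw [← Finset.univ_inter ((SchApp.barE E).powerset), ← Finset.sum_ite_mem]
    refine Finset.sum_congr rfl fun P _ => ?_
    rw [hμ]
    dsimp only
    split_ifs with hP
    · have hne : (q:ℝ) ^ SchAux.N U P ≠ 0 := by positivity
      field_simp
    · rw [zero_mul, zero_mul]
  have sum_mu : ∑ P : Finset (Sym2 (Option V)), μ P = A ∅ := by
    rw [hA]
    dsimp only
    rw [SchApp.expansion q E J h ∅, SchApp.barT_empty]
    rw [← Finset.univ_inter ((SchApp.barE E).powerset), ← Finset.sum_ite_mem]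
    refine Finset.sum_congr rfl fun P _ => ?_
    rw [hμ, hU]
    dsimp only
    split_ifs with hP
    · rfl
    · rw [zero_mul]
  have sum_mufg : ∑ P : Finset (Sym2 (Option V)), μ P * (f P * g P) ≤ A (R ∪ S) := by
    rw [hA]
    dsimp only
    rw [SchApp.expansion q E J h (R ∪ S)]
    rw [← Finset.univ_inter ((SchApp.barE E).powerset), ← Finset.sum_ite_mem]
    apply Finset.sum_le_sum
    intro P _
    rw [hμ, hf, hg]
    dsimp only
    split_ifs with hP
    · have hcwnn : 0 ≤ ∏ e ∈ P, SchApp.cw J h e :=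
        Finset.prod_nonneg fun e he =>
          SchApp.cw_nonneg hJ hh e (Finset.mem_powerset.1 hP he)
      have hkey : (q:ℝ) ^ SchAux.N U P
            * ((q:ℝ) ^ SchAux.N (SchApp.barT R) P / (q:ℝ) ^ SchAux.N U P
              * ((q:ℝ) ^ SchAux.N (SchApp.barT S) P / (q:ℝ) ^ SchAux.N U P))
          ≤ (q:ℝ) ^ SchAux.N (SchApp.barT (R ∪ S)) P := by
        have hu : (0:ℝ) < (q:ℝ) ^ SchAux.N U P := by positivity
        have hNN : SchAux.N (SchApp.barT R) P + SchAux.N (SchApp.barT S) P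
            ≤ SchAux.N (SchApp.barT (R ∪ S)) P + SchAux.N U P := by
          have h1 := SchAux.N_union_bound (P := P)
            (SchApp.none_subset_barT R) (SchApp.none_subset_barT S)
          rw [SchApp.barT_union] at h1
          rw [hU]
          exact h1
        have hab : (q:ℝ) ^ SchAux.N (SchApp.barT R) P * (q:ℝ) ^ SchAux.N (SchApp.barT S) P
            ≤ (q:ℝ) ^ SchAux.N (SchApp.barT (R ∪ S)) P * (q:ℝ) ^ SchAux.N U P := by
          rw [← pow_add, ← pow_add]
          exact pow_le_pow_right₀ hq1 hNN
        have heq : (q:ℝ) ^ SchAux.N U P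
            * ((q:ℝ) ^ SchAux.N (SchApp.barT R) P / (q:ℝ) ^ SchAux.N U P
              * ((q:ℝ) ^ SchAux.N (SchApp.barT S) P / (q:ℝ) ^ SchAux.N U P))
            = (q:ℝ) ^ SchAux.N (SchApp.barT R) P * (q:ℝ) ^ SchAux.N (SchApp.barT S) P
              / (q:ℝ) ^ SchAux.N U P := by
          field_simp
        rw [heq, div_le_iff₀ hu]
        exact hab
      calc (∏ e ∈ P, SchApp.cw J h e) * (q:ℝ) ^ SchAux.N U P
            * ((q:ℝ) ^ SchAux.N (SchApp.barT R) P / (q:ℝ) ^ SchAux.N U P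
              * ((q:ℝ) ^ SchAux.N (SchApp.barT S) P / (q:ℝ) ^ SchAux.N U P))
          = (∏ e ∈ P, SchApp.cw J h e) * ((q:ℝ) ^ SchAux.N U P
            * ((q:ℝ) ^ SchAux.N (SchApp.barT R) P / (q:ℝ) ^ SchAux.N U P
              * ((q:ℝ) ^ SchAux.N (SchApp.barT S) P / (q:ℝ) ^ SchAux.N U P))) := by ring
        _ ≤ (∏ e ∈ P, SchApp.cw J h e) * (q:ℝ) ^ SchAux.N (SchApp.barT (R ∪ S)) P :=
            mul_le_mul_of_nonneg_left hkey hcwnn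
    · rw [zero_mul, zero_mul]
  have fkgres := fkg f g μ hμ0 hf0 hg0 (hmonof R) (hmonof S) hμcond
  rw [hf, hg] at fkgres
  rw [sum_muf R, sum_muf S, sum_mu] at fkgres
  have key : A R * A S ≤ A (R ∪ S) * A ∅ := by
    calc A R * A S ≤ A ∅ * ∑ P : Finset (Sym2 (Option V)), μ P * (f P * g P) := fkgres
      _ ≤ A ∅ * A (R ∪ S) := by
          apply mul_le_mul_of_nonneg_left sum_mufg
          rw [← hZA]; exact hZpos.le
      _ = A (R ∪ S) * A ∅ := mul_comm _ _
  rw [hZA]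
  nlinarith [key, hZpos, hZA]
end
end
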